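/- arXiv:1503.04826 — 3 statements merged into one kernel-verified Lean document; each statement's English description precedes it below -/
import Mathlib

section
/- Fix d ≥ 3 and exponents 2−d ≤ p < 0 < q ≤ 2, and let ψ_ε be the heat kernel. Define the regularized repulsive energy E^r_ε(μ) = ∬_{ℝ^d×ℝ^d} (ψ_ε * K^r * ψ_ε)(x−y) dμ(x) dμ(y), where K^r(x) = −|x|^p/p. Then for all 0 < ε₂ ≤ ε₁ and all μ ∈ P_2(ℝ^d), E^r_{ε₁}(μ) ≤ E^r_{ε₂}(μ). -/
open MeasureTheory Filter
open scoped ENNReal Topology NNReal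

noncomputable section

/-- Power-law interaction kernel `K(x) = |x|^q/q - |x|^p/p` (real-valued). -/
noncomputable def Kfun (d : ℕ) (p q : ℝ) (x : EuclideanSpace ℝ (Fin d)) : ℝ :=
  ‖x‖ ^ q / q - ‖x‖ ^ p / p

/-- Power-law interaction kernel, valued in `[0,∞]` (note `K 0 = ∞` when `p < 0 < q`). -/
noncomputable def KE (d : ℕ) (p q : ℝ) (x : EuclideanSpace ℝ (Fin d)) : ℝ≥0∞ :=
  (‖x‖₊ : ℝ≥0∞) ^ q / ENNReal.ofReal q + (‖x‖₊ : ℝ≥0∞) ^ p / ENNReal.ofReal (-p)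

/-- Repulsive part `K^r(x) = -|x|^p/p` of the power-law kernel, valued in `[0,∞]`. -/
noncomputable def KrE (d : ℕ) (p : ℝ) (x : EuclideanSpace ℝ (Fin d)) : ℝ≥0∞ :=
  (‖x‖₊ : ℝ≥0∞) ^ p / ENNReal.ofReal (-p)

/-- Rescaled mollifier `φ_ε(x) = ε^{-d} φ(x/ε)`. -/
noncomputable def scaled (d : ℕ) (φ : EuclideanSpace ℝ (Fin d) → ℝ) (ε : ℝ)
    (x : EuclideanSpace ℝ (Fin d)) : ℝ :=
  (ε ^ d)⁻¹ * φ (ε⁻¹ • x)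

/-- Mollifier hypotheses (M1)–(M3). -/
def IsMollifier (d : ℕ) (φ : EuclideanSpace ℝ (Fin d) → ℝ) : Prop :=
  ContDiff ℝ (⊤ : ℕ∞) φ ∧ (∀ x y, ‖x‖ = ‖y‖ → φ x = φ y) ∧ (∀ x, 0 ≤ φ x) ∧
    (∫ x, φ x) = 1 ∧
    ∃ C : ℝ, 0 < C ∧ ∃ l : ℝ, max (2 * (d : ℝ) + 1) 4 ≤ l ∧
      ∀ x : EuclideanSpace ℝ (Fin d), x ≠ 0 → φ x ≤ C * ‖x‖ ^ (-l)

/-- Regularized kernel `K_ε = φ_ε * K * φ_ε` (real-valued). -/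
noncomputable def Kreg (d : ℕ) (p q : ℝ) (φ : EuclideanSpace ℝ (Fin d) → ℝ) (ε : ℝ)
    (x : EuclideanSpace ℝ (Fin d)) : ℝ :=
  ∫ y, ∫ z, scaled d φ ε y * Kfun d p q (x - y - z) * scaled d φ ε z

/-- Double mollification `g * K * g` of a `[0,∞]`-valued kernel by a nonnegative function. -/
noncomputable def convE (d : ℕ) (g : EuclideanSpace ℝ (Fin d) → ℝ)
    (K : EuclideanSpace ℝ (Fin d) → ℝ≥0∞) (x : EuclideanSpace ℝ (Fin d)) : ℝ≥0∞ :=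
  ∫⁻ y, ∫⁻ z, ENNReal.ofReal (g y) * K (x - y - z) * ENNReal.ofReal (g z)

/-- Interaction energy `E(μ) = ∬ K(x-y) dμ(x) dμ(y)` for a `[0,∞]`-valued kernel. -/
noncomputable def energyE (d : ℕ) (K : EuclideanSpace ℝ (Fin d) → ℝ≥0∞)
    (μ : Measure (EuclideanSpace ℝ (Fin d))) : ℝ≥0∞ :=
  ∫⁻ x, ∫⁻ y, K (x - y) ∂μ ∂μ

/-- Regularized interaction energy `E_ε(μ) = ∬ K_ε(x-y) dμ(x) dμ(y)`. -/
noncomputable def energyReg (d : ℕ) (p q : ℝ) (φ : EuclideanSpace ℝ (Fin d) → ℝ) (ε : ℝ)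
    (μ : Measure (EuclideanSpace ℝ (Fin d))) : ℝ≥0∞ :=
  energyE d (fun x => ENNReal.ofReal (Kreg d p q φ ε x)) μ

/-- Real-valued interaction energy. -/
noncomputable def energyReal (d : ℕ) (p q : ℝ) (μ : Measure (EuclideanSpace ℝ (Fin d))) : ℝ :=
  ∫ x, ∫ y, Kfun d p q (x - y) ∂μ ∂μ

/-- Borel probability measure with finite second moment. -/
def IsP2 (d : ℕ) (μ : Measure (EuclideanSpace ℝ (Fin d))) : Prop :=
  IsProbabilityMeasure μ ∧ (∫⁻ x, (‖x‖₊ : ℝ≥0∞) ^ 2 ∂μ) < ⊤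

/-- The heat kernel `ψ_ε(x) = (4πε)^{-d/2} e^{-|x|²/(4ε)}`. -/
noncomputable def heat (d : ℕ) (ε : ℝ) (x : EuclideanSpace ℝ (Fin d)) : ℝ :=
  (4 * Real.pi * ε) ^ (-(d : ℝ) / 2) * Real.exp (-‖x‖ ^ 2 / (4 * ε))

/-- Weak-* convergence of a sequence of measures: convergence of integrals of all bounded
continuous functions. -/
def WeakStarTendsto (d : ℕ) (μ : ℕ → Measure (EuclideanSpace ℝ (Fin d)))
    (ν : Measure (EuclideanSpace ℝ (Fin d))) : Prop :=
  ∀ f : EuclideanSpace ℝ (Fin d) → ℝ, Continuous f → (∃ M : ℝ, ∀ x, |f x| ≤ M) →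
    Tendsto (fun k => ∫ x, f x ∂(μ k)) atTop (𝓝 (∫ x, f x ∂ν))

/-- `μ` is absolutely continuous (w.r.t. Lebesgue) with density bounded by `R`. -/
def HasBddDensity (d : ℕ) (μ : Measure (EuclideanSpace ℝ (Fin d))) (R : ℝ) : Prop :=
  ∃ ρ : EuclideanSpace ℝ (Fin d) → ℝ≥0∞, Measurable ρ ∧ μ = volume.withDensity ρ ∧
    ∀ᵐ x ∂(volume : Measure (EuclideanSpace ℝ (Fin d))), ρ x ≤ ENNReal.ofReal R

/-- Explicit gradient `∇K(x) = x|x|^{q-2} - x|x|^{p-2}` of the power-law kernel. -/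
noncomputable def gradK (d : ℕ) (p q : ℝ) (x : EuclideanSpace ℝ (Fin d)) :
    EuclideanSpace ℝ (Fin d) :=
  (‖x‖ ^ (q - 2)) • x - (‖x‖ ^ (p - 2)) • x

/-- The log-Lipschitz modulus of convexity `ω`. -/
noncomputable def omegaMod (x : ℝ) : ℝ :=
  if x ≤ Real.exp (-1 - Real.sqrt 2) then x * |Real.log x|
  else Real.sqrt (x ^ 2 + 2 * (1 + Real.sqrt 2) * Real.exp (-1 - Real.sqrt 2) * x)

/-- Support of a measure: points all of whose neighborhoods have positive measure. -/
def msupport (d : ℕ) (μ : Measure (EuclideanSpace ℝ (Fin d))) :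
    Set (EuclideanSpace ℝ (Fin d)) :=
  {x | ∀ r : ℝ, 0 < r → 0 < μ (Metric.ball x r)}

/-- The measure `μ * ψ_δ` obtained by mollifying `μ` with the heat kernel at scale `δ`. -/
noncomputable def heatMollified (d : ℕ) (μ : Measure (EuclideanSpace ℝ (Fin d))) (δ : ℝ) :
    Measure (EuclideanSpace ℝ (Fin d)) :=
  volume.withDensity fun x => ENNReal.ofReal (∫ y, heat d δ (x - y) ∂μ)
section AuxiliaryLemmas

open Set

private lemma gaussE_integrable (d : ℕ) {b : ℝ} (hb : 0 < b) :
    Integrable (fun v : EuclideanSpace ℝ (Fin d) => Real.exp (-(b * ‖v‖ ^ 2))) := by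
  have h := GaussianFourier.integrable_cexp_neg_mul_sq_norm_add
      (V := EuclideanSpace ℝ (Fin d)) (b := (b : ℂ)) (by simpa using hb) 0 0
  have h2 := h.re
  refine h2.congr (Filter.Eventually.of_forall fun v => ?_)
  have e : (-(b:ℂ) * (‖v‖:ℂ) ^ 2 + 0 * (inner ℝ (0 : EuclideanSpace ℝ (Fin d)) v : ℝ))
      = ((-(b * ‖v‖ ^ 2) : ℝ) : ℂ) := by push_cast; ring
  simp only [e, ← Complex.ofReal_exp]
  first
  | rfl
  | simp [RCLike.re_to_complex, Complex.ofReal_re]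

private lemma gaussE_lintegral (d : ℕ) {b : ℝ} (hb : 0 < b) :
    ∫⁻ v : EuclideanSpace ℝ (Fin d), ENNReal.ofReal (Real.exp (-(b * ‖v‖ ^ 2)))
      = ENNReal.ofReal ((Real.pi / b) ^ ((d : ℝ) / 2)) := by
  rw [← ofReal_integral_eq_lintegral_ofReal (gaussE_integrable d hb)
    (Filter.Eventually.of_forall fun v => (Real.exp_pos _).le)]
  congr 1
  have h := GaussianFourier.integral_rexp_neg_mul_sq_norm
      (V := EuclideanSpace ℝ (Fin d)) hb
  simp only [neg_mul] at h ⊢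
  rw [h, finrank_euclideanSpace_fin]

private lemma heat_measurable (d : ℕ) (ε : ℝ) : Measurable (heat d ε) := by
  unfold heat; fun_prop

private lemma key_quad {a b : ℝ} (ha : 0 < a) (hb : 0 < b) (d : ℕ)
    (w z : EuclideanSpace ℝ (Fin d)) :
      Real.exp (-(a * ‖z‖ ^ 2)) * Real.exp (-(b * ‖w - z‖ ^ 2))
        = Real.exp (-(a * b / (a + b) * ‖w‖ ^ 2)) *
          Real.exp (-((a + b) * ‖z - (b / (a + b)) • w‖ ^ 2)) := by
  have hab : 0 < a + b := by linarith
  rw [← Real.exp_add, ← Real.exp_add]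
  congr 1
  have e1 : ‖w - z‖ ^ 2 = ‖w‖ ^ 2 - 2 * (inner ℝ w z : ℝ) + ‖z‖ ^ 2 := norm_sub_sq_real w z
  have e2 : ‖z - (b / (a + b)) • w‖ ^ 2
      = ‖z‖ ^ 2 - 2 * (inner ℝ z ((b / (a + b)) • w) : ℝ) + ‖(b / (a + b)) • w‖ ^ 2 :=
    norm_sub_sq_real z _
  have e3 : (inner ℝ z ((b / (a + b)) • w) : ℝ) = (b / (a + b)) * (inner ℝ w z : ℝ) := by
    rw [real_inner_smul_right, real_inner_comm]
  have e4 : ‖(b / (a + b)) • w‖ ^ 2 = (b / (a + b)) ^ 2 * ‖w‖ ^ 2 := by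
    rw [norm_smul, mul_pow, Real.norm_eq_abs, sq_abs]
  rw [e2, e3, e4, e1]
  field_simp
  ring

private lemma gauss_conv_abstract (d : ℕ) {a b : ℝ} (ha : 0 < a) (hb : 0 < b)
    (w : EuclideanSpace ℝ (Fin d)) :
    ∫⁻ z, ENNReal.ofReal (Real.exp (-(a * ‖z‖ ^ 2))) *
        ENNReal.ofReal (Real.exp (-(b * ‖w - z‖ ^ 2)))
      = ENNReal.ofReal ((Real.pi / (a + b)) ^ ((d : ℝ) / 2) *
          Real.exp (-(a * b / (a + b) * ‖w‖ ^ 2))) := by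
  have hab : 0 < a + b := by linarith
  have h1 : ∫⁻ z, ENNReal.ofReal (Real.exp (-(a * ‖z‖ ^ 2))) *
        ENNReal.ofReal (Real.exp (-(b * ‖w - z‖ ^ 2)))
      = ∫⁻ z, ENNReal.ofReal (Real.exp (-(a * b / (a + b) * ‖w‖ ^ 2))) *
          ENNReal.ofReal (Real.exp (-((a + b) * ‖z - (b / (a + b)) • w‖ ^ 2))) := by
    refine lintegral_congr fun z => ?_
    rw [← ENNReal.ofReal_mul (Real.exp_pos _).le, key_quad ha hb d w z,
      ENNReal.ofReal_mul (Real.exp_pos _).le]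
  have h2 : (∫⁻ z, ENNReal.ofReal (Real.exp (-(a * b / (a + b) * ‖w‖ ^ 2))) *
          ENNReal.ofReal (Real.exp (-((a + b) * ‖z - (b / (a + b)) • w‖ ^ 2))))
      = ENNReal.ofReal (Real.exp (-(a * b / (a + b) * ‖w‖ ^ 2))) *
          ∫⁻ z : EuclideanSpace ℝ (Fin d),
            ENNReal.ofReal (Real.exp (-((a + b) * ‖z‖ ^ 2))) := by
    rw [lintegral_const_mul' _ _ ENNReal.ofReal_ne_top]
    congr 1
    exact lintegral_sub_right_eq_self
      (fun z => ENNReal.ofReal (Real.exp (-((a + b) * ‖z‖ ^ 2)))) _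
  rw [h1, h2, gaussE_lintegral d hab, ← ENNReal.ofReal_mul (Real.exp_pos _).le, mul_comm]

private lemma heat_conv (d : ℕ) {ε t : ℝ} (hε : 0 < ε) (ht : 0 < t)
    (w : EuclideanSpace ℝ (Fin d)) :
    ∫⁻ z, ENNReal.ofReal (heat d ε z) * ENNReal.ofReal (Real.exp (-(‖w - z‖ ^ 2 / (4 * t))))
      = ENNReal.ofReal ((t / (t + ε)) ^ ((d : ℝ) / 2) *
          Real.exp (-(‖w‖ ^ 2 / (4 * (t + ε))))) := by
  have hπ := Real.pi_pos
  have hεne : ε ≠ 0 := ne_of_gt hε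
  have htne : t ≠ 0 := ne_of_gt ht
  have htε : (0:ℝ) < t + ε := by linarith
  have htεne : t + ε ≠ 0 := ne_of_gt htε
  have ha : (0:ℝ) < (4 * ε)⁻¹ := by positivity
  have hb : (0:ℝ) < (4 * t)⁻¹ := by positivity
  have hab : (0:ℝ) < (4 * ε)⁻¹ + (4 * t)⁻¹ := by linarith
  have h1 : ∫⁻ z, ENNReal.ofReal (heat d ε z) *
        ENNReal.ofReal (Real.exp (-(‖w - z‖ ^ 2 / (4 * t))))
      = ∫⁻ z, ENNReal.ofReal ((4 * Real.pi * ε) ^ (-(d : ℝ) / 2)) *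
          (ENNReal.ofReal (Real.exp (-((4 * ε)⁻¹ * ‖z‖ ^ 2))) *
           ENNReal.ofReal (Real.exp (-((4 * t)⁻¹ * ‖w - z‖ ^ 2)))) := by
    refine lintegral_congr fun z => ?_
    rw [show heat d ε z = (4 * Real.pi * ε) ^ (-(d : ℝ) / 2) *
        Real.exp (-((4 * ε)⁻¹ * ‖z‖ ^ 2)) from by rw [heat]; ring_nf,
      show Real.exp (-(‖w - z‖ ^ 2 / (4 * t))) = Real.exp (-((4 * t)⁻¹ * ‖w - z‖ ^ 2)) from
        by ring_nf,
      ENNReal.ofReal_mul (by positivity), mul_assoc]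
  have h2 : ∫⁻ z, ENNReal.ofReal ((4 * Real.pi * ε) ^ (-(d : ℝ) / 2)) *
          (ENNReal.ofReal (Real.exp (-((4 * ε)⁻¹ * ‖z‖ ^ 2))) *
           ENNReal.ofReal (Real.exp (-((4 * t)⁻¹ * ‖w - z‖ ^ 2))))
      = ENNReal.ofReal ((4 * Real.pi * ε) ^ (-(d : ℝ) / 2)) *
          ∫⁻ z, ENNReal.ofReal (Real.exp (-((4 * ε)⁻¹ * ‖z‖ ^ 2))) *
           ENNReal.ofReal (Real.exp (-((4 * t)⁻¹ * ‖w - z‖ ^ 2))) :=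
    lintegral_const_mul' _ _ ENNReal.ofReal_ne_top
  rw [h1, h2, gauss_conv_abstract d ha hb w,
    ← ENNReal.ofReal_mul (Real.rpow_nonneg
      (le_of_lt (by positivity : (0:ℝ) < 4 * Real.pi * ε)) _)]
  congr 1
  have f1 : (4 * ε)⁻¹ * (4 * t)⁻¹ / ((4 * ε)⁻¹ + (4 * t)⁻¹) * ‖w‖ ^ 2
      = ‖w‖ ^ 2 / (4 * (t + ε)) := by
    rw [show (4 * ε)⁻¹ * (4 * t)⁻¹ / ((4 * ε)⁻¹ + (4 * t)⁻¹) = (4 * (t + ε))⁻¹ from by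
      field_simp, inv_mul_eq_div]
  have f2 : Real.pi / ((4 * ε)⁻¹ + (4 * t)⁻¹) = (4 * Real.pi * ε) * (t / (t + ε)) := by
    field_simp
  rw [f1, f2,
    show ((4 * Real.pi * ε) * (t / (t + ε))) ^ ((d:ℝ) / 2)
        = (4 * Real.pi * ε) ^ ((d:ℝ) / 2) * (t / (t + ε)) ^ ((d:ℝ) / 2) from
      Real.mul_rpow (by positivity) (by positivity)]
  have hX : (4 * Real.pi * ε) ^ (-(d:ℝ) / 2) * (4 * Real.pi * ε) ^ ((d:ℝ) / 2) = 1 := by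
    rw [← Real.rpow_add (by positivity), show -(d:ℝ) / 2 + (d:ℝ) / 2 = 0 from by ring,
      Real.rpow_zero]
  linear_combination (t / (t + ε)) ^ ((d:ℝ) / 2) *
    Real.exp (-(‖w‖ ^ 2 / (4 * (t + ε)))) * hX

private lemma swap_heat (d : ℕ) {ε : ℝ} (hε : 0 < ε) {c σ : ℝ → ℝ} (hc : Measurable c)
    (hcnn : ∀ s, 0 < s → 0 ≤ c s) (hσ : Measurable σ) (hσpos : ∀ s, 0 < s → 0 < σ s)
    (w : EuclideanSpace ℝ (Fin d)) :
    ∫⁻ z, ENNReal.ofReal (heat d ε z) *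
        ∫⁻ s in Set.Ioi (0:ℝ), ENNReal.ofReal (c s * Real.exp (-(‖w - z‖ ^ 2 / (4 * σ s))))
      = ∫⁻ s in Set.Ioi (0:ℝ), ENNReal.ofReal ((c s * (σ s / (σ s + ε)) ^ ((d:ℝ)/2)) *
          Real.exp (-(‖w‖ ^ 2 / (4 * (σ s + ε))))) := by
  have hmeas : AEMeasurable (fun q : (EuclideanSpace ℝ (Fin d)) × ℝ =>
      ENNReal.ofReal (heat d ε q.1) *
        ENNReal.ofReal (c q.2 * Real.exp (-(‖w - q.1‖ ^ 2 / (4 * σ q.2)))))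
      ((volume : Measure (EuclideanSpace ℝ (Fin d))).prod (volume.restrict (Set.Ioi 0))) := by
    apply Measurable.aemeasurable
    refine Measurable.mul (f := fun q : (EuclideanSpace ℝ (Fin d)) × ℝ => ENNReal.ofReal (heat d ε q.1))
      (g := fun q : (EuclideanSpace ℝ (Fin d)) × ℝ =>
        ENNReal.ofReal (c q.2 * Real.exp (-(‖w - q.1‖ ^ 2 / (4 * σ q.2))))) ?_ ?_
    · exact ((heat_measurable d ε).comp measurable_fst).ennreal_ofReal
    · apply Measurable.ennreal_ofReal
      apply Measurable.mul (f := fun q : (EuclideanSpace ℝ (Fin d)) × ℝ => c q.2)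
        (g := fun q : (EuclideanSpace ℝ (Fin d)) × ℝ => Real.exp (-(‖w - q.1‖ ^ 2 / (4 * σ q.2))))
        (hc.comp measurable_snd)
      apply Real.measurable_exp.comp
      apply Measurable.neg
      apply Measurable.div
      · exact ((continuous_const.sub continuous_fst).norm.pow 2).measurable
      · exact (hσ.comp measurable_snd).const_mul 4
  have h1 : ∫⁻ z, ENNReal.ofReal (heat d ε z) *
        ∫⁻ s in Set.Ioi (0:ℝ), ENNReal.ofReal (c s * Real.exp (-(‖w - z‖ ^ 2 / (4 * σ s))))
      = ∫⁻ z, ∫⁻ s in Set.Ioi (0:ℝ), ENNReal.ofReal (heat d ε z) *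
          ENNReal.ofReal (c s * Real.exp (-(‖w - z‖ ^ 2 / (4 * σ s)))) :=
    lintegral_congr fun z => (lintegral_const_mul' _ _ ENNReal.ofReal_ne_top).symm
  have h2 : ∫⁻ z, ∫⁻ s in Set.Ioi (0:ℝ), ENNReal.ofReal (heat d ε z) *
          ENNReal.ofReal (c s * Real.exp (-(‖w - z‖ ^ 2 / (4 * σ s))))
      = ∫⁻ s in Set.Ioi (0:ℝ), ∫⁻ z, ENNReal.ofReal (heat d ε z) *
          ENNReal.ofReal (c s * Real.exp (-(‖w - z‖ ^ 2 / (4 * σ s)))) :=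
    lintegral_lintegral_swap hmeas
  rw [h1, h2]
  refine setLIntegral_congr_fun measurableSet_Ioi (fun s hs => ?_)
  have h3 : 0 < σ s := hσpos s hs
  have h4 : 0 ≤ c s := hcnn s hs
  have h5 : ∫⁻ z, ENNReal.ofReal (heat d ε z) *
        ENNReal.ofReal (c s * Real.exp (-(‖w - z‖ ^ 2 / (4 * σ s))))
      = ∫⁻ z, ENNReal.ofReal (c s) * (ENNReal.ofReal (heat d ε z) *
          ENNReal.ofReal (Real.exp (-(‖w - z‖ ^ 2 / (4 * σ s))))) :=
    lintegral_congr fun z => by rw [ENNReal.ofReal_mul h4]; ring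
  rw [h5, lintegral_const_mul' _ _ ENNReal.ofReal_ne_top, heat_conv d hε h3 w,
    ← ENNReal.ofReal_mul h4]
  congr 1
  ring

private lemma exp_neg_le_factorial (n : ℕ) {x : ℝ} (hx : 0 < x) :
    Real.exp (-x) ≤ n.factorial / x ^ n := by
  have h := Real.pow_div_factorial_le_exp (x := x) hx.le n
  rw [Real.exp_neg]
  calc (Real.exp x)⁻¹ ≤ (x ^ n / n.factorial)⁻¹ := inv_anti₀ (by positivity) h
    _ = n.factorial / x ^ n := by rw [inv_div]

private lemma integ_sub (d : ℕ) {p : ℝ} (hp1 : 2 - (d:ℝ) ≤ p) (hp2 : p < 0) {a : ℝ}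
    (ha : 0 < a) :
    IntegrableOn (fun u : ℝ => u ^ (p/2 - 1) * Real.exp (-(a / (4 * u)))) (Set.Ioi 0) := by
  have hν : p/2 - 1 < -1 := by linarith
  have hd0 : (0:ℝ) ≤ (d:ℝ) := Nat.cast_nonneg d
  have hνd : 0 ≤ p/2 - 1 + (d:ℝ) := by linarith
  have hmeas : Measurable fun u : ℝ => u ^ (p/2 - 1) * Real.exp (-(a / (4 * u))) := by
    fun_prop
  rw [← Set.Ioc_union_Ioi_eq_Ioi (zero_le_one (α := ℝ))]
  apply MeasureTheory.IntegrableOn.union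
  · have hbound : ∀ u ∈ Set.Ioc (0:ℝ) 1,
        ‖u ^ (p/2 - 1) * Real.exp (-(a / (4 * u)))‖ ≤ (d.factorial : ℝ) * (4 / a) ^ d := by
      intro u hu
      obtain ⟨hu0, hu1⟩ := hu
      have hx : 0 < a / (4 * u) := by positivity
      have h1 : Real.exp (-(a / (4 * u))) ≤ (d.factorial : ℝ) / (a / (4 * u)) ^ d :=
        exp_neg_le_factorial d hx
      have h2 : ((d.factorial : ℝ) / (a / (4 * u)) ^ d)
          = (d.factorial : ℝ) * (4 / a) ^ d * u ^ (d : ℕ) := by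
        rw [div_pow, div_div_eq_mul_div, div_pow]
        field_simp
        ring
      rw [Real.norm_eq_abs, abs_of_nonneg (by positivity)]
      calc u ^ (p/2 - 1) * Real.exp (-(a / (4 * u)))
          ≤ u ^ (p/2 - 1) * ((d.factorial : ℝ) * (4 / a) ^ d * u ^ (d:ℕ)) := by
            rw [h2] at h1
            exact mul_le_mul_of_nonneg_left h1 (Real.rpow_nonneg hu0.le _)
        _ = (d.factorial : ℝ) * (4 / a) ^ d * (u ^ (p/2 - 1) * u ^ ((d:ℕ) : ℝ)) := by
            rw [Real.rpow_natCast]; ring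
        _ = (d.factorial : ℝ) * (4 / a) ^ d * u ^ (p/2 - 1 + (d:ℝ)) := by
            rw [← Real.rpow_add hu0]
        _ ≤ (d.factorial : ℝ) * (4 / a) ^ d * 1 := by
            apply mul_le_mul_of_nonneg_left (Real.rpow_le_one hu0.le hu1 hνd) (by positivity)
        _ = (d.factorial : ℝ) * (4 / a) ^ d := mul_one _
    have hfin : volume (Set.Ioc (0:ℝ) 1) < ⊤ := measure_Ioc_lt_top
    exact Measure.integrableOn_of_bounded hfin.ne hmeas.aestronglyMeasurable
      ((ae_restrict_iff' measurableSet_Ioc).mpr (ae_of_all _ hbound))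
  · apply Integrable.mono (integrableOn_Ioi_rpow_of_lt hν one_pos)
      hmeas.aestronglyMeasurable.restrict
    rw [ae_restrict_iff' measurableSet_Ioi]
    refine ae_of_all _ fun u hu => ?_
    have hu0 : (0:ℝ) < u := lt_trans one_pos hu
    rw [Real.norm_eq_abs, Real.norm_eq_abs, abs_of_nonneg (by positivity),
      abs_of_nonneg (Real.rpow_nonneg hu0.le _)]
    calc u ^ (p/2 - 1) * Real.exp (-(a / (4 * u)))
        ≤ u ^ (p/2 - 1) * 1 := by
          apply mul_le_mul_of_nonneg_left _ (Real.rpow_nonneg hu0.le _)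
          rw [Real.exp_le_one_iff]
          simp only [neg_nonpos]
          positivity
      _ = u ^ (p/2 - 1) := mul_one _

/-- The subordination constant `∫_0^∞ u^{p/2-1} e^{-1/(4u)} du`. -/
noncomputable def subC (p : ℝ) : ℝ :=
  ∫ u in Set.Ioi (0:ℝ), u ^ (p/2 - 1) * Real.exp (-(1 / (4 * u)))

private lemma subC_pos (d : ℕ) {p : ℝ} (hp1 : 2 - (d:ℝ) ≤ p) (hp2 : p < 0) :
    0 < subC p := by
  rw [subC]
  rw [setIntegral_pos_iff_support_of_nonneg_ae]
  · have hs : Set.Ioi (0:ℝ) ⊆ Function.support fun u => u ^ (p/2 - 1) * Real.exp (-(1 / (4 * u)))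
        := fun u hu => by
      have : (0:ℝ) < u := hu
      exact ne_of_gt (by positivity)
    calc (0:ℝ≥0∞) < volume (Set.Ioi (0:ℝ)) := by simp [Real.volume_Ioi]
      _ ≤ volume ((Function.support fun u => u ^ (p/2 - 1) * Real.exp (-(1 / (4 * u))))
            ∩ Set.Ioi 0) := measure_mono (Set.subset_inter hs (subset_refl _))
  · filter_upwards [ae_restrict_mem measurableSet_Ioi] with u hu
    simp only [Pi.zero_apply]
    have : (0:ℝ) < u := hu
    positivity
  · exact integ_sub d hp1 hp2 one_pos

private lemma sub_scaling (d : ℕ) {p : ℝ} (hp1 : 2 - (d:ℝ) ≤ p) (hp2 : p < 0) {R : ℝ}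
    (hR : 0 < R) :
    ∫⁻ s in Set.Ioi (0:ℝ), ENNReal.ofReal (s ^ (p/2 - 1) * Real.exp (-(R ^ 2 / (4 * s))))
      = ENNReal.ofReal (subC p * R ^ p) := by
  have hR2 : (0:ℝ) < R ^ 2 := by positivity
  have hint : IntegrableOn (fun s : ℝ => s ^ (p/2 - 1) * Real.exp (-(R ^ 2 / (4 * s))))
      (Set.Ioi 0) := integ_sub d hp1 hp2 hR2
  rw [← ofReal_integral_eq_lintegral_ofReal hint ?nn]
  case nn =>
    filter_upwards [ae_restrict_mem measurableSet_Ioi] with s hs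
    simp only [Pi.zero_apply]
    have : (0:ℝ) < s := hs
    positivity
  congr 1
  have hcomp := integral_comp_mul_left_Ioi
    (fun s : ℝ => s ^ (p/2 - 1) * Real.exp (-(R ^ 2 / (4 * s)))) 0 hR2
  rw [mul_zero] at hcomp
  have hre : ∫ x in Set.Ioi (0:ℝ), (R ^ 2 * x) ^ (p/2 - 1) *
        Real.exp (-(R ^ 2 / (4 * (R ^ 2 * x))))
      = (R ^ 2) ^ (p/2 - 1) * subC p := by
    rw [subC, ← integral_const_mul]
    refine setIntegral_congr_fun measurableSet_Ioi fun x hx => ?_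
    have hx0 : (0:ℝ) < x := hx
    rw [Real.mul_rpow hR2.le hx0.le,
      show R ^ 2 / (4 * (R ^ 2 * x)) = 1 / (4 * x) from by field_simp]
    ring
  rw [hre] at hcomp
  rw [smul_eq_mul] at hcomp
  have hmul := congrArg (fun y : ℝ => R ^ 2 * y) hcomp
  simp only [← mul_assoc, mul_inv_cancel₀ (ne_of_gt hR2), one_mul] at hmul
  rw [← hmul]
  have e : R ^ (2:ℕ) * ((R ^ (2:ℕ)) ^ (p/2 - 1)) = R ^ p := by
    rw [← Real.rpow_natCast R 2, ← Real.rpow_mul hR.le, ← Real.rpow_add hR,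
      show ((2:ℕ):ℝ) + ((2:ℕ):ℝ) * (p/2 - 1) = p from by push_cast; ring]
  linear_combination subC p * e

private lemma sub_eq (d : ℕ) {p : ℝ} (hp1 : 2 - (d:ℝ) ≤ p) (hp2 : p < 0)
    {w : EuclideanSpace ℝ (Fin d)} (hw : w ≠ 0) :
    ENNReal.ofReal ((-p) * subC p) * KrE d p w
      = ∫⁻ s in Set.Ioi (0:ℝ),
          ENNReal.ofReal (s ^ (p/2 - 1) * Real.exp (-(‖w‖ ^ 2 / (4 * s)))) := by
  have hw' : (0:ℝ) < ‖w‖ := norm_pos_iff.mpr hw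
  rw [sub_scaling d hp1 hp2 hw']
  rw [KrE]
  have h1 : ((‖w‖₊ : ℝ≥0∞)) ^ p = ENNReal.ofReal (‖w‖ ^ p) := by
    rw [← enorm_eq_nnnorm, ← ofReal_norm, ENNReal.ofReal_rpow_of_pos hw']
  have h0 : ENNReal.ofReal (-p) ≠ 0 := ne_of_gt (ENNReal.ofReal_pos.mpr (by linarith))
  have hc0 : 0 ≤ subC p := (subC_pos d hp1 hp2).le
  rw [h1, ENNReal.ofReal_mul (by linarith : (0:ℝ) ≤ -p), div_eq_mul_inv]
  rw [show ENNReal.ofReal (-p) * ENNReal.ofReal (subC p) *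
      (ENNReal.ofReal (‖w‖ ^ p) * (ENNReal.ofReal (-p))⁻¹)
      = ENNReal.ofReal (-p) * (ENNReal.ofReal (-p))⁻¹ *
        (ENNReal.ofReal (subC p) * ENNReal.ofReal (‖w‖ ^ p)) from by ring,
    ENNReal.mul_inv_cancel h0 ENNReal.ofReal_ne_top, one_mul,
    ← ENNReal.ofReal_mul hc0]

private lemma master (d : ℕ) (hd : 3 ≤ d) {p : ℝ} (hp1 : 2 - (d:ℝ) ≤ p) (hp2 : p < 0)
    {ε : ℝ} (hε : 0 < ε) (x : EuclideanSpace ℝ (Fin d)) :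
    ENNReal.ofReal ((-p) * subC p) * convE d (heat d ε) (KrE d p) x
      = ∫⁻ s in Set.Ioi (0:ℝ), ENNReal.ofReal ((s ^ (p/2 - 1) * (s / (s + 2 * ε)) ^ ((d:ℝ)/2)) *
          Real.exp (-(‖x‖ ^ 2 / (4 * (s + 2 * ε))))) := by
  haveI hnt : Nontrivial (EuclideanSpace ℝ (Fin d)) := by
    refine nontrivial_of_ne (EuclideanSpace.single (⟨0, by omega⟩ : Fin d) (1:ℝ)) 0 ?_
    intro h
    have := congrArg (fun v : EuclideanSpace ℝ (Fin d) => v (⟨0, by omega⟩ : Fin d)) h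
    simp [EuclideanSpace.single_apply] at this
  have hA : ENNReal.ofReal ((-p) * subC p) ≠ ⊤ := ENNReal.ofReal_ne_top
  have h1 : ENNReal.ofReal ((-p) * subC p) * convE d (heat d ε) (KrE d p) x
      = ∫⁻ y, ENNReal.ofReal (heat d ε y) * ∫⁻ z, ENNReal.ofReal (heat d ε z) *
          (ENNReal.ofReal ((-p) * subC p) * KrE d p (x - y - z)) := by
    rw [convE, ← lintegral_const_mul' _ _ hA]
    refine lintegral_congr fun y => ?_
    rw [← lintegral_const_mul' _ _ hA, ← lintegral_const_mul' _ _ ENNReal.ofReal_ne_top]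
    exact lintegral_congr fun z => by ring
  have h2 : ∀ y : EuclideanSpace ℝ (Fin d),
      ∫⁻ z, ENNReal.ofReal (heat d ε z) *
          (ENNReal.ofReal ((-p) * subC p) * KrE d p (x - y - z))
        = ∫⁻ z, ENNReal.ofReal (heat d ε z) *
            ∫⁻ s in Set.Ioi (0:ℝ),
              ENNReal.ofReal (s ^ (p/2 - 1) * Real.exp (-(‖x - y - z‖ ^ 2 / (4 * s)))) := by
    intro y
    have hnull : (volume : Measure (EuclideanSpace ℝ (Fin d))) {x - y} = 0 :=
      measure_singleton _
    have hae : ∀ᵐ z : EuclideanSpace ℝ (Fin d) ∂volume, z ≠ x - y := by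
      rw [ae_iff]
      refine measure_mono_null ?_ hnull
      intro z hz
      simpa using hz
    refine lintegral_congr_ae (hae.mono fun z hz => ?_)
    exact congrArg (fun t => ENNReal.ofReal (heat d ε z) * t)
      (sub_eq d hp1 hp2 (sub_ne_zero_of_ne (Ne.symm hz)))
  have h3 : ∀ y : EuclideanSpace ℝ (Fin d),
      ∫⁻ z, ENNReal.ofReal (heat d ε z) *
          ∫⁻ s in Set.Ioi (0:ℝ),
            ENNReal.ofReal (s ^ (p/2 - 1) * Real.exp (-(‖x - y - z‖ ^ 2 / (4 * s))))
        = ∫⁻ s in Set.Ioi (0:ℝ), ENNReal.ofReal ((s ^ (p/2 - 1) * (s / (s + ε)) ^ ((d:ℝ)/2)) *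
            Real.exp (-(‖x - y‖ ^ 2 / (4 * (s + ε))))) := fun y =>
    swap_heat d hε (c := fun s => s ^ (p/2 - 1)) (σ := fun s => s)
      (by fun_prop) (fun s hs => Real.rpow_nonneg hs.le _) measurable_id
      (fun s hs => hs) (x - y)
  refine h1.trans ?_
  refine (lintegral_congr fun y => congrArg (fun t => ENNReal.ofReal (heat d ε y) * t)
    ((h2 y).trans (h3 y))).trans ?_
  have h4 := swap_heat d hε (c := fun s => s ^ (p/2 - 1) * (s / (s + ε)) ^ ((d:ℝ)/2))
      (σ := fun s => s + ε) (by fun_prop)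
      (fun s hs => mul_nonneg (Real.rpow_nonneg hs.le _)
        (Real.rpow_nonneg (div_nonneg hs.le (by linarith)) _))
      (by fun_prop) (fun s hs => by show (0:ℝ) < s + ε; linarith) x
  refine h4.trans ?_
  refine setLIntegral_congr_fun measurableSet_Ioi (fun s hs => ?_)
  have hs0 : (0:ℝ) < s := hs
  have hsε : (0:ℝ) < s + ε := by linarith
  have hs2ε : (0:ℝ) < s + 2 * ε := by linarith
  rw [show s + ε + ε = s + 2 * ε from by ring]
  congr 1
  have hq : (s / (s + ε)) ^ ((d:ℝ)/2) * ((s + ε) / (s + 2 * ε)) ^ ((d:ℝ)/2)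
      = (s / (s + 2 * ε)) ^ ((d:ℝ)/2) := by
    rw [← Real.mul_rpow (div_nonneg hs0.le hsε.le) (div_nonneg hsε.le hs2ε.le),
      div_mul_div_comm, mul_comm s (s + ε), mul_div_mul_left _ _ (ne_of_gt hsε)]
  linear_combination s ^ (p/2 - 1) * Real.exp (-(‖x‖ ^ 2 / (4 * (s + 2 * ε)))) * hq

private lemma shift_Ioi (G : ℝ → ℝ≥0∞) (δ : ℝ) :
    ∫⁻ s in Set.Ioi (0:ℝ), G (s + δ) = ∫⁻ r in Set.Ioi δ, G r := by
  have h1 : MeasurePreserving (fun s : ℝ => s + δ) volume volume :=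
    measurePreserving_add_right volume δ
  have h2 : MeasurableEmbedding (fun s : ℝ => s + δ) :=
    (Homeomorph.addRight δ).measurableEmbedding
  have h3 : (fun s : ℝ => s + δ) ⁻¹' Set.Ioi δ = Set.Ioi 0 := by
    ext u
    simp
  rw [← h3, MeasurePreserving.setLIntegral_comp_preimage_emb h1 h2]

private lemma mono_int (d : ℕ) {p : ℝ} (hp1 : 2 - (d:ℝ) ≤ p) {t₁ t₂ : ℝ} (ht₂ : 0 < t₂)
    (ht : t₂ ≤ t₁) (x : EuclideanSpace ℝ (Fin d)) :
    ∫⁻ s in Set.Ioi (0:ℝ), ENNReal.ofReal ((s ^ (p/2 - 1) * (s / (s + t₁)) ^ ((d:ℝ)/2)) *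
          Real.exp (-(‖x‖ ^ 2 / (4 * (s + t₁)))))
      ≤ ∫⁻ s in Set.Ioi (0:ℝ), ENNReal.ofReal ((s ^ (p/2 - 1) * (s / (s + t₂)) ^ ((d:ℝ)/2)) *
          Real.exp (-(‖x‖ ^ 2 / (4 * (s + t₂))))) := by
  obtain ⟨δ, hδ, rfl⟩ : ∃ δ, 0 ≤ δ ∧ t₁ = δ + t₂ := ⟨t₁ - t₂, by linarith, by ring⟩
  have hβ : 0 ≤ p/2 - 1 + (d:ℝ)/2 := by linarith
  have step1 : ∫⁻ s in Set.Ioi (0:ℝ),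
        ENNReal.ofReal ((s ^ (p/2 - 1) * (s / (s + (δ + t₂))) ^ ((d:ℝ)/2)) *
          Real.exp (-(‖x‖ ^ 2 / (4 * (s + (δ + t₂))))))
      ≤ ∫⁻ s in Set.Ioi (0:ℝ),
          ENNReal.ofReal (((s + δ) ^ (p/2 - 1) * ((s + δ) / ((s + δ) + t₂)) ^ ((d:ℝ)/2)) *
            Real.exp (-(‖x‖ ^ 2 / (4 * ((s + δ) + t₂))))) := by
    refine setLIntegral_mono' measurableSet_Ioi fun s hs => ?_
    have hs0 : (0:ℝ) < s := hs
    have hsδ : (0:ℝ) < s + δ := by linarith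
    have hA : (0:ℝ) < s + (δ + t₂) := by linarith
    have e : s + δ + t₂ = s + (δ + t₂) := by ring
    rw [e]
    apply ENNReal.ofReal_le_ofReal
    apply mul_le_mul_of_nonneg_right _ (Real.exp_pos _).le
    rw [Real.div_rpow hs0.le hA.le, Real.div_rpow hsδ.le hA.le,
      show s ^ (p/2 - 1) * (s ^ ((d:ℝ)/2) / (s + (δ + t₂)) ^ ((d:ℝ)/2))
          = s ^ (p/2 - 1) * s ^ ((d:ℝ)/2) / (s + (δ + t₂)) ^ ((d:ℝ)/2) from by ring,
      show (s + δ) ^ (p/2 - 1) * ((s + δ) ^ ((d:ℝ)/2) / (s + (δ + t₂)) ^ ((d:ℝ)/2))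
          = (s + δ) ^ (p/2 - 1) * (s + δ) ^ ((d:ℝ)/2) / (s + (δ + t₂)) ^ ((d:ℝ)/2) from
        by ring,
      ← Real.rpow_add hs0, ← Real.rpow_add hsδ]
    gcongr <;> first | positivity | linarith
  refine step1.trans ?_
  have step2 : ∫⁻ s in Set.Ioi (0:ℝ),
        ENNReal.ofReal (((s + δ) ^ (p/2 - 1) * ((s + δ) / ((s + δ) + t₂)) ^ ((d:ℝ)/2)) *
          Real.exp (-(‖x‖ ^ 2 / (4 * ((s + δ) + t₂)))))
      = ∫⁻ r in Set.Ioi δ, ENNReal.ofReal ((r ^ (p/2 - 1) * (r / (r + t₂)) ^ ((d:ℝ)/2)) *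
          Real.exp (-(‖x‖ ^ 2 / (4 * (r + t₂))))) :=
    shift_Ioi (fun r => ENNReal.ofReal ((r ^ (p/2 - 1) * (r / (r + t₂)) ^ ((d:ℝ)/2)) *
      Real.exp (-(‖x‖ ^ 2 / (4 * (r + t₂)))))) δ
  rw [step2]
  exact lintegral_mono_set (Set.Ioi_subset_Ioi hδ)

end AuxiliaryLemmas

/-- Monotonicity in `ε` of the heat-kernel regularized repulsive energy. -/
theorem heat_regularized_repulsive_energy_antitone
    (d : ℕ) (hd : 3 ≤ d) (p q : ℝ) (hp1 : 2 - (d : ℝ) ≤ p) (hp2 : p < 0)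
    (hq1 : 0 < q) (hq2 : q ≤ 2)
    (ε₁ ε₂ : ℝ) (hε₂ : 0 < ε₂) (hε : ε₂ ≤ ε₁)
    (μ : Measure (EuclideanSpace ℝ (Fin d))) (hμ : IsP2 d μ) :
    energyE d (convE d (heat d ε₁) (KrE d p)) μ
      ≤ energyE d (convE d (heat d ε₂) (KrE d p)) μ := by
  have hε₁ : 0 < ε₁ := lt_of_lt_of_le hε₂ hε
  have hA0 : ENNReal.ofReal ((-p) * subC p) ≠ 0 :=
    ne_of_gt (ENNReal.ofReal_pos.mpr (mul_pos (by linarith) (subC_pos d hp1 hp2)))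
  have key : ∀ x, convE d (heat d ε₁) (KrE d p) x ≤ convE d (heat d ε₂) (KrE d p) x := by
    intro x
    rw [← ENNReal.mul_le_mul_iff_right hA0 ENNReal.ofReal_ne_top]
    rw [master d hd hp1 hp2 hε₁ x, master d hd hp1 hp2 hε₂ x]
    exact mono_int d hp1 (by linarith) (by linarith) x
  unfold energyE
  exact lintegral_mono fun a => lintegral_mono fun b => key _
end
end

section
/- The interaction energy E admits a minimizer over P_2(ℝ^d): there exists μ₀ ∈ P_2(ℝ^d) such that E(μ₀) ≤ E(ν) for all ν ∈ P_2(ℝ^d). -/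
open MeasureTheory Filter
open scoped ENNReal Topology NNReal

noncomputable section

namespace Main
open MeasureTheory Filter Metric TopologicalSpace BoundedContinuousFunction
open scoped ENNReal Topology NNReal Classical

abbrev Euc (d : ℕ) := EuclideanSpace ℝ (Fin d)

namespace EMin

variable {d : ℕ} {p q : ℝ}


lemma measurable_KE : Measurable (KE d p q) := by
  apply Measurable.add
  · exact ((measurable_nnnorm.comp measurable_id).coe_nnreal_ennreal.pow_const q).div_const _
  · exact ((measurable_nnnorm.comp measurable_id).coe_nnreal_ennreal.pow_const p).div_const _

lemma KE_ge (hq1 : 0 < q) {R : ℝ} (hR : 0 ≤ R) {z : Euc d} (hz : R ≤ ‖z‖) :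
    ENNReal.ofReal (R ^ q / q) ≤ KE d p q z := by
  have h1 : ENNReal.ofReal (R ^ q / q) ≤ (‖z‖₊ : ℝ≥0∞) ^ q / ENNReal.ofReal q := by
    rw [ENNReal.ofReal_div_of_pos hq1, ← enorm_eq_nnnorm, ← ofReal_norm,
      ENNReal.ofReal_rpow_of_nonneg (norm_nonneg z) hq1.le]
    gcongr
  exact le_trans h1 (le_add_of_nonneg_right zero_le)

/-- truncated kernel, real-valued -/
noncomputable def gtr (d : ℕ) (p q : ℝ) (n : ℕ) (z : EuclideanSpace ℝ (Fin d)) : ℝ :=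
  if z = 0 then n else min (‖z‖ ^ q / q + ‖z‖ ^ p / (-p)) n

lemma kfun_nonneg (hq1 : 0 < q) (hp2 : p < 0) (z : Euc d) :
    0 ≤ ‖z‖ ^ q / q + ‖z‖ ^ p / (-p) := by
  have : (0:ℝ) < -p := by linarith
  positivity

lemma gtr_nonneg (hq1 : 0 < q) (hp2 : p < 0) (n : ℕ) (z : Euc d) : 0 ≤ gtr d p q n z := by
  by_cases hz : z = 0
  · simp [gtr, hz]
  · rw [gtr, if_neg hz]
    exact le_min (kfun_nonneg hq1 hp2 z) (Nat.cast_nonneg n)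

lemma gtr_le (n : ℕ) (z : Euc d) : gtr d p q n z ≤ n := by
  by_cases hz : z = 0
  · simp [gtr, hz]
  · rw [gtr, if_neg hz]; exact min_le_right _ _

/-- far away, gtr = n -/
lemma gtr_far (hq1 : 0 < q) (hp2 : p < 0) (n : ℕ) {z : Euc d}
    (hz : ((n : ℝ) * q) ^ q⁻¹ ≤ ‖z‖) (hz0 : z ≠ 0) : gtr d p q n z = n := by
  have hnorm : 0 < ‖z‖ := norm_pos_iff.mpr hz0
  have h1 : (n : ℝ) * q ≤ ‖z‖ ^ q := by
    calc (n : ℝ) * q = (((n : ℝ) * q) ^ (q⁻¹:ℝ)) ^ q := by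
          rw [← Real.rpow_mul (by positivity), inv_mul_cancel₀ (ne_of_gt hq1), Real.rpow_one]
      _ ≤ ‖z‖ ^ q := Real.rpow_le_rpow (by positivity) hz hq1.le
  have h2 : (n : ℝ) ≤ ‖z‖ ^ q / q := (le_div_iff₀ hq1).mpr h1
  have h3 : (n:ℝ) ≤ ‖z‖ ^ q / q + ‖z‖ ^ p / (-p) := by
    have : (0:ℝ) ≤ ‖z‖ ^ p / (-p) := by
      have : (0:ℝ) < -p := by linarith
      positivity
    linarith
  rw [gtr, if_neg hz0, min_eq_right h3]

/-- near 0, gtr = n -/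
lemma gtr_near (hq1 : 0 < q) (hp2 : p < 0) (n : ℕ) {z : Euc d}
    (hz : ‖z‖ ≤ ((n : ℝ) * (-p)) ^ (p⁻¹:ℝ)) (hz0 : z ≠ 0) (hn : 0 < n) :
    gtr d p q n z = n := by
  have hp' : (0:ℝ) < -p := by linarith
  have hn' : (0:ℝ) < (n:ℝ) := by exact_mod_cast hn
  have hnp : (0:ℝ) < (n : ℝ) * (-p) := by positivity
  have hnorm : 0 < ‖z‖ := norm_pos_iff.mpr hz0
  have h1 : ((n : ℝ) * (-p)) ≤ ‖z‖ ^ p := by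
    calc ((n:ℝ) * (-p)) = ((((n:ℝ) * (-p)) ^ (p⁻¹ : ℝ)) : ℝ) ^ p := by
          rw [← Real.rpow_mul hnp.le, inv_mul_cancel₀ (ne_of_lt hp2), Real.rpow_one]
      _ ≤ ‖z‖ ^ p := Real.rpow_le_rpow_of_nonpos hnorm hz hp2.le
  have h2 : (n : ℝ) ≤ ‖z‖ ^ p / (-p) := by
    rw [le_div_iff₀ hp']; linarith
  have h3 : (n:ℝ) ≤ ‖z‖ ^ q / q + ‖z‖ ^ p / (-p) := by
    have : (0:ℝ) ≤ ‖z‖ ^ q / q := by positivity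
    linarith
  rw [gtr, if_neg hz0, min_eq_right h3]

lemma continuous_gtr (hq1 : 0 < q) (hp2 : p < 0) (n : ℕ) : Continuous (gtr d p q n) := by
  rcases Nat.eq_zero_or_pos n with hn | hn
  · subst hn
    have : gtr d p q 0 = fun _ => (0:ℝ) := by
      funext z
      by_cases hz : z = 0
      · simp [gtr, hz]
      · rw [gtr, if_neg hz]
        simp only [Nat.cast_zero]
        exact min_eq_right (kfun_nonneg hq1 hp2 z)
    rw [this]; exact continuous_const
  rw [continuous_iff_continuousAt]
  intro z
  by_cases hz : z = 0
  · subst hz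
    have hp' : (0:ℝ) < -p := by linarith
    have hn' : (0:ℝ) < (n:ℝ) := by exact_mod_cast hn
    have hr : (0:ℝ) < ((n : ℝ) * (-p)) ^ (p⁻¹ : ℝ) := by positivity
    have hev : ∀ᶠ w in 𝓝 (0 : Euc d), gtr d p q n w = n := by
      filter_upwards [Metric.ball_mem_nhds (0 : Euc d) hr] with w hw
      by_cases hw0 : w = 0
      · simp [gtr, hw0]
      · exact gtr_near hq1 hp2 n ((mem_ball_zero_iff.mp hw).le) hw0 hn
    exact ContinuousAt.congr continuousAt_const (by filter_upwards [hev] with w hw using hw.symm)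
  · have hev : ∀ᶠ w in 𝓝 z, gtr d p q n w
        = min (‖w‖ ^ q / q + ‖w‖ ^ p / (-p)) n := by
      filter_upwards [IsOpen.mem_nhds isOpen_ne hz] with w hw
      rw [gtr, if_neg hw]
    apply ContinuousAt.congr _ (by filter_upwards [hev] with w hw using hw.symm)
    have hnz : ‖z‖ ≠ 0 := by simpa using hz
    have c1 : ContinuousAt (fun w : Euc d => ‖w‖ ^ q / q + ‖w‖ ^ p / (-p)) z := by
      apply ContinuousAt.add
      · exact ((Real.continuousAt_rpow_const _ _ (Or.inl hnz)).comp
          continuous_norm.continuousAt).div_const _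
      · exact ((Real.continuousAt_rpow_const _ _ (Or.inl hnz)).comp
          continuous_norm.continuousAt).div_const _
    exact (c1.min continuousAt_const)

lemma ofReal_gtr (hq1 : 0 < q) (hp2 : p < 0) (n : ℕ) (z : Euc d) :
    ENNReal.ofReal (gtr d p q n z) = min (KE d p q z) n := by
  by_cases hz : z = 0
  · subst hz
    have h0 : (‖(0 : Euc d)‖₊ : ℝ≥0∞) = 0 := by simp
    have : KE d p q 0 = ⊤ := by
      rw [KE]
      rw [h0, ENNReal.zero_rpow_of_pos hq1, ENNReal.zero_rpow_of_neg hp2]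
      rw [ENNReal.top_div_of_ne_top (by simp)]
      simp
    simp [gtr, this]
  · have hnorm : 0 < ‖z‖ := norm_pos_iff.mpr hz
    have hp' : (0:ℝ) < -p := by linarith
    have hq' : KE d p q z = ENNReal.ofReal (‖z‖ ^ q / q + ‖z‖ ^ p / (-p)) := by
      rw [KE, ENNReal.ofReal_add (by positivity) (by positivity)]
      congr 1
      · rw [ENNReal.ofReal_div_of_pos hq1, ← enorm_eq_nnnorm, ← ofReal_norm,
          ENNReal.ofReal_rpow_of_nonneg (norm_nonneg z) hq1.le]
      · rw [ENNReal.ofReal_div_of_pos hp', ← enorm_eq_nnnorm, ← ofReal_norm,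
          ENNReal.ofReal_rpow_of_pos hnorm]
    rw [hq']
    have hcast : (n : ℝ≥0∞) = ENNReal.ofReal (n : ℝ) := by simp
    rw [hcast, gtr, if_neg hz]
    rcases le_total (‖z‖ ^ q / q + ‖z‖ ^ p / (-p)) (n:ℝ) with h | h
    · rw [min_eq_left h, min_eq_left (ENNReal.ofReal_le_ofReal h)]
    · rw [min_eq_right h, min_eq_right (ENNReal.ofReal_le_ofReal h)]

lemma iSup_min_natCast (a : ℝ≥0∞) : ⨆ n : ℕ, min a (n : ℝ≥0∞) = a := by
  apply le_antisymm (iSup_le fun n => min_le_left _ _)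
  by_cases ha : a = ⊤
  · subst ha
    calc (⊤:ℝ≥0∞) = ⨆ n : ℕ, (n:ℝ≥0∞) := ENNReal.iSup_natCast.symm
      _ ≤ ⨆ n : ℕ, min (⊤:ℝ≥0∞) (n:ℝ≥0∞) := iSup_mono fun n => le_min le_top le_rfl
  · obtain ⟨n, hn⟩ := ENNReal.exists_nat_gt ha
    calc a = min a n := (min_eq_left hn.le).symm
      _ ≤ ⨆ n : ℕ, min a (n:ℝ≥0∞) := le_iSup (fun n : ℕ => min a (n:ℝ≥0∞)) n

lemma gtr_mono (hq1 : 0 < q) (hp2 : p < 0) {n m : ℕ} (h : n ≤ m) (z : Euc d) :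
    ENNReal.ofReal (gtr d p q n z) ≤ ENNReal.ofReal (gtr d p q m z) := by
  rw [ofReal_gtr hq1 hp2, ofReal_gtr hq1 hp2]
  exact min_le_min le_rfl (by exact_mod_cast h)

lemma uc_gtr (hq1 : 0 < q) (hp2 : p < 0) (n : ℕ) : UniformContinuous (gtr d p q n) := by
  have key : HasCompactSupport (fun z : Euc d => gtr d p q n z - n) := by
    apply HasCompactSupport.intro (isCompact_closedBall (0 : Euc d) (((n:ℝ)*q) ^ (q⁻¹:ℝ)))
    intro z hz
    simp only [mem_closedBall, dist_zero_right, not_le] at hz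
    have hz0 : z ≠ 0 := by
      intro h; rw [h] at hz; simp at hz
      have : (0:ℝ) ≤ ((n:ℝ)*q) ^ (q⁻¹:ℝ) := by positivity
      linarith
    rw [gtr_far hq1 hp2 n hz.le hz0]; ring
  have := key.uniformContinuous_of_continuous
    (((continuous_gtr hq1 hp2 n).sub continuous_const))
  have h2 : gtr d p q n = fun z => (gtr d p q n z - n) + n := by funext z; ring
  rw [h2]
  exact this.add uniformContinuous_const

end EMin

namespace EMin2

variable {d : ℕ}


/-- generic energy -/

lemma measurable_pair {K : Euc d → ℝ≥0∞} (hK : Measurable K) :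
    Measurable (Function.uncurry fun x y : Euc d => K (x - y)) :=
  hK.comp (measurable_fst.sub measurable_snd)

lemma measurable_inner {K : Euc d → ℝ≥0∞} (hK : Measurable K) (μ : Measure (Euc d))
    [SFinite μ] : Measurable fun x => ∫⁻ y, K (x - y) ∂μ :=
  Measurable.lintegral_prod_right (measurable_pair hK)

/-- monotone in K -/
lemma en_mono {K K' : Euc d → ℝ≥0∞} (h : ∀ z, K z ≤ K' z) (μ : Measure (Euc d)) :
    energyE d K μ ≤ energyE d K' μ :=
  lintegral_mono fun x => lintegral_mono fun y => h _

/-- monotone convergence representation -/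
lemma en_iSup {Kn : ℕ → Euc d → ℝ≥0∞} (hm : ∀ n, Measurable (Kn n))
    (hmono : ∀ z, Monotone (fun n => Kn n z)) (μ : Measure (Euc d)) [SFinite μ] :
    energyE d (fun z => ⨆ n, Kn n z) μ = ⨆ n, energyE d (Kn n) μ := by
  have inner : ∀ x, ∫⁻ y, (⨆ n, Kn n (x - y)) ∂μ = ⨆ n, ∫⁻ y, Kn n (x - y) ∂μ := by
    intro x
    apply lintegral_iSup
    · exact fun n => (hm n).comp (measurable_const.sub measurable_id)
    · intro n m hnm y; exact hmono _ hnm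
  simp only [energyE]
  calc ∫⁻ x, ∫⁻ y, (⨆ n, Kn n (x - y)) ∂μ ∂μ
      = ∫⁻ x, ⨆ n, ∫⁻ y, Kn n (x - y) ∂μ ∂μ := by
        exact lintegral_congr inner
    _ = ⨆ n, ∫⁻ x, ∫⁻ y, Kn n (x - y) ∂μ ∂μ := by
        apply lintegral_iSup
        · exact fun n => measurable_inner (hm n) μ
        · intro n m hnm x
          exact lintegral_mono fun y => hmono _ hnm
    _ = ⨆ n, energyE d (Kn n) μ := rfl

/-- translation invariance -/
lemma en_translate {K : Euc d → ℝ≥0∞} (hK : Measurable K) (μ : Measure (Euc d))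
    [SFinite μ] (v : Euc d) : energyE d K (Measure.map (fun x => x + v) μ) = energyE d K μ := by
  have hmv : Measurable (fun x : Euc d => x + v) := by fun_prop
  simp only [energyE]
  rw [lintegral_map (by
    exact Measurable.lintegral_prod_right
      (ν := Measure.map (fun x => x + v) μ) (measurable_pair hK)) hmv]
  apply lintegral_congr
  intro x
  rw [lintegral_map (show Measurable fun y : Euc d => K (x + v - y) from
    hK.comp ((measurable_const.sub measurable_id))) hmv]
  apply lintegral_congr
  intro y
  congr 1
  abel

end EMin2

namespace Cpt

variable {d : ℕ}


noncomputable def es (d : ℕ) : ℕ → Euc d := TopologicalSpace.denseSeq (Euc d)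

abbrev Idx : Type := Finset (ℕ × ℚ)

noncomputable def HS (d : ℕ) (F : Idx) : Set (Euc d) :=
  ⋃ z ∈ F, closedBall (es d z.1) (z.2 : ℝ)

lemma isCompact_HS (F : Idx) : IsCompact (HS d F) :=
  F.finite_toSet.isCompact_biUnion fun z _ => isCompact_closedBall _ _

lemma isClosed_HS (F : Idx) : IsClosed (HS d F) := (isCompact_HS F).isClosed

lemma measurableSet_HS (F : Idx) : MeasurableSet (HS d F) := (isClosed_HS F).measurableSet

lemma HS_union (F₁ F₂ : Idx) : HS d (F₁ ∪ F₂) = HS d F₁ ∪ HS d F₂ :=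
  Finset.set_biUnion_union F₁ F₂ _

lemma HS_empty : HS d (∅ : Idx) = ∅ := by simp [HS]

lemma rat_ball {x : Euc d} {G : Set (Euc d)} (hG : IsOpen G) (hx : x ∈ G) :
    ∃ nr : ℕ × ℚ, x ∈ ball (es d nr.1) (nr.2 : ℝ) ∧ closedBall (es d nr.1) (nr.2 : ℝ) ⊆ G := by
  obtain ⟨ρ, hρpos, hball⟩ := Metric.isOpen_iff.mp hG x hx
  have hd : DenseRange (es d) := TopologicalSpace.denseRange_denseSeq (Euc d)
  obtain ⟨n, hn⟩ := hd.exists_dist_lt x (by positivity : (0:ℝ) < ρ/4)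
  obtain ⟨r, hr1, hr2⟩ := exists_rat_btwn (by linarith : ρ/4 < ρ/2)
  refine ⟨(n, r), ?_, ?_⟩
  · rw [mem_ball]
    calc dist x (es d n) < ρ/4 := hn
      _ < r := hr1
  · intro y hy
    apply hball
    rw [mem_ball]
    calc dist y x ≤ dist y (es d n) + dist (es d n) x := dist_triangle _ _ _
      _ ≤ (r : ℝ) + ρ/4 := add_le_add (mem_closedBall.mp hy) (by rw [dist_comm]; exact hn.le)
      _ < ρ/2 + ρ/4 := by linarith
      _ < ρ := by linarith

lemma split {A G₁ G₂ : Set (Euc d)} (hA : IsCompact A) (h1 : IsOpen G₁) (h2 : IsOpen G₂)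
    (hsub : A ⊆ G₁ ∪ G₂) :
    ∃ F₁ F₂ : Idx, HS d F₁ ⊆ G₁ ∧ HS d F₂ ⊆ G₂ ∧ A ⊆ HS d F₁ ∪ HS d F₂ := by
  have hx : ∀ x : A, ∃ nr : ℕ × ℚ, (x : Euc d) ∈ ball (es d nr.1) (nr.2 : ℝ) ∧
      (closedBall (es d nr.1) (nr.2 : ℝ) ⊆ G₁ ∨ closedBall (es d nr.1) (nr.2 : ℝ) ⊆ G₂) := by
    intro x
    rcases hsub x.2 with h | h
    · obtain ⟨nr, h1', h2'⟩ := rat_ball h1 h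
      exact ⟨nr, h1', Or.inl h2'⟩
    · obtain ⟨nr, h1', h2'⟩ := rat_ball h2 h
      exact ⟨nr, h1', Or.inr h2'⟩
  choose nr hball hsub2 using hx
  obtain ⟨t, ht⟩ := hA.elim_finite_subcover
    (fun x : A => ball (es d (nr x).1) ((nr x).2 : ℝ))
    (fun x => isOpen_ball)
    (fun y hy => Set.mem_iUnion.mpr ⟨⟨y, hy⟩, hball ⟨y, hy⟩⟩)
  refine ⟨(t.filter fun x => closedBall (es d (nr x).1) ((nr x).2 : ℝ) ⊆ G₁).image nr,
    (t.filter fun x => ¬ closedBall (es d (nr x).1) ((nr x).2 : ℝ) ⊆ G₁).image nr, ?_, ?_, ?_⟩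
  · intro y hy
    simp only [HS, Set.mem_iUnion] at hy
    obtain ⟨z, hz, hyz⟩ := hy
    obtain ⟨x, hx', rfl⟩ := Finset.mem_image.mp hz
    exact (Finset.mem_filter.mp hx').2 hyz
  · intro y hy
    simp only [HS, Set.mem_iUnion] at hy
    obtain ⟨z, hz, hyz⟩ := hy
    obtain ⟨x, hx', rfl⟩ := Finset.mem_image.mp hz
    rcases hsub2 x with h | h
    · exact absurd h (Finset.mem_filter.mp hx').2
    · exact h hyz
  · intro y hy
    obtain ⟨x, hxt, hyx⟩ := Set.mem_iUnion₂.mp (ht hy)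
    by_cases hc : closedBall (es d (nr x).1) ((nr x).2 : ℝ) ⊆ G₁
    · left
      apply Set.mem_biUnion (Finset.mem_image_of_mem nr (Finset.mem_filter.mpr ⟨hxt, hc⟩))
      exact ball_subset_closedBall hyx
    · right
      apply Set.mem_biUnion (Finset.mem_image_of_mem nr (Finset.mem_filter.mpr ⟨hxt, hc⟩))
      exact ball_subset_closedBall hyx

/-- single-set version -/
lemma engulf {A G : Set (Euc d)} (hA : IsCompact A) (hG : IsOpen G) (hsub : A ⊆ G) :
    ∃ F : Idx, HS d F ⊆ G ∧ A ⊆ HS d F := by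
  obtain ⟨F₁, F₂, hF1, hF2, hcov⟩ := split hA hG isOpen_empty (by simpa using hsub)
  refine ⟨F₁, hF1, ?_⟩
  intro y hy
  rcases hcov hy with h | h
  · exact h
  · exact absurd (hF2 h) (Set.notMem_empty y)

theorem exists_limit_measure (μs : ℕ → Measure (Euc d))
    (hprob : ∀ k, IsProbabilityMeasure (μs k))
    (ht : ∀ ε : ℝ, 0 < ε → ∃ R : ℝ, ∀ k, μs k (closedBall 0 R)ᶜ ≤ ENNReal.ofReal ε) :
    ∃ (μ₀ : Measure (Euc d)) (φ : ℕ → ℕ), StrictMono φ ∧ IsProbabilityMeasure μ₀ ∧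
      (∀ G : Set (Euc d), IsOpen G → μ₀ G ≤ atTop.liminf fun k => μs (φ k) G) := by
  -- diagonal subsequence via compactness of [0,1]^Idx
  set u : ℕ → (Idx → ℝ) := fun k i => (μs k (HS d i)).toReal with hu
  have hmem : ∀ k, u k ∈ Set.univ.pi (fun _ : Idx => Set.Icc (0:ℝ) 1) := by
    intro k
    rw [Set.mem_univ_pi]
    intro i
    refine ⟨ENNReal.toReal_nonneg, ?_⟩
    have h1 := prob_le_one (μ := μs k) (s := HS d i)
    calc (μs k (HS d i)).toReal ≤ (1:ℝ≥0∞).toReal := ENNReal.toReal_mono ENNReal.one_ne_top h1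
      _ = 1 := ENNReal.toReal_one
  obtain ⟨L, hLmem, φ, hφ, hconv⟩ :=
    (isCompact_univ_pi fun _ : Idx => isCompact_Icc).tendsto_subseq hmem
  have hpt : ∀ i : Idx, Tendsto (fun k => u (φ k) i) atTop (𝓝 (L i)) :=
    fun i => (tendsto_pi_nhds.mp hconv) i
  set α : Idx → ℝ≥0∞ := fun i => ENNReal.ofReal (L i) with hα
  have htend : ∀ i : Idx, Tendsto (fun k => μs (φ k) (HS d i)) atTop (𝓝 (α i)) := by
    intro i
    have h1 : ∀ k, μs (φ k) (HS d i) = ENNReal.ofReal (u (φ k) i) := by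
      intro k
      rw [hu]
      exact (ENNReal.ofReal_toReal (measure_ne_top _ _)).symm
    simp_rw [h1]
    exact (ENNReal.continuous_ofReal.tendsto _).comp (hpt i)
  have α_le_one : ∀ i, α i ≤ 1 := by
    intro i
    exact ENNReal.ofReal_le_one.mpr ((Set.mem_univ_pi.mp hLmem i).2)
  have α_subadd : ∀ i i₁ i₂ : Idx, HS d i ⊆ HS d i₁ ∪ HS d i₂ → α i ≤ α i₁ + α i₂ := by
    intro i i₁ i₂ h
    refine le_of_tendsto_of_tendsto' (htend i) ((htend i₁).add (htend i₂)) fun k => ?_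
    exact (measure_mono h).trans (measure_union_le _ _)
  have α_add : ∀ i₁ i₂ : Idx, Disjoint (HS d i₁) (HS d i₂) → α (i₁ ∪ i₂) = α i₁ + α i₂ := by
    intro i₁ i₂ hdis
    refine tendsto_nhds_unique (htend (i₁ ∪ i₂)) ?_
    have : ∀ k, μs (φ k) (HS d (i₁ ∪ i₂)) = μs (φ k) (HS d i₁) + μs (φ k) (HS d i₂) := by
      intro k
      rw [HS_union, measure_union (hdis) (measurableSet_HS i₂)]
    simp_rw [this]
    exact (htend i₁).add (htend i₂)
  -- S on open sets
  set S : Set (Euc d) → ℝ≥0∞ := fun G => ⨆ i : {i : Idx // HS d i ⊆ G}, α i with hS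
  have hne : ∀ G : Set (Euc d), Nonempty {i : Idx // HS d i ⊆ G} :=
    fun G => ⟨⟨∅, by rw [HS_empty]; exact Set.empty_subset G⟩⟩
  have α_le_S : ∀ {i : Idx} {G : Set (Euc d)}, HS d i ⊆ G → α i ≤ S G := by
    intro i G h
    exact le_iSup (fun j : {i : Idx // HS d i ⊆ G} => α (j : Idx)) ⟨i, h⟩
  have S_le_one : ∀ G, S G ≤ 1 := fun G => iSup_le fun i => α_le_one i
  have S_ne_top : ∀ G, S G ≠ ⊤ := fun G => ((S_le_one G).trans_lt ENNReal.one_lt_top).ne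
  have S_le_liminf : ∀ G : Set (Euc d), S G ≤ atTop.liminf fun k => μs (φ k) G := by
    intro G
    apply iSup_le
    rintro ⟨i, hi⟩
    have h1 : α i = atTop.liminf (fun k => μs (φ k) (HS d i)) := ((htend i).liminf_eq).symm
    rw [h1]
    exact liminf_le_liminf (Eventually.of_forall fun k => measure_mono hi)
  have S_union_le : ∀ {G₁ G₂ : Set (Euc d)}, IsOpen G₁ → IsOpen G₂ →
      S (G₁ ∪ G₂) ≤ S G₁ + S G₂ := by
    intro G₁ G₂ h1 h2
    apply iSup_le
    rintro ⟨i, hi⟩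
    obtain ⟨F₁, F₂, hF1, hF2, hcov⟩ := split (isCompact_HS i) h1 h2 hi
    calc α i ≤ α F₁ + α F₂ := α_subadd i F₁ F₂ hcov
      _ ≤ S G₁ + S G₂ := add_le_add (α_le_S hF1) (α_le_S hF2)
  -- Λ on compacts
  set Λ : Compacts (Euc d) → ℝ≥0∞ :=
    fun K => ⨅ G : {G : Set (Euc d) // IsOpen G ∧ (K : Set (Euc d)) ⊆ G}, S G with hΛ
  have hneΛ : ∀ K : Compacts (Euc d), Nonempty {G : Set (Euc d) // IsOpen G ∧ (K : Set (Euc d)) ⊆ G} :=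
    fun K => ⟨⟨Set.univ, isOpen_univ, Set.subset_univ _⟩⟩
  have Λ_le : ∀ (K : Compacts (Euc d)) {G : Set (Euc d)} (hGo : IsOpen G)
      (hKG : (K : Set (Euc d)) ⊆ G), Λ K ≤ S G := by
    intro K G hGo hKG
    exact iInf_le (fun G : {G : Set (Euc d) // IsOpen G ∧ (K : Set (Euc d)) ⊆ G} => S G)
      ⟨G, hGo, hKG⟩
  have Λ_le_one : ∀ K, Λ K ≤ 1 := by
    intro K
    exact (Λ_le K isOpen_univ (Set.subset_univ _)).trans (S_le_one _)
  have Λ_ne_top : ∀ K, Λ K ≠ ⊤ := fun K => ((Λ_le_one K).trans_lt ENNReal.one_lt_top).ne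
  have Λ_mono : ∀ K₁ K₂ : Compacts (Euc d), (K₁ : Set (Euc d)) ⊆ K₂ → Λ K₁ ≤ Λ K₂ := by
    intro K₁ K₂ h
    apply le_iInf
    rintro ⟨G, hGo, hKG⟩
    exact Λ_le K₁ hGo (h.trans hKG)
  have Λ_sup_le : ∀ K₁ K₂ : Compacts (Euc d), Λ (K₁ ⊔ K₂) ≤ Λ K₁ + Λ K₂ := by
    intro K₁ K₂
    have : Λ K₁ + Λ K₂ = ⨅ G₁ : {G : Set (Euc d) // IsOpen G ∧ (K₁ : Set (Euc d)) ⊆ G},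
        ⨅ G₂ : {G : Set (Euc d) // IsOpen G ∧ (K₂ : Set (Euc d)) ⊆ G}, (S G₁ + S G₂) := by
      rw [hΛ]
      rw [ENNReal.iInf_add]
      apply iInf_congr
      intro G₁
      rw [ENNReal.add_iInf]
    rw [this]
    apply le_iInf
    rintro ⟨G₁, h1o, h1s⟩
    apply le_iInf
    rintro ⟨G₂, h2o, h2s⟩
    refine (Λ_le (K₁ ⊔ K₂) (h1o.union h2o) ?_).trans (S_union_le h1o h2o)
    rw [Compacts.coe_sup]
    exact Set.union_subset_union h1s h2s
  have Λ_sup_disjoint : ∀ K₁ K₂ : Compacts (Euc d), Disjoint (K₁ : Set (Euc d)) K₂ →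
      Λ K₁ + Λ K₂ ≤ Λ (K₁ ⊔ K₂) := by
    intro K₁ K₂ hdis
    obtain ⟨δ, hδpos, hdisW⟩ := hdis.exists_thickenings K₁.2 K₂.2.isClosed
    apply le_iInf
    rintro ⟨G, hGo, hKG⟩
    have hsub1 : (K₁ : Set (Euc d)) ⊆ G ∩ thickening δ K₁ :=
      Set.subset_inter (fun x hx => hKG (by rw [Compacts.coe_sup]; exact Or.inl hx))
        (self_subset_thickening hδpos _)
    have hsub2 : (K₂ : Set (Euc d)) ⊆ G ∩ thickening δ K₂ :=
      Set.subset_inter (fun x hx => hKG (by rw [Compacts.coe_sup]; exact Or.inr hx))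
        (self_subset_thickening hδpos _)
    have key : S (G ∩ thickening δ K₁) + S (G ∩ thickening δ K₂) ≤ S G := by
      rw [hS]
      haveI := hne (G ∩ thickening δ (K₁ : Set (Euc d)))
      haveI := hne (G ∩ thickening δ (K₂ : Set (Euc d)))
      rw [ENNReal.iSup_add]
      apply iSup_le
      rintro ⟨i₁, hi₁⟩
      rw [ENNReal.add_iSup]
      apply iSup_le
      rintro ⟨i₂, hi₂⟩
      have hd12 : Disjoint (HS d i₁) (HS d i₂) :=
        hdisW.mono (hi₁.trans Set.inter_subset_right) (hi₂.trans Set.inter_subset_right)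
      rw [← α_add i₁ i₂ hd12]
      apply α_le_S
      rw [HS_union]
      exact Set.union_subset (hi₁.trans Set.inter_subset_left)
        (hi₂.trans Set.inter_subset_left)
    calc Λ K₁ + Λ K₂
        ≤ S (G ∩ thickening δ K₁) + S (G ∩ thickening δ K₂) :=
          add_le_add (Λ_le K₁ (hGo.inter isOpen_thickening) hsub1)
            (Λ_le K₂ (hGo.inter isOpen_thickening) hsub2)
      _ ≤ S G := key
  -- the content
  set C : Content (Euc d) :=
    { toFun := fun K => (Λ K).toNNReal
      mono' := fun K₁ K₂ h => by
        exact_mod_cast ENNReal.toNNReal_mono (Λ_ne_top K₂) (Λ_mono K₁ K₂ h)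
      sup_disjoint' := by
        intro K₁ K₂ h _ _
        have heq : Λ (K₁ ⊔ K₂) = Λ K₁ + Λ K₂ :=
          le_antisymm (Λ_sup_le K₁ K₂) (Λ_sup_disjoint K₁ K₂ h)
        show (Λ (K₁ ⊔ K₂)).toNNReal = (Λ K₁).toNNReal + (Λ K₂).toNNReal
        rw [heq]
        exact ENNReal.toNNReal_add (Λ_ne_top K₁) (Λ_ne_top K₂)
      sup_le' := fun K₁ K₂ => by
        have h1 : Λ (K₁ ⊔ K₂) ≤ Λ K₁ + Λ K₂ := Λ_sup_le K₁ K₂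
        have := ENNReal.toNNReal_mono (by
          exact ENNReal.add_ne_top.mpr ⟨Λ_ne_top K₁, Λ_ne_top K₂⟩) h1
        rw [ENNReal.toNNReal_add (Λ_ne_top K₁) (Λ_ne_top K₂)] at this
        exact_mod_cast this } with hC
  have hCcoe : ∀ K : Compacts (Euc d), (C K : ℝ≥0∞) = Λ K := by
    intro K
    show ((Λ K).toNNReal : ℝ≥0∞) = Λ K
    exact ENNReal.coe_toNNReal (Λ_ne_top K)
  set M : Measure (Euc d) := C.measure with hM
  -- open liminf property
  have M_open : ∀ G : Set (Euc d), IsOpen G → M G ≤ atTop.liminf fun k => μs (φ k) G := by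
    intro G hGo
    rw [hM, Content.measure_apply _ hGo.measurableSet,
      C.outerMeasure_of_isOpen G hGo, Content.innerContent]
    apply iSup₂_le
    intro K hK
    rw [hCcoe]
    exact (Λ_le K hGo hK).trans (S_le_liminf G)
  -- probability
  have M_le_one : M Set.univ ≤ 1 := by
    rw [hM, Content.measure_apply _ MeasurableSet.univ,
      C.outerMeasure_of_isOpen Set.univ isOpen_univ, Content.innerContent]
    apply iSup₂_le
    intro K _
    rw [hCcoe]
    exact Λ_le_one K
  have M_univ : M Set.univ = 1 := by
    refine le_antisymm M_le_one ?_
    apply ENNReal.le_of_forall_pos_le_add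
    intro ε hεpos hlt
    obtain ⟨R, hR⟩ := ht ε (by exact_mod_cast hεpos)
    set K : Compacts (Euc d) := ⟨closedBall 0 R, isCompact_closedBall 0 R⟩ with hK
    have hΛK : 1 ≤ Λ K + ε := by
      have h0 : (1:ℝ≥0∞) ≤ ⨅ G : {G : Set (Euc d) // IsOpen G ∧ (K : Set (Euc d)) ⊆ G},
          (S G + ε) := by
        apply le_iInf
        rintro ⟨G, hGo, hKG⟩
        obtain ⟨F, hFG, hKF⟩ := engulf K.2 hGo hKG
        have hk : ∀ k, (1:ℝ≥0∞) ≤ μs (φ k) (HS d F) + ε := by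
          intro k
          haveI := hprob (φ k)
          have h1 : (1:ℝ≥0∞) = μs (φ k) (closedBall (0 : Euc d) R)
              + μs (φ k) (closedBall (0 : Euc d) R)ᶜ := by
            rw [measure_add_measure_compl measurableSet_closedBall, measure_univ]
          rw [h1]
          apply add_le_add
          · exact measure_mono hKF
          · calc μs (φ k) (closedBall (0 : Euc d) R)ᶜ ≤ ENNReal.ofReal ε := hR (φ k)
              _ ≤ ε := by rw [ENNReal.ofReal_coe_nnreal]
        have hlim : Tendsto (fun k => μs (φ k) (HS d F) + (ε : ℝ≥0∞)) atTop
            (𝓝 (α F + ε)) := (htend F).add tendsto_const_nhds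
        exact le_trans (ge_of_tendsto' hlim hk) (add_le_add (α_le_S hFG) le_rfl)
      calc (1:ℝ≥0∞) ≤ ⨅ G : {G : Set (Euc d) // IsOpen G ∧ (K : Set (Euc d)) ⊆ G},
          (S G + ε) := h0
        _ = Λ K + ε := by rw [hΛ, ENNReal.iInf_add]
    have hMK : Λ K ≤ M Set.univ := by
      rw [hM, Content.measure_apply _ MeasurableSet.univ,
        C.outerMeasure_of_isOpen Set.univ isOpen_univ, Content.innerContent]
      rw [← hCcoe K]
      exact le_iSup₂ (f := fun (K : Compacts (Euc d))
        (_ : (K : Set (Euc d)) ⊆ (⟨Set.univ, isOpen_univ⟩ : Opens (Euc d))) => (C K : ℝ≥0∞))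
        K (Set.subset_univ _)
    exact hΛK.trans (add_le_add hMK le_rfl)
  exact ⟨M, φ, hφ, ⟨M_univ⟩, M_open⟩

end Cpt

namespace Cv

variable {d : ℕ}


/-- `x ↦ x - ·` as a continuous map -/
def shiftCM (x : Euc d) : C(Euc d, Euc d) :=
  ⟨fun y => x - y, continuous_const.sub continuous_id⟩

/-- convolution `∫ g(x-y) dν(y)` -/
noncomputable def conv (g : Euc d →ᵇ ℝ) (ν : Measure (Euc d)) (x : Euc d) : ℝ :=
  ∫ y, g (x - y) ∂ν

lemma conv_eq_integral_comp (g : Euc d →ᵇ ℝ) (ν : Measure (Euc d)) (x : Euc d) :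
    conv g ν x = ∫ y, (g.compContinuous (shiftCM x)) y ∂ν := by
  simp [conv, shiftCM]

lemma integrable_comp (g : Euc d →ᵇ ℝ) (ν : Measure (Euc d)) [IsFiniteMeasure ν] (x : Euc d) :
    Integrable (fun y => g (x - y)) ν := by
  have := (g.compContinuous (shiftCM x)).integrable ν
  simpa [shiftCM, Function.comp_def] using this

lemma abs_conv_le (g : Euc d →ᵇ ℝ) (ν : Measure (Euc d)) [IsProbabilityMeasure ν] (x : Euc d) :
    |conv g ν x| ≤ ‖g‖ := by
  rw [conv, ← Real.norm_eq_abs]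
  calc ‖∫ y, g (x - y) ∂ν‖ ≤ ‖g‖ * (ν Set.univ).toReal :=
      norm_integral_le_of_norm_le_const (Eventually.of_forall fun y => g.norm_coe_le_norm _)
    _ = ‖g‖ := by simp

lemma conv_dist_le (g : Euc d →ᵇ ℝ) {δ ε : ℝ} (hε : 0 ≤ ε)
    (hδ : ∀ a b : Euc d, dist a b < δ → dist (g a) (g b) ≤ ε)
    (ν : Measure (Euc d)) [IsProbabilityMeasure ν] {x x' : Euc d} (hxx : dist x x' < δ) :
    |conv g ν x - conv g ν x'| ≤ ε := by
  rw [conv, conv, ← integral_sub (integrable_comp g ν x) (integrable_comp g ν x'),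
    ← Real.norm_eq_abs]
  have hmain : ‖∫ y, (g (x - y) - g (x' - y)) ∂ν‖ ≤ ε * (ν Set.univ).toReal := by
    apply norm_integral_le_of_norm_le_const
    apply Eventually.of_forall
    intro y
    have h1 : dist (x - y) (x' - y) = dist x x' := dist_sub_right x x' y
    have := hδ (x - y) (x' - y) (by rw [h1]; exact hxx)
    simpa [Real.dist_eq, Real.norm_eq_abs] using this
  simpa using hmain

lemma continuous_conv (g : Euc d →ᵇ ℝ) (hgu : UniformContinuous ⇑g)
    (ν : Measure (Euc d)) [IsProbabilityMeasure ν] : Continuous (conv g ν) := by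
  rw [Metric.continuous_iff]
  intro x ε hε
  obtain ⟨δ, hδpos, hδ⟩ := Metric.uniformContinuous_iff.mp hgu (ε/2) (by linarith)
  refine ⟨δ, hδpos, fun x' hx' => ?_⟩
  have := conv_dist_le g (by linarith : (0:ℝ) ≤ ε/2) (fun a b hab => (hδ hab).le) ν
    (x := x') (x' := x) hx'
  rw [Real.dist_eq]
  linarith [this]

/-- conv as a bounded continuous function -/
noncomputable def convB (g : Euc d →ᵇ ℝ) (hgu : UniformContinuous ⇑g)
    (ν : Measure (Euc d)) [IsProbabilityMeasure ν] : Euc d →ᵇ ℝ :=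
  BoundedContinuousFunction.ofNormedAddCommGroup (conv g ν) (continuous_conv g hgu ν) ‖g‖
    (fun x => by rw [Real.norm_eq_abs]; exact abs_conv_le g ν x)

theorem conv_integral_tendsto (g : Euc d →ᵇ ℝ) (hgu : UniformContinuous ⇑g)
    (μk : ℕ → Measure (Euc d)) (hprob : ∀ k, IsProbabilityMeasure (μk k))
    (μ₀ : Measure (Euc d)) [hprob0 : IsProbabilityMeasure μ₀]
    (hw : ∀ f : Euc d →ᵇ ℝ, Tendsto (fun k => ∫ x, f x ∂(μk k)) atTop (𝓝 (∫ x, f x ∂μ₀)))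
    (ht : ∀ ε : ℝ, 0 < ε → ∃ R : ℝ, ∀ k, μk k (closedBall 0 R)ᶜ ≤ ENNReal.ofReal ε) :
    Tendsto (fun k => ∫ x, conv g (μk k) x ∂(μk k)) atTop (𝓝 (∫ x, conv g μ₀ x ∂μ₀)) := by
  haveI := hprob
  rw [Metric.tendsto_atTop]
  intro ε hε
  set C := ‖g‖ with hC
  have hC0 : 0 ≤ C := norm_nonneg g
  set ε' : ℝ := ε / (16 * (C + 1)) with hε'
  have hε'pos : 0 < ε' := by positivity
  -- tightness radius
  obtain ⟨R, hR⟩ := ht ε' hε'pos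
  -- modulus
  obtain ⟨δ, hδpos, hδ⟩ := Metric.uniformContinuous_iff.mp hgu ε' hε'pos
  have hδle : ∀ a b : Euc d, dist a b < δ → dist (g a) (g b) ≤ ε' := fun a b h => (hδ h).le
  -- finite net
  obtain ⟨t, htcov⟩ := (isCompact_closedBall (0 : Euc d) R).elim_finite_subcover
    (fun c : Euc d => ball c δ) (fun c => isOpen_ball)
    (fun x _ => Set.mem_iUnion.mpr ⟨x, mem_ball_self hδpos⟩)
  -- pointwise convergence at net points, eventually
  have hnet : ∀ᶠ k in atTop, ∀ c ∈ t, |conv g (μk k) c - conv g μ₀ c| ≤ ε' := by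
    rw [Filter.eventually_all_finset]
    intro c _
    have hcpt : Tendsto (fun k => conv g (μk k) c) atTop (𝓝 (conv g μ₀ c)) := by
      simp_rw [conv_eq_integral_comp]
      exact hw (g.compContinuous (shiftCM c))
    have := Metric.tendsto_atTop.mp hcpt ε' hε'pos
    obtain ⟨N, hN⟩ := this
    rw [Filter.eventually_atTop]
    exact ⟨N, fun k hk => by
      have := hN k hk
      rw [Real.dist_eq] at this
      exact this.le⟩
  -- weak convergence of ∫ F dμ_k
  have hFweak : ∀ᶠ k in atTop,
      |∫ x, conv g μ₀ x ∂(μk k) - ∫ x, conv g μ₀ x ∂μ₀| < ε / 2 := by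
    have := Metric.tendsto_atTop.mp (hw (convB g hgu μ₀)) (ε/2) (by linarith)
    obtain ⟨N, hN⟩ := this
    rw [Filter.eventually_atTop]
    refine ⟨N, fun k hk => ?_⟩
    have := hN k hk
    rw [Real.dist_eq] at this
    have hcoe : ∀ (ν : Measure (Euc d)),
        ∫ x, (convB g hgu μ₀) x ∂ν = ∫ x, conv g μ₀ x ∂ν := by
      intro ν; rfl
    rwa [hcoe, hcoe] at this
  rw [Filter.eventually_atTop] at hnet hFweak
  obtain ⟨N₁, hN₁⟩ := hnet
  obtain ⟨N₂, hN₂⟩ := hFweak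
  refine ⟨max N₁ N₂, fun k hk => ?_⟩
  haveI := hprob k
  -- uniform bound on the ball
  have hball : ∀ x ∈ closedBall (0 : Euc d) R,
      |conv g (μk k) x - conv g μ₀ x| ≤ 3 * ε' := by
    intro x hx
    obtain ⟨c, hct, hxc⟩ := Set.mem_iUnion₂.mp (htcov hx)
    have h1 : |conv g (μk k) x - conv g (μk k) c| ≤ ε' :=
      conv_dist_le g hε'pos.le hδle (μk k) (mem_ball.mp hxc)
    have h2 : |conv g (μk k) c - conv g μ₀ c| ≤ ε' := hN₁ k (le_trans (le_max_left _ _) hk) c hct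
    have h3 : |conv g μ₀ c - conv g μ₀ x| ≤ ε' := by
      have := conv_dist_le g hε'pos.le hδle μ₀ (x := c) (x' := x)
        (by rw [dist_comm]; exact mem_ball.mp hxc)
      exact this
    calc |conv g (μk k) x - conv g μ₀ x|
        = |(conv g (μk k) x - conv g (μk k) c) + (conv g (μk k) c - conv g μ₀ c)
            + (conv g μ₀ c - conv g μ₀ x)| := by ring_nf
      _ ≤ |conv g (μk k) x - conv g (μk k) c| + |conv g (μk k) c - conv g μ₀ c|
            + |conv g μ₀ c - conv g μ₀ x| := by
          exact (abs_add_three _ _ _)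
      _ ≤ ε' + ε' + ε' := by gcongr
      _ = 3 * ε' := by ring
  -- first term
  have hint1 : Integrable (fun x => conv g (μk k) x) (μk k) :=
    (convB g hgu (μk k)).integrable (μk k)
  have hint2 : Integrable (fun x => conv g μ₀ x) (μk k) :=
    (convB g hgu μ₀).integrable (μk k)
  have hdiff : Integrable (fun x => conv g (μk k) x - conv g μ₀ x) (μk k) := hint1.sub hint2
  have hsplit : |∫ x, (conv g (μk k) x - conv g μ₀ x) ∂(μk k)| ≤ 3 * ε' + 2 * C * ε' := by
    rw [← integral_add_compl (measurableSet_closedBall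
      (x := (0:Euc d)) (ε := R)) hdiff, ← Real.norm_eq_abs]
    have hB : ‖∫ x in closedBall (0:Euc d) R, (conv g (μk k) x - conv g μ₀ x) ∂(μk k)‖
        ≤ (3 * ε') * ((μk k) (closedBall (0:Euc d) R)).toReal := by
      apply norm_setIntegral_le_of_norm_le_const (measure_lt_top _ _)
      · intro x hx
        rw [Real.norm_eq_abs]
        exact hball x hx
    have hBc : ‖∫ x in (closedBall (0:Euc d) R)ᶜ, (conv g (μk k) x - conv g μ₀ x) ∂(μk k)‖
        ≤ (2 * C) * ((μk k) (closedBall (0:Euc d) R)ᶜ).toReal := by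
      apply norm_setIntegral_le_of_norm_le_const (measure_lt_top _ _)
      · intro x _
        rw [Real.norm_eq_abs]
        calc |conv g (μk k) x - conv g μ₀ x| ≤ |conv g (μk k) x| + |conv g μ₀ x| := abs_sub _ _
          _ ≤ C + C := add_le_add (abs_conv_le g (μk k) x) (abs_conv_le g μ₀ x)
          _ = 2 * C := by ring
    have hμB : ((μk k) (closedBall (0:Euc d) R)).toReal ≤ 1 := by
      have := prob_le_one (μ := μk k) (s := closedBall (0:Euc d) R)
      calc ((μk k) (closedBall (0:Euc d) R)).toReal ≤ (1:ℝ≥0∞).toReal :=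
          ENNReal.toReal_mono ENNReal.one_ne_top this
        _ = 1 := ENNReal.toReal_one
    have hμBc : ((μk k) (closedBall (0:Euc d) R)ᶜ).toReal ≤ ε' := by
      apply ENNReal.toReal_le_of_le_ofReal hε'pos.le (hR k)
    calc ‖∫ x in closedBall (0:Euc d) R, (conv g (μk k) x - conv g μ₀ x) ∂(μk k)
          + ∫ x in (closedBall (0:Euc d) R)ᶜ, (conv g (μk k) x - conv g μ₀ x) ∂(μk k)‖
        ≤ ‖∫ x in closedBall (0:Euc d) R, (conv g (μk k) x - conv g μ₀ x) ∂(μk k)‖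
          + ‖∫ x in (closedBall (0:Euc d) R)ᶜ, (conv g (μk k) x - conv g μ₀ x) ∂(μk k)‖ :=
          norm_add_le _ _
      _ ≤ (3 * ε') * ((μk k) (closedBall (0:Euc d) R)).toReal
          + (2 * C) * ((μk k) (closedBall (0:Euc d) R)ᶜ).toReal := add_le_add hB hBc
      _ ≤ (3 * ε') * 1 + (2 * C) * ε' := by
          apply add_le_add
          · exact mul_le_mul_of_nonneg_left hμB (by positivity)
          · exact mul_le_mul_of_nonneg_left hμBc (by positivity)
      _ = 3 * ε' + 2 * C * ε' := by ring
  -- assemble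
  rw [Real.dist_eq]
  have key : ∫ x, conv g (μk k) x ∂(μk k) - ∫ x, conv g μ₀ x ∂μ₀
      = (∫ x, (conv g (μk k) x - conv g μ₀ x) ∂(μk k))
        + (∫ x, conv g μ₀ x ∂(μk k) - ∫ x, conv g μ₀ x ∂μ₀) := by
    rw [integral_sub hint1 hint2]
    ring
  rw [key]
  have h2 := hN₂ k (le_trans (le_max_right _ _) hk)
  calc |(∫ x, (conv g (μk k) x - conv g μ₀ x) ∂(μk k))
        + (∫ x, conv g μ₀ x ∂(μk k) - ∫ x, conv g μ₀ x ∂μ₀)|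
      ≤ |∫ x, (conv g (μk k) x - conv g μ₀ x) ∂(μk k)|
        + |∫ x, conv g μ₀ x ∂(μk k) - ∫ x, conv g μ₀ x ∂μ₀| := abs_add_le _ _
    _ < (3 * ε' + 2 * C * ε') + ε / 2 := by
        apply add_lt_add_of_le_of_lt hsplit h2
    _ ≤ ε := by
        have hfr : (3 + 2*C) / (16*(C+1)) ≤ 1/2 := by
          rw [div_le_div_iff₀ (by positivity) (by norm_num)]
          nlinarith
        have h3 : (3 + 2*C) * ε' ≤ ε / 2 := by
          rw [hε']
          calc (3 + 2*C) * (ε / (16 * (C + 1))) = ((3+2*C)/(16*(C+1))) * ε := by ring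
            _ ≤ (1/2) * ε := mul_le_mul_of_nonneg_right hfr hε.le
            _ = ε / 2 := by ring
        nlinarith [h3]
  -- done

end Cv

namespace EMin5

variable {d : ℕ} {p q : ℝ}



-- from part1:
lemma KE_ge (hq1 : 0 < q) {R : ℝ} (hR : 0 ≤ R) {z : Euc d} (hz : R ≤ ‖z‖) :
    ENNReal.ofReal (R ^ q / q) ≤ KE d p q z := by
  have h1 : ENNReal.ofReal (R ^ q / q) ≤ (‖z‖₊ : ℝ≥0∞) ^ q / ENNReal.ofReal q := by
    rw [ENNReal.ofReal_div_of_pos hq1, ← enorm_eq_nnnorm, ← ofReal_norm,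
      ENNReal.ofReal_rpow_of_nonneg (norm_nonneg z) hq1.le]
    gcongr
  exact le_trans h1 (le_add_of_nonneg_right zero_le)

lemma measurable_far (x : Euc d) (R : ℝ) : MeasurableSet {y : Euc d | R ≤ dist x y} :=
  measurableSet_le measurable_const (measurable_const.dist measurable_id)

lemma double_mass_le (hq1 : 0 < q) (μ : Measure (Euc d)) {R : ℝ} (hR : 0 < R) :
    ∫⁻ x, μ {y | R ≤ dist x y} ∂μ ≤ energyE d (KE d p q) μ / ENNReal.ofReal (R ^ q / q) := by
  set c : ℝ≥0∞ := ENNReal.ofReal (R ^ q / q) with hc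
  have hcpos : c ≠ 0 := by
    rw [hc]
    simp only [ne_eq, ENNReal.ofReal_eq_zero, not_le]
    positivity
  have hcne : c ≠ ⊤ := ENNReal.ofReal_ne_top
  have hinner : ∀ x : Euc d, μ {y | R ≤ dist x y} ≤ (∫⁻ y, KE d p q (x - y) ∂μ) / c := by
    intro x
    rw [ENNReal.le_div_iff_mul_le (Or.inl hcpos) (Or.inl hcne)]
    calc μ {y | R ≤ dist x y} * c = ∫⁻ _ in {y | R ≤ dist x y}, c ∂μ := by
          rw [setLIntegral_const, mul_comm]
      _ ≤ ∫⁻ y in {y | R ≤ dist x y}, KE d p q (x - y) ∂μ := by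
          apply setLIntegral_mono' (measurable_far x R)
          intro y hy
          apply KE_ge hq1 hR.le
          rw [← dist_eq_norm]
          exact hy
      _ ≤ ∫⁻ y, KE d p q (x - y) ∂μ := setLIntegral_le_lintegral _ _
  calc ∫⁻ x, μ {y | R ≤ dist x y} ∂μ ≤ ∫⁻ x, (∫⁻ y, KE d p q (x - y) ∂μ) / c ∂μ :=
      lintegral_mono hinner
    _ = (∫⁻ x, (∫⁻ y, KE d p q (x - y) ∂μ) ∂μ) / c := by
        simp_rw [ENNReal.div_eq_inv_mul]
        rw [lintegral_const_mul' _ _ (ENNReal.inv_ne_top.mpr hcpos)]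
    _ = energyE d (KE d p q) μ / c := rfl

lemma exists_center (hq1 : 0 < q) (μ : Measure (Euc d)) [IsProbabilityMeasure μ]
    {R₀ : ℝ} (hR₀ : 0 < R₀)
    (hb : energyE d (KE d p q) μ / ENNReal.ofReal (R₀ ^ q / q) < 1/2) :
    ∃ z : Euc d, 1/2 ≤ μ (closedBall z R₀) := by
  by_contra hcon
  push_neg at hcon
  have hlow : ∀ x : Euc d, (1:ℝ≥0∞)/2 ≤ μ {y | R₀ ≤ dist x y} := by
    intro x
    have h1 : (closedBall x R₀)ᶜ ⊆ {y | R₀ ≤ dist x y} := by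
      intro y hy
      simp only [Set.mem_compl_iff, mem_closedBall, not_le] at hy
      rw [Set.mem_setOf_eq, dist_comm]
      exact hy.le
    have h2 : μ (closedBall x R₀)ᶜ = 1 - μ (closedBall x R₀) := by
      rw [measure_compl measurableSet_closedBall (measure_ne_top _ _), measure_univ]
    calc (1:ℝ≥0∞)/2 ≤ 1 - μ (closedBall x R₀) := by
          have := (hcon x).le
          apply ENNReal.le_sub_of_add_le_left (by simp)
          calc μ (closedBall x R₀) + 1/2 ≤ 1/2 + 1/2 := by
                exact add_le_add (hcon x).le le_rfl
            _ = 1 := ENNReal.add_halves 1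
      _ = μ (closedBall x R₀)ᶜ := h2.symm
      _ ≤ μ {y | R₀ ≤ dist x y} := measure_mono h1
  have : (1:ℝ≥0∞)/2 ≤ ∫⁻ x, μ {y | R₀ ≤ dist x y} ∂μ := by
    calc (1:ℝ≥0∞)/2 = ∫⁻ _, (1:ℝ≥0∞)/2 ∂μ := by simp
      _ ≤ ∫⁻ x, μ {y | R₀ ≤ dist x y} ∂μ := lintegral_mono hlow
  exact absurd (this.trans (double_mass_le hq1 μ hR₀)) (not_le.mpr hb)

lemma tail_bound (hq1 : 0 < q) (μ : Measure (Euc d)) [IsProbabilityMeasure μ]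
    {R₀ R : ℝ} (hR₀ : 0 < R₀) (hR : 0 < R)
    (hc : 1/2 ≤ μ (closedBall (0 : Euc d) R₀)) :
    μ (closedBall (0 : Euc d) (R₀ + R))ᶜ ≤ 2 * (energyE d (KE d p q) μ / ENNReal.ofReal (R ^ q / q)) := by
  have hlow : ∀ x : Euc d, x ∈ (closedBall (0 : Euc d) (R₀ + R))ᶜ →
      (1:ℝ≥0∞)/2 ≤ μ {y | R ≤ dist x y} := by
    intro x hx
    simp only [Set.mem_compl_iff, mem_closedBall, dist_zero_right, not_le] at hx
    refine le_trans hc (measure_mono ?_)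
    intro y hy
    simp only [mem_closedBall, dist_zero_right] at hy
    rw [Set.mem_setOf_eq, dist_eq_norm]
    calc R = (R₀ + R) - R₀ := by ring
      _ ≤ ‖x‖ - ‖y‖ := by
          apply sub_le_sub hx.le hy
      _ ≤ ‖x - y‖ := by
          have := norm_sub_norm_le x y
          linarith [this]
  have h1 : (1:ℝ≥0∞)/2 * μ (closedBall (0 : Euc d) (R₀ + R))ᶜ
      ≤ ∫⁻ x, μ {y | R ≤ dist x y} ∂μ := by
    calc (1:ℝ≥0∞)/2 * μ (closedBall (0 : Euc d) (R₀ + R))ᶜ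
        = ∫⁻ _ in (closedBall (0 : Euc d) (R₀ + R))ᶜ, (1:ℝ≥0∞)/2 ∂μ := by
          rw [setLIntegral_const]
      _ ≤ ∫⁻ x in (closedBall (0 : Euc d) (R₀ + R))ᶜ, μ {y | R ≤ dist x y} ∂μ := by
          apply setLIntegral_mono' measurableSet_closedBall.compl hlow
      _ ≤ ∫⁻ x, μ {y | R ≤ dist x y} ∂μ := setLIntegral_le_lintegral _ _
  have h2 := h1.trans (double_mass_le (p := p) hq1 μ hR)
  calc μ (closedBall (0 : Euc d) (R₀ + R))ᶜ
      = 2 * ((1:ℝ≥0∞)/2 * μ (closedBall (0 : Euc d) (R₀ + R))ᶜ) := by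
        rw [← mul_assoc, one_div, ENNReal.mul_inv_cancel two_ne_zero ENNReal.ofNat_ne_top, one_mul]
    _ ≤ 2 * (energyE d (KE d p q) μ / ENNReal.ofReal (R ^ q / q)) := by
        exact mul_le_mul_right h2 2
end EMin5

namespace EMin6

variable {d : ℕ} {p q : ℝ}



lemma measurable_KE : Measurable (KE d p q) := by
  apply Measurable.add
  · exact ((measurable_nnnorm.comp measurable_id).coe_nnreal_ennreal.pow_const q).div_const _
  · exact ((measurable_nnnorm.comp measurable_id).coe_nnreal_ennreal.pow_const p).div_const _

lemma KE_ge (hq1 : 0 < q) {R : ℝ} (hR : 0 ≤ R) {z : Euc d} (hz : R ≤ ‖z‖) :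
    ENNReal.ofReal (R ^ q / q) ≤ KE d p q z := by
  have h1 : ENNReal.ofReal (R ^ q / q) ≤ (‖z‖₊ : ℝ≥0∞) ^ q / ENNReal.ofReal q := by
    rw [ENNReal.ofReal_div_of_pos hq1, ← enorm_eq_nnnorm, ← ofReal_norm,
      ENNReal.ofReal_rpow_of_nonneg (norm_nonneg z) hq1.le]
    gcongr
  exact le_trans h1 (le_add_of_nonneg_right zero_le)

/-- second moment bounded if a.e. bounded support -/
lemma moment_lt_top_of_tail_zero (μ : Measure (Euc d)) [IsProbabilityMeasure μ] {R : ℝ}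
    (h : μ (closedBall (0:Euc d) R)ᶜ = 0) :
    (∫⁻ x, (‖x‖₊ : ℝ≥0∞) ^ 2 ∂μ) < ⊤ := by
  have hsplit := lintegral_add_compl (μ := μ) (fun x : Euc d => (‖x‖₊ : ℝ≥0∞) ^ 2)
    (measurableSet_closedBall (x := (0:Euc d)) (ε := R))
  rw [← hsplit]
  have h2 : ∫⁻ x in (closedBall (0:Euc d) R)ᶜ, (‖x‖₊ : ℝ≥0∞) ^ 2 ∂μ = 0 := by
    rw [setLIntegral_measure_zero _ _ h]
  have h1 : ∫⁻ x in closedBall (0:Euc d) R, (‖x‖₊ : ℝ≥0∞) ^ 2 ∂μ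
      ≤ (ENNReal.ofReal R) ^ 2 * μ (closedBall (0:Euc d) R) := by
    calc ∫⁻ x in closedBall (0:Euc d) R, (‖x‖₊ : ℝ≥0∞) ^ 2 ∂μ
        ≤ ∫⁻ _ in closedBall (0:Euc d) R, (ENNReal.ofReal R) ^ 2 ∂μ := by
          apply setLIntegral_mono' measurableSet_closedBall
          intro x hx
          rw [← enorm_eq_nnnorm, ← ofReal_norm]
          exact pow_le_pow_left' (ENNReal.ofReal_le_ofReal
            (by simpa [dist_zero_right] using (mem_closedBall.mp hx))) 2
      _ = (ENNReal.ofReal R) ^ 2 * μ (closedBall (0:Euc d) R) := setLIntegral_const _ _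
  rw [h2, add_zero]
  apply lt_of_le_of_lt h1
  exact ENNReal.mul_lt_top (ENNReal.pow_lt_top ENNReal.ofReal_lt_top) (measure_lt_top _ _)

lemma en_smul (K : Euc d → ℝ≥0∞) (ρ : Measure (Euc d)) (a : ℝ≥0∞) (ha : a ≠ ⊤) :
    energyE d K (a • ρ) = a * (a * energyE d K ρ) := by
  simp only [energyE]
  rw [lintegral_smul_measure]
  congr 1
  rw [← lintegral_const_mul' a _ ha]
  apply lintegral_congr
  intro x
  exact lintegral_smul_measure _ _

theorem exists_P2_trunc (hq1 : 0 < q) (μ : Measure (Euc d)) [IsProbabilityMeasure μ]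
    (hE : energyE d (KE d p q) μ ≠ ⊤) :
    ∃ ν : Measure (Euc d), (IsProbabilityMeasure ν ∧ (∫⁻ x, (‖x‖₊ : ℝ≥0∞) ^ 2 ∂ν) < ⊤) ∧
      energyE d (KE d p q) ν ≤ energyE d (KE d p q) μ := by
  by_cases hP2 : (∫⁻ x, (‖x‖₊ : ℝ≥0∞) ^ 2 ∂μ) < ⊤
  · exact ⟨μ, ⟨inferInstance, hP2⟩, le_rfl⟩
  -- tail sequence
  set s : ℕ → ℝ≥0∞ := fun j => μ (closedBall (0:Euc d) ((2:ℝ)^j))ᶜ with hs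
  set E := energyE d (KE d p q) μ with hEdef
  -- J₁ : small tail
  have hJ1 : ∃ J₁ : ℕ, ∀ j ≥ J₁, s j ≤ 1/2 := by
    have hmono : Monotone (fun j : ℕ => closedBall (0:Euc d) ((2:ℝ)^j)) := by
      intro a b hab
      exact closedBall_subset_closedBall (by
        apply pow_le_pow_right₀ (by norm_num) hab)
    have hun : ⋃ j : ℕ, closedBall (0:Euc d) ((2:ℝ)^j) = Set.univ := by
      apply Set.eq_univ_of_forall
      intro x
      obtain ⟨j, hj⟩ := pow_unbounded_of_one_lt ‖x‖ (by norm_num : (1:ℝ) < 2)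
      exact Set.mem_iUnion.mpr ⟨j, by simpa [dist_zero_right] using hj.le⟩
    have htd : Tendsto (fun j : ℕ => μ (closedBall (0:Euc d) ((2:ℝ)^j))) atTop
        (𝓝 (μ (Set.univ : Set (Euc d)))) := by
      rw [← hun]
      exact tendsto_measure_iUnion_atTop hmono
    rw [measure_univ] at htd
    have hev : ∀ᶠ j in atTop, (1:ℝ≥0∞)/2 ≤ μ (closedBall (0:Euc d) ((2:ℝ)^j)) :=
      htd.eventually_const_le (by norm_num)
    obtain ⟨J₁, hJ₁⟩ := eventually_atTop.mp hev
    refine ⟨J₁, fun j hj => ?_⟩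
    have h1 := hJ₁ j hj
    have h2 : s j = 1 - μ (closedBall (0:Euc d) ((2:ℝ)^j)) := by
      show μ (closedBall (0:Euc d) ((2:ℝ)^j))ᶜ = _
      rw [measure_compl measurableSet_closedBall (measure_ne_top _ _), measure_univ]
    rw [h2]
    calc 1 - μ (closedBall (0:Euc d) ((2:ℝ)^j)) ≤ 1 - (1:ℝ≥0∞)/2 :=
        tsub_le_tsub_left h1 1
      _ = 1/2 := ENNReal.sub_half ENNReal.one_ne_top
  obtain ⟨J₁, hJ₁⟩ := hJ1
  -- J₂ : large radius vs energy
  have hJ2 : ∃ J₂ : ℕ, ∀ j ≥ J₂, 32 * E ≤ ENNReal.ofReal (((2:ℝ)^j) ^ q / q) := by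
    set M : ℝ := (32 * E).toReal with hM
    have hM0 : 0 ≤ M := ENNReal.toReal_nonneg
    obtain ⟨J₂, hJ₂⟩ := pow_unbounded_of_one_lt ((M * q) ^ (q⁻¹ : ℝ) + 1)
      (by norm_num : (1:ℝ) < 2)
    refine ⟨J₂, fun j hj => ?_⟩
    have hbig : (M * q) ^ (q⁻¹ : ℝ) ≤ (2:ℝ)^j := by
      have h1 : (2:ℝ)^J₂ ≤ (2:ℝ)^j := pow_le_pow_right₀ (by norm_num) hj
      nlinarith [hJ₂]
    have h2 : M * q ≤ ((2:ℝ)^j) ^ q := by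
      calc M * q = ((M * q) ^ (q⁻¹:ℝ)) ^ q := by
            rw [← Real.rpow_mul (by positivity), inv_mul_cancel₀ (ne_of_gt hq1), Real.rpow_one]
        _ ≤ ((2:ℝ)^j) ^ q := Real.rpow_le_rpow (by positivity) hbig hq1.le
    have h3 : M ≤ ((2:ℝ)^j) ^ q / q := (le_div_iff₀ hq1).mpr h2
    calc 32 * E = ENNReal.ofReal M := by
          rw [hM, ENNReal.ofReal_toReal]
          exact ENNReal.mul_ne_top (by norm_num) hE
      _ ≤ ENNReal.ofReal (((2:ℝ)^j) ^ q / q) := ENNReal.ofReal_le_ofReal h3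
  obtain ⟨J₂, hJ₂⟩ := hJ2
  set J := max J₁ J₂ with hJdef
  -- good index
  have hgood : ∃ j, J ≤ j ∧ s j ≤ 8 * s (j+1) := by
    by_contra hng
    push_neg at hng
    have hdec : ∀ k : ℕ, s (J + k) ≤ (8⁻¹ : ℝ≥0∞) ^ k := by
      intro k
      induction k with
      | zero => simpa using prob_le_one
      | succ k ih =>
        have h2 : s (J + k + 1) ≤ 8⁻¹ * s (J + k) := by
          have h3 : (8:ℝ≥0∞) * s (J + k + 1) ≤ s (J + k) :=
            (hng (J + k) (Nat.le_add_right _ _)).le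
          calc s (J + k + 1) = 8⁻¹ * (8 * s (J + k + 1)) := by
                rw [← mul_assoc, ENNReal.inv_mul_cancel (by norm_num) (by norm_num), one_mul]
            _ ≤ 8⁻¹ * s (J + k) := mul_le_mul_right h3 _
        calc s (J + k + 1) ≤ 8⁻¹ * s (J + k) := h2
          _ ≤ 8⁻¹ * (8⁻¹:ℝ≥0∞)^k := mul_le_mul_right ih _
          _ = (8⁻¹:ℝ≥0∞)^(k+1) := by ring
    -- second moment finite: contradiction
    apply hP2
    have hsplit := lintegral_add_compl (μ := μ) (fun x : Euc d => (‖x‖₊ : ℝ≥0∞) ^ 2)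
      (measurableSet_closedBall (x := (0:Euc d)) (ε := (2:ℝ)^J))
    rw [← hsplit]
    have hfirst : ∫⁻ x in closedBall (0:Euc d) ((2:ℝ)^J), (‖x‖₊ : ℝ≥0∞) ^ 2 ∂μ
        ≤ (ENNReal.ofReal ((2:ℝ)^J)) ^ 2 * 1 := by
      calc ∫⁻ x in closedBall (0:Euc d) ((2:ℝ)^J), (‖x‖₊ : ℝ≥0∞) ^ 2 ∂μ
          ≤ ∫⁻ _ in closedBall (0:Euc d) ((2:ℝ)^J), (ENNReal.ofReal ((2:ℝ)^J)) ^ 2 ∂μ := by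
            apply setLIntegral_mono' measurableSet_closedBall
            intro x hx
            rw [← enorm_eq_nnnorm, ← ofReal_norm]
            exact pow_le_pow_left' (ENNReal.ofReal_le_ofReal
              (by simpa [dist_zero_right] using (mem_closedBall.mp hx))) 2
        _ = (ENNReal.ofReal ((2:ℝ)^J)) ^ 2 * μ (closedBall (0:Euc d) ((2:ℝ)^J)) :=
            setLIntegral_const _ _
        _ ≤ (ENNReal.ofReal ((2:ℝ)^J)) ^ 2 * 1 := mul_le_mul_right prob_le_one _
    -- annuli
    set Ann : ℕ → Set (Euc d) := fun k =>
      closedBall (0:Euc d) ((2:ℝ)^(J+k+1)) \ closedBall (0:Euc d) ((2:ℝ)^(J+k)) with hAnn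
    have hcover : (closedBall (0:Euc d) ((2:ℝ)^J))ᶜ ⊆ ⋃ k, Ann k := by
      intro x hx
      simp only [Set.mem_compl_iff, mem_closedBall, dist_zero_right, not_le] at hx
      have hex : ∃ k, ‖x‖ ≤ (2:ℝ)^(J+k+1) := by
        obtain ⟨k, hk⟩ := pow_unbounded_of_one_lt ‖x‖ (by norm_num : (1:ℝ) < 2)
        exact ⟨k, by
          have : (2:ℝ)^k ≤ (2:ℝ)^(J+k+1) := pow_le_pow_right₀ (by norm_num) (by omega)
          linarith [hk.le]⟩
      have hk1 : ‖x‖ ≤ (2:ℝ)^(J+(Nat.find hex)+1) := Nat.find_spec hex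
      have hk2 : (2:ℝ)^(J+(Nat.find hex)) < ‖x‖ := by
        rcases Nat.eq_zero_or_pos (Nat.find hex) with h0 | h0
        · rw [h0]; simpa using hx
        · obtain ⟨k', hk'⟩ := Nat.exists_eq_succ_of_ne_zero h0.ne'
          have hmin := Nat.find_min hex (m := k') (by omega)
          push_neg at hmin
          rw [hk']
          calc (2:ℝ)^(J+(k'+1)) = (2:ℝ)^(J+k'+1) := by ring_nf
            _ < ‖x‖ := hmin
      refine Set.mem_iUnion.mpr ⟨Nat.find hex, ?_⟩
      rw [hAnn]
      constructor
      · simpa [dist_zero_right] using hk1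
      · simpa [dist_zero_right] using hk2
    have hsecond : ∫⁻ x in (closedBall (0:Euc d) ((2:ℝ)^J))ᶜ, (‖x‖₊ : ℝ≥0∞) ^ 2 ∂μ
        ≤ ∑' k : ℕ, ((2:ℝ≥0∞)^(J+k+1))^2 * (8⁻¹:ℝ≥0∞)^k := by
      calc ∫⁻ x in (closedBall (0:Euc d) ((2:ℝ)^J))ᶜ, (‖x‖₊ : ℝ≥0∞) ^ 2 ∂μ
          ≤ ∫⁻ x in ⋃ k, Ann k, (‖x‖₊ : ℝ≥0∞) ^ 2 ∂μ :=
            lintegral_mono_set hcover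
        _ ≤ ∑' k : ℕ, ∫⁻ x in Ann k, (‖x‖₊ : ℝ≥0∞) ^ 2 ∂μ := lintegral_iUnion_le _ _
        _ ≤ ∑' k : ℕ, ((2:ℝ≥0∞)^(J+k+1))^2 * (8⁻¹:ℝ≥0∞)^k := by
            apply ENNReal.tsum_le_tsum
            intro k
            have hsub1 : Ann k ⊆ closedBall (0:Euc d) ((2:ℝ)^(J+k+1)) := fun x hx => hx.1
            have hsub2 : Ann k ⊆ (closedBall (0:Euc d) ((2:ℝ)^(J+k)))ᶜ := fun x hx => hx.2
            have hAnnm : MeasurableSet (Ann k) :=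
              measurableSet_closedBall.diff measurableSet_closedBall
            calc ∫⁻ x in Ann k, (‖x‖₊ : ℝ≥0∞) ^ 2 ∂μ
                ≤ ∫⁻ _ in Ann k, ((2:ℝ≥0∞)^(J+k+1))^2 ∂μ := by
                  apply setLIntegral_mono' hAnnm
                  intro x hx
                  have hb := hsub1 hx
                  simp only [mem_closedBall, dist_zero_right] at hb
                  rw [← enorm_eq_nnnorm, ← ofReal_norm]
                  have : ENNReal.ofReal ‖x‖ ≤ (2:ℝ≥0∞)^(J+k+1) := by
                    calc ENNReal.ofReal ‖x‖ ≤ ENNReal.ofReal ((2:ℝ)^(J+k+1)) :=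
                        ENNReal.ofReal_le_ofReal hb
                      _ = (2:ℝ≥0∞)^(J+k+1) := by
                        rw [ENNReal.ofReal_pow (by norm_num)]
                        norm_num
                  exact pow_le_pow_left' this 2
              _ = ((2:ℝ≥0∞)^(J+k+1))^2 * μ (Ann k) := setLIntegral_const _ _
              _ ≤ ((2:ℝ≥0∞)^(J+k+1))^2 * (8⁻¹:ℝ≥0∞)^k := by
                  apply mul_le_mul_right
                  calc μ (Ann k) ≤ s (J + k) := measure_mono hsub2
                    _ ≤ (8⁻¹:ℝ≥0∞)^k := hdec k
    have htsum : ∑' k : ℕ, ((2:ℝ≥0∞)^(J+k+1))^2 * (8⁻¹:ℝ≥0∞)^k < ⊤ := by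
      have heq : ∀ k : ℕ, ((2:ℝ≥0∞)^(J+k+1))^2 * (8⁻¹:ℝ≥0∞)^k
          = ((2:ℝ≥0∞)^(J+1))^2 * ((4:ℝ≥0∞) * 8⁻¹)^k := by
        intro k
        have h4 : ((2:ℝ≥0∞)^(J+k+1))^2 = ((2:ℝ≥0∞)^(J+1))^2 * (4:ℝ≥0∞)^k := by
          rw [show (4:ℝ≥0∞) = 2^2 by norm_num]
          rw [← pow_mul, ← pow_mul, ← pow_mul, ← pow_add]
          ring_nf
        rw [h4, mul_pow, mul_assoc]
      simp_rw [heq]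
      rw [ENNReal.tsum_mul_left]
      apply ENNReal.mul_lt_top
      · exact ENNReal.pow_lt_top (ENNReal.pow_lt_top (by norm_num))
      · have h48 : (4:ℝ≥0∞) * 8⁻¹ = 2⁻¹ := by
          rw [show (8:ℝ≥0∞) = 4 * 2 by norm_num,
            ENNReal.mul_inv (Or.inl (by norm_num)) (Or.inl (by norm_num)),
            ← mul_assoc, ENNReal.mul_inv_cancel (by norm_num) (by norm_num), one_mul]
        rw [h48, ENNReal.tsum_geometric]
        rw [show (1:ℝ≥0∞) - 2⁻¹ = 2⁻¹ by
          rw [← one_div, ENNReal.sub_half ENNReal.one_ne_top, one_div]]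
        simp
    calc ∫⁻ x in closedBall (0:Euc d) ((2:ℝ)^J), (‖x‖₊ : ℝ≥0∞) ^ 2 ∂μ
          + ∫⁻ x in (closedBall (0:Euc d) ((2:ℝ)^J))ᶜ, (‖x‖₊ : ℝ≥0∞) ^ 2 ∂μ
        ≤ (ENNReal.ofReal ((2:ℝ)^J)) ^ 2 * 1
          + ∑' k : ℕ, ((2:ℝ≥0∞)^(J+k+1))^2 * (8⁻¹:ℝ≥0∞)^k := add_le_add hfirst hsecond
      _ < ⊤ := by
          apply ENNReal.add_lt_top.mpr
          constructor
          · exact ENNReal.mul_lt_top (ENNReal.pow_lt_top ENNReal.ofReal_lt_top) (by norm_num)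
          · exact htsum
  obtain ⟨j, hjJ, hjgood⟩ := hgood
  -- now truncate at R = 2^j
  set R : ℝ := (2:ℝ)^j with hRdef
  have hRpos : 0 < R := by positivity
  set B : Set (Euc d) := closedBall (0:Euc d) R with hB
  set Far : Set (Euc d) := (closedBall (0:Euc d) ((2:ℝ)^(j+1)))ᶜ with hFar
  have hBm : MeasurableSet B := measurableSet_closedBall
  have hFarm : MeasurableSet Far := measurableSet_closedBall.compl
  set m : ℝ≥0∞ := μ B with hm
  -- s' ≠ 0
  have hs'ne : s (j+1) ≠ 0 := by
    intro h0
    exact absurd (moment_lt_top_of_tail_zero μ (R := (2:ℝ)^(j+1)) h0) hP2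
  -- m ≥ 1/2
  have hsj : s j ≤ 1/2 := hJ₁ j (le_trans (le_max_left _ _) hjJ)
  have hmsum : m + s j = 1 := by
    rw [hm, hs]
    rw [measure_add_measure_compl hBm]
    exact measure_univ
  have hmhalf : (1:ℝ≥0∞)/2 ≤ m := by
    have h1 : (1:ℝ≥0∞) ≤ m + 1/2 := by
      calc (1:ℝ≥0∞) = m + s j := hmsum.symm
        _ ≤ m + 1/2 := add_le_add le_rfl hsj
    calc (1:ℝ≥0∞)/2 = 1 - 1/2 := (ENNReal.sub_half ENNReal.one_ne_top).symm
      _ ≤ m := tsub_le_iff_right.mpr h1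
  have hm0 : m ≠ 0 := by
    intro h
    rw [h] at hmhalf
    simpa using hmhalf
  have hmt : m ≠ ⊤ := measure_ne_top _ _
  have hm1 : m ≤ 1 := prob_le_one
  -- the candidate measure
  set ν : Measure (Euc d) := m⁻¹ • μ.restrict B with hν
  have hνuniv : ν Set.univ = 1 := by
    rw [hν]
    simp only [Measure.smul_apply, smul_eq_mul]
    rw [Measure.restrict_apply MeasurableSet.univ, Set.univ_inter, ← hm]
    exact ENNReal.inv_mul_cancel hm0 hmt
  haveI hνprob : IsProbabilityMeasure ν := ⟨hνuniv⟩
  -- second moment of ν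
  have hνmom : (∫⁻ x, (‖x‖₊ : ℝ≥0∞) ^ 2 ∂ν) < ⊤ := by
    rw [hν, lintegral_smul_measure]
    apply ENNReal.mul_lt_top (by
      simp only [ENNReal.inv_lt_top]
      exact pos_iff_ne_zero.mpr hm0)
    calc ∫⁻ x in B, (‖x‖₊ : ℝ≥0∞) ^ 2 ∂μ
        ≤ ∫⁻ _ in B, (ENNReal.ofReal R) ^ 2 ∂μ := by
          apply setLIntegral_mono' hBm
          intro x hx
          rw [← enorm_eq_nnnorm, ← ofReal_norm]
          exact pow_le_pow_left' (ENNReal.ofReal_le_ofReal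
            (by simpa [hB, dist_zero_right] using (mem_closedBall.mp hx))) 2
      _ = (ENNReal.ofReal R) ^ 2 * μ B := setLIntegral_const _ _
      _ < ⊤ := ENNReal.mul_lt_top (ENNReal.pow_lt_top ENNReal.ofReal_lt_top) (measure_lt_top _ _)
  -- energy decomposition
  set A : ℝ≥0∞ := ∫⁻ x, (∫⁻ y, KE d p q (x - y) ∂(μ.restrict B)) ∂(μ.restrict B) with hA
  set D : ℝ≥0∞ := ∫⁻ x, (∫⁻ y, KE d p q (x - y) ∂(μ.restrict Far)) ∂(μ.restrict B) with hD
  have hmeas_inner : ∀ ρ : Measure (Euc d), SFinite ρ →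
      Measurable fun x : Euc d => ∫⁻ y, KE d p q (x - y) ∂ρ := by
    intro ρ hρ
    exact Measurable.lintegral_prod_right
      (measurable_KE.comp (measurable_fst.sub measurable_snd))
  have hdisj : Disjoint B Far := by
    rw [hB, hFar, Set.disjoint_compl_right_iff_subset]
    apply closedBall_subset_closedBall
    calc R = (2:ℝ)^j := rfl
      _ ≤ (2:ℝ)^(j+1) := by norm_num [pow_succ]
  have hAD : A + D ≤ energyE d (KE d p q) μ := by
    have hres : μ.restrict B + μ.restrict Far ≤ μ := by
      rw [← Measure.restrict_union hdisj hFarm]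
      exact Measure.restrict_le_self
    have hinner : ∀ x : Euc d,
        (∫⁻ y, KE d p q (x - y) ∂(μ.restrict B))
          + (∫⁻ y, KE d p q (x - y) ∂(μ.restrict Far))
        ≤ ∫⁻ y, KE d p q (x - y) ∂μ := by
      intro x
      rw [← lintegral_add_measure]
      exact lintegral_mono' hres le_rfl
    calc A + D = ∫⁻ x, ((∫⁻ y, KE d p q (x - y) ∂(μ.restrict B))
          + (∫⁻ y, KE d p q (x - y) ∂(μ.restrict Far))) ∂(μ.restrict B) := by
          rw [lintegral_add_left (hmeas_inner _ inferInstance)]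
      _ ≤ ∫⁻ x, (∫⁻ y, KE d p q (x - y) ∂μ) ∂(μ.restrict B) :=
          lintegral_mono fun x => hinner x
      _ ≤ ∫⁻ x, (∫⁻ y, KE d p q (x - y) ∂μ) ∂μ :=
          lintegral_mono' Measure.restrict_le_self le_rfl
      _ = energyE d (KE d p q) μ := rfl
  -- lower bound for D
  set c : ℝ≥0∞ := ENNReal.ofReal (R ^ q / q) with hc
  have hDlow : c * s (j+1) * m ≤ D := by
    have hinner : ∀ x ∈ B, c * s (j+1) ≤ ∫⁻ y, KE d p q (x - y) ∂(μ.restrict Far) := by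
      intro x hx
      have hptw : ∀ y ∈ Far, c ≤ KE d p q (x - y) := by
        intro y hy
        apply KE_ge hq1 hRpos.le
        simp only [hFar, Set.mem_compl_iff, mem_closedBall, dist_zero_right, not_le] at hy
        have hxb : ‖x‖ ≤ R := by simpa [hB, dist_zero_right] using (mem_closedBall.mp hx)
        calc R = (2:ℝ)^(j+1) - (2:ℝ)^j := by rw [hRdef, pow_succ]; ring
          _ ≤ ‖y‖ - ‖x‖ := by
              apply sub_le_sub hy.le
              rw [← hRdef]; exact hxb
          _ ≤ ‖x - y‖ := by
              have h1 := norm_sub_norm_le y x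
              have h2 : ‖y - x‖ = ‖x - y‖ := norm_sub_rev y x
              linarith
      calc c * s (j+1) = c * μ Far := by rw [hFar, hs]
        _ = ∫⁻ _ in Far, c ∂μ := by rw [setLIntegral_const, mul_comm]
        _ ≤ ∫⁻ y in Far, KE d p q (x - y) ∂μ := setLIntegral_mono' hFarm hptw
        _ = ∫⁻ y, KE d p q (x - y) ∂(μ.restrict Far) := rfl
    calc c * s (j+1) * m = ∫⁻ _ in B, c * s (j+1) ∂μ := by rw [setLIntegral_const, hm]
      _ ≤ ∫⁻ x in B, (∫⁻ y, KE d p q (x - y) ∂(μ.restrict Far)) ∂μ := by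
          apply setLIntegral_mono' hBm hinner
      _ = D := rfl
  -- conclude via real arithmetic
  have hc32 : 32 * E ≤ c := by
    rw [hc, hRdef]
    exact hJ₂ j (le_trans (le_max_right _ _) hjJ)
  have hAne : A ≠ ⊤ := by
    intro h
    apply hE
    have : (⊤:ℝ≥0∞) ≤ E := by
      calc (⊤:ℝ≥0∞) = A := h.symm
        _ ≤ A + D := le_self_add
        _ ≤ E := hAD
    exact top_le_iff.mp this
  have hDne : D ≠ ⊤ := by
    intro h
    apply hE
    have : (⊤:ℝ≥0∞) ≤ E := by
      calc (⊤:ℝ≥0∞) = D := h.symm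
        _ ≤ A + D := le_add_self
        _ ≤ E := hAD
    exact top_le_iff.mp this
  set ar := A.toReal with har
  set dr := D.toReal with hdr
  set er := E.toReal with her
  set mr := m.toReal with hmr
  set sr := (s j).toReal with hsr
  set s'r := (s (j+1)).toReal with hs'r
  set cr := c.toReal with hcr
  have hs'ne_top : s (j+1) ≠ ⊤ := measure_ne_top _ _
  have hsne_top : s j ≠ ⊤ := measure_ne_top _ _
  have f1 : ar + dr ≤ er := by
    rw [har, hdr, her, ← ENNReal.toReal_add hAne hDne]
    exact ENNReal.toReal_mono hE hAD
  have f2 : cr * s'r * mr ≤ dr := by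
    rw [hcr, hs'r, hmr, hdr, ← ENNReal.toReal_mul, ← ENNReal.toReal_mul]
    exact ENNReal.toReal_mono hDne hDlow
  have f3 : sr ≤ 8 * s'r := by
    have h8 : ((8:ℝ≥0∞) * s (j+1)).toReal = 8 * s'r := by
      rw [ENNReal.toReal_mul, hs'r]
      norm_num
    rw [hsr, ← h8]
    exact ENNReal.toReal_mono (ENNReal.mul_ne_top (by norm_num) hs'ne_top) hjgood
  have f4 : mr + sr = 1 := by
    rw [hmr, hsr, ← ENNReal.toReal_add hmt hsne_top, hmsum, ENNReal.toReal_one]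
  have fhalf : ((1:ℝ≥0∞)/2).toReal = 1/2 := by
    rw [ENNReal.toReal_div, ENNReal.toReal_one]
    norm_num
  have f5 : 1/2 ≤ mr := by
    rw [hmr, ← fhalf]
    exact ENNReal.toReal_mono hmt hmhalf
  have f6 : 32 * er ≤ cr := by
    have h32 : ((32:ℝ≥0∞) * E).toReal = 32 * er := by
      rw [ENNReal.toReal_mul, her]
      norm_num
    rw [hcr, ← h32]
    exact ENNReal.toReal_mono ENNReal.ofReal_ne_top hc32
  have f7 : 0 < s'r := by
    rw [hs'r]
    exact ENNReal.toReal_pos hs'ne hs'ne_top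
  have f8 : mr ≤ 1 := by
    rw [hmr, ← ENNReal.toReal_one]
    exact ENNReal.toReal_mono ENNReal.one_ne_top hm1
  have er0 : 0 ≤ er := ENNReal.toReal_nonneg
  have cr0 : 0 ≤ cr := ENNReal.toReal_nonneg
  have sr0 : 0 ≤ sr := ENNReal.toReal_nonneg
  have ar0 : 0 ≤ ar := ENNReal.toReal_nonneg
  have hA1 : 32 * er * s'r ≤ cr * s'r := mul_le_mul_of_nonneg_right f6 f7.le
  have hA2 : cr * s'r * (1/2) ≤ cr * s'r * mr :=
    mul_le_mul_of_nonneg_left f5 (by positivity)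
  have h16 : 16 * s'r * er ≤ cr * s'r * mr := by nlinarith
  have h1m : 1 - mr^2 ≤ 16 * s'r := by nlinarith
  have hmain : (1 - mr^2) * er ≤ 16 * s'r * er := mul_le_mul_of_nonneg_right h1m er0
  have hgoal_r : ar ≤ mr^2 * er := by nlinarith
  have hgoal : A ≤ m^2 * E := by
    have hne2 : m^2 * E ≠ ⊤ := ENNReal.mul_ne_top (ENNReal.pow_ne_top hmt) hE
    apply (ENNReal.toReal_le_toReal hAne hne2).mp
    rw [ENNReal.toReal_mul, ENNReal.toReal_pow]
    exact hgoal_r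
  -- energy of ν
  have hen_ν : energyE d (KE d p q) ν = m⁻¹ * (m⁻¹ * A) := by
    rw [hν]
    exact en_smul _ _ _ (ENNReal.inv_ne_top.mpr hm0)
  refine ⟨ν, ⟨hνprob, hνmom⟩, ?_⟩
  rw [hen_ν]
  calc m⁻¹ * (m⁻¹ * A) ≤ m⁻¹ * (m⁻¹ * (m^2 * E)) := by
        exact mul_le_mul_right (mul_le_mul_right hgoal _) _
    _ = (m⁻¹ * m) * ((m⁻¹ * m) * E) := by ring
    _ = E := by rw [ENNReal.inv_mul_cancel hm0 hmt, one_mul, one_mul]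

end EMin6

end Main

namespace Main
open MeasureTheory Filter Metric TopologicalSpace BoundedContinuousFunction
open scoped ENNReal Topology NNReal Classical

namespace Fin7

variable {d : ℕ} {p q : ℝ}

/-- truncated kernel as a bounded continuous function -/
noncomputable def gB (d : ℕ) (p q : ℝ) (hq1 : 0 < q) (hp2 : p < 0) (n : ℕ) : Euc d →ᵇ ℝ :=
  BoundedContinuousFunction.ofNormedAddCommGroup (EMin.gtr d p q n)
    (EMin.continuous_gtr hq1 hp2 n) n
    (fun x => by
      rw [Real.norm_eq_abs, abs_of_nonneg (EMin.gtr_nonneg hq1 hp2 n x)]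
      exact EMin.gtr_le n x)

lemma en_eq_iSup (hq1 : 0 < q) (hp2 : p < 0) (μ : Measure (Euc d)) [SFinite μ] :
    energyE d (KE d p q) μ
      = ⨆ n : ℕ, energyE d (fun z => ENNReal.ofReal (EMin.gtr d p q n z)) μ := by
  have h1 : ∀ z : Euc d, KE d p q z = ⨆ n : ℕ, ENNReal.ofReal (EMin.gtr d p q n z) := by
    intro z
    simp_rw [EMin.ofReal_gtr hq1 hp2]
    exact (EMin.iSup_min_natCast _).symm
  have h2 : energyE d (KE d p q) μ
      = energyE d (fun z => ⨆ n : ℕ, ENNReal.ofReal (EMin.gtr d p q n z)) μ := by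
    simp only [energyE]
    apply lintegral_congr; intro x; apply lintegral_congr; intro y
    exact h1 _
  rw [h2]
  apply EMin2.en_iSup
  · intro n
    exact ENNReal.continuous_ofReal.measurable.comp (EMin.continuous_gtr hq1 hp2 n).measurable
  · intro z n m hnm
    exact EMin.gtr_mono hq1 hp2 hnm z

lemma en_trunc_eq (hq1 : 0 < q) (hp2 : p < 0) (n : ℕ) (μ : Measure (Euc d))
    [IsProbabilityMeasure μ] :
    energyE d (fun z => ENNReal.ofReal (EMin.gtr d p q n z)) μ
      = ENNReal.ofReal (∫ x, Cv.conv (gB d p q hq1 hp2 n) μ x ∂μ) := by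
  have hinner : ∀ x : Euc d, ∫⁻ y, ENNReal.ofReal (EMin.gtr d p q n (x - y)) ∂μ
      = ENNReal.ofReal (Cv.conv (gB d p q hq1 hp2 n) μ x) := by
    intro x
    rw [Cv.conv]
    exact (MeasureTheory.ofReal_integral_eq_lintegral_ofReal
      (Cv.integrable_comp (gB d p q hq1 hp2 n) μ x)
      (Eventually.of_forall fun y => EMin.gtr_nonneg hq1 hp2 n _)).symm
  simp only [energyE]
  calc ∫⁻ x, (∫⁻ y, ENNReal.ofReal (EMin.gtr d p q n (x - y)) ∂μ) ∂μ
      = ∫⁻ x, ENNReal.ofReal (Cv.conv (gB d p q hq1 hp2 n) μ x) ∂μ := lintegral_congr hinner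
    _ = ENNReal.ofReal (∫ x, Cv.conv (gB d p q hq1 hp2 n) μ x ∂μ) := by
        refine (MeasureTheory.ofReal_integral_eq_lintegral_ofReal ?_ ?_).symm
        · exact (Cv.convB (gB d p q hq1 hp2 n) (EMin.uc_gtr hq1 hp2 n) μ).integrable μ
        · exact Eventually.of_forall fun x =>
            integral_nonneg fun y => EMin.gtr_nonneg hq1 hp2 n _

lemma exists_radius (hq1 : 0 < q) (M : ℝ) : ∃ R : ℝ, 0 < R ∧ M ≤ R ^ q / q := by
  set T : ℝ := (max M 0 * q) ^ (q⁻¹ : ℝ) + 1 with hT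
  have hT0 : 0 < T := by positivity
  refine ⟨T, hT0, ?_⟩
  rw [le_div_iff₀ hq1]
  calc M * q ≤ max M 0 * q := mul_le_mul_of_nonneg_right (le_max_left _ _) hq1.le
    _ = ((max M 0 * q) ^ (q⁻¹:ℝ)) ^ q := by
        rw [← Real.rpow_mul (by positivity), inv_mul_cancel₀ (ne_of_gt hq1), Real.rpow_one]
    _ ≤ T ^ q := Real.rpow_le_rpow (by positivity) (by rw [hT]; linarith) hq1.le

lemma coe_liminf (xs : ℕ → ℝ≥0) (hb : ∀ k, xs k ≤ 1) :
    ((Filter.atTop.liminf xs : ℝ≥0) : ℝ≥0∞)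
      = Filter.atTop.liminf (fun k => ((xs k : ℝ≥0) : ℝ≥0∞)) := by
  refine Monotone.map_liminf_of_continuousAt (F := atTop) ENNReal.coe_mono xs ?_ ?_ ?_
  · exact ENNReal.continuous_coe.continuousAt
  · exact IsBoundedUnder.isCoboundedUnder_ge ⟨1, by
      simp only [eventually_map, eventually_atTop]
      exact ⟨0, fun k _ => hb k⟩⟩
  · exact ⟨0, by simp⟩

lemma half_two : (1:ℝ≥0∞)/2 * 2 = 1 := by
  rw [one_div, ENNReal.inv_mul_cancel two_ne_zero ENNReal.ofNat_ne_top]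

end Fin7
end Main

/-- The interaction energy `E` admits a minimizer over `P₂(ℝ^d)`. -/
theorem energy_has_minimizer
    (d : ℕ) (hd : 3 ≤ d) (p q : ℝ) (hp1 : 2 - (d : ℝ) ≤ p) (hp2 : p < 0)
    (hq1 : 0 < q) (hq2 : q ≤ 2) :
    ∃ μ₀ : Measure (EuclideanSpace ℝ (Fin d)), IsP2 d μ₀ ∧
      ∀ ν : Measure (EuclideanSpace ℝ (Fin d)), IsP2 d ν →
        energyE d (KE d p q) μ₀ ≤ energyE d (KE d p q) ν := by
  classical
  set I : ℝ≥0∞ := ⨅ (ν : Measure (EuclideanSpace ℝ (Fin d))) (_ : IsP2 d ν),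
    energyE d (KE d p q) ν with hI
  have hIle : ∀ ν, IsP2 d ν → I ≤ energyE d (KE d p q) ν := fun ν hν =>
    iInf_le_of_le ν (iInf_le _ hν)
  by_cases hItop : I = ⊤
  · refine ⟨MeasureTheory.Measure.dirac 0, ⟨by infer_instance, ?_⟩, ?_⟩
    · rw [MeasureTheory.lintegral_dirac]
      simp
    · intro ν hν
      have h1 := hIle ν hν
      rw [hItop, top_le_iff] at h1
      rw [h1]
      exact le_top
  · have hC : (I + 1) ≠ ⊤ := ENNReal.add_ne_top.mpr ⟨hItop, ENNReal.one_ne_top⟩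
    set C := I + 1 with hCdef
    -- minimizing sequence
    have hex : ∀ j : ℕ, ∃ ν : Measure (EuclideanSpace ℝ (Fin d)), IsP2 d ν ∧
        energyE d (KE d p q) ν ≤ I + ((j:ℝ≥0∞)+1)⁻¹ := by
      intro j
      have hlt : I < I + ((j:ℝ≥0∞)+1)⁻¹ := by
        apply ENNReal.lt_add_right hItop
        simp
      rw [hI] at hlt
      obtain ⟨ν, hν⟩ := iInf_lt_iff.mp hlt
      obtain ⟨hνP2, hνE⟩ := iInf_lt_iff.mp hν
      refine ⟨ν, hνP2, hνE.le.trans ?_⟩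
      rw [hI]
    choose ν0 hν0P2 hν0E using hex
    haveI hν0prob : ∀ j, IsProbabilityMeasure (ν0 j) := fun j => (hν0P2 j).1
    have hν0C : ∀ j, energyE d (KE d p q) (ν0 j) ≤ C := by
      intro j
      refine (hν0E j).trans (add_le_add le_rfl ?_)
      exact ENNReal.inv_le_one.mpr le_add_self
    -- centering radius
    have hCC : 2*C + 2 ≠ ⊤ := by
      apply ENNReal.add_ne_top.mpr
      exact ⟨ENNReal.mul_ne_top ENNReal.ofNat_ne_top hC, ENNReal.ofNat_ne_top⟩
    obtain ⟨R₀, hR₀pos, hR₀⟩ := Main.Fin7.exists_radius hq1 ((2*C + 2).toReal)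
    have hX : 2*C + 2 ≤ ENNReal.ofReal (R₀ ^ q / q) := by
      calc 2*C+2 = ENNReal.ofReal ((2*C+2).toReal) := (ENNReal.ofReal_toReal hCC).symm
        _ ≤ _ := ENNReal.ofReal_le_ofReal hR₀
    have hXne0 : ENNReal.ofReal (R₀ ^ q / q) ≠ 0 := by
      intro h
      rw [h, le_zero_iff] at hX
      simpa using hX
    have hcenter : ∀ j, ∃ z, 1/2 ≤ ν0 j (Metric.closedBall z R₀) := by
      intro j
      apply Main.EMin5.exists_center hq1 (ν0 j) hR₀pos
      calc energyE d (KE d p q) (ν0 j) / ENNReal.ofReal (R₀^q/q)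
          ≤ C / ENNReal.ofReal (R₀^q/q) := ENNReal.div_le_div_right (hν0C j) _
        _ < 1/2 := by
            rw [ENNReal.div_lt_iff (Or.inl hXne0) (Or.inl ENNReal.ofReal_ne_top)]
            have hkey : (1:ℝ≥0∞)/2 * (2*C+2) = C + 1 := by
              have h22 : (2:ℝ≥0∞)*C+2 = 2*(C+1) := by ring
              rw [h22, ← mul_assoc, Main.Fin7.half_two, one_mul]
            calc C < C + 1 := ENNReal.lt_add_right hC one_ne_zero
              _ = 1/2 * (2*C+2) := hkey.symm
              _ ≤ 1/2 * ENNReal.ofReal (R₀^q/q) := mul_le_mul_right hX _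
    choose z hz using hcenter
    set μs : ℕ → Measure (EuclideanSpace ℝ (Fin d)) :=
      fun j => Measure.map (fun x => x + (-(z j))) (ν0 j) with hμs
    haveI hμsprob : ∀ j, IsProbabilityMeasure (μs j) := by
      intro j
      apply Measure.isProbabilityMeasure_map
      exact (measurable_add_const _).aemeasurable
    have hμsE : ∀ j, energyE d (KE d p q) (μs j) = energyE d (KE d p q) (ν0 j) := fun j =>
      Main.EMin2.en_translate Main.EMin.measurable_KE (ν0 j) _
    have hμsC : ∀ j, energyE d (KE d p q) (μs j) ≤ C := fun j => (hμsE j) ▸ hν0C j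
    have hμscenter : ∀ j, 1/2 ≤ μs j (Metric.closedBall 0 R₀) := by
      intro j
      rw [hμs]
      show 1/2 ≤ Measure.map (fun x => x + (-(z j))) (ν0 j) (Metric.closedBall 0 R₀)
      rw [Measure.map_apply (measurable_add_const _) measurableSet_closedBall]
      have hpre : (fun x : EuclideanSpace ℝ (Fin d) => x + -(z j)) ⁻¹' Metric.closedBall 0 R₀
          = Metric.closedBall (z j) R₀ := by
        ext x
        simp [Metric.mem_closedBall, dist_eq_norm, sub_eq_add_neg]
      rw [hpre]
      exact hz j
    -- tightness
    have htight : ∀ ε : ℝ, 0 < ε →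
        ∃ R : ℝ, ∀ j, μs j (Metric.closedBall 0 R)ᶜ ≤ ENNReal.ofReal ε := by
      intro ε hε
      have hεne : ENNReal.ofReal ε ≠ 0 := (ENNReal.ofReal_pos.mpr hε).ne'
      have hXne : 2*C / ENNReal.ofReal ε ≠ ⊤ :=
        (ENNReal.div_lt_top (ENNReal.mul_ne_top ENNReal.ofNat_ne_top hC) hεne).ne
      obtain ⟨R₁, hR₁pos, hR₁⟩ := Main.Fin7.exists_radius hq1 ((2*C / ENNReal.ofReal ε).toReal)
      have hX1 : 2*C / ENNReal.ofReal ε ≤ ENNReal.ofReal (R₁^q/q) := by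
        calc 2*C / ENNReal.ofReal ε = ENNReal.ofReal ((2*C / ENNReal.ofReal ε).toReal) :=
            (ENNReal.ofReal_toReal hXne).symm
          _ ≤ _ := ENNReal.ofReal_le_ofReal hR₁
      have hX1ne0 : ENNReal.ofReal (R₁^q/q) ≠ 0 := by
        simp only [ne_eq, ENNReal.ofReal_eq_zero, not_le]
        positivity
      refine ⟨R₀ + R₁, fun j => ?_⟩
      calc μs j (Metric.closedBall 0 (R₀ + R₁))ᶜ
          ≤ 2 * (energyE d (KE d p q) (μs j) / ENNReal.ofReal (R₁^q/q)) :=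
            Main.EMin5.tail_bound hq1 (μs j) hR₀pos hR₁pos (hμscenter j)
        _ ≤ 2 * (C / ENNReal.ofReal (R₁^q/q)) :=
            mul_le_mul_right (ENNReal.div_le_div_right (hμsC j) _) 2
        _ = 2 * C / ENNReal.ofReal (R₁^q/q) := by rw [mul_div_assoc]
        _ ≤ ENNReal.ofReal ε := by
            rw [ENNReal.div_le_iff hX1ne0 ENNReal.ofReal_ne_top]
            calc 2*C = ENNReal.ofReal ε * (2*C / ENNReal.ofReal ε) := by
                  rw [ENNReal.mul_div_cancel hεne ENNReal.ofReal_ne_top]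
              _ ≤ ENNReal.ofReal ε * ENNReal.ofReal (R₁^q/q) := mul_le_mul_right hX1 _
              _ = ENNReal.ofReal ε * ENNReal.ofReal (R₁^q/q) := rfl
    -- limit measure
    obtain ⟨μ₀, φ, hφ, hμ₀prob, hopen⟩ := Main.Cpt.exists_limit_measure μs hμsprob htight
    haveI := hμ₀prob
    -- weak convergence
    set P : ℕ → ProbabilityMeasure (EuclideanSpace ℝ (Fin d)) :=
      fun k => ⟨μs (φ k), hμsprob _⟩ with hP
    set P₀ : ProbabilityMeasure (EuclideanSpace ℝ (Fin d)) := ⟨μ₀, hμ₀prob⟩ with hP₀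
    have hPtend : Filter.Tendsto P atTop (𝓝 P₀) := by
      apply MeasureTheory.tendsto_of_forall_isOpen_le_liminf
      intro G hG
      have h1 := hopen G hG
      have haux := Main.Fin7.coe_liminf (fun k => P k G)
        (fun k => (P k).apply_le_one G)
      rw [← ENNReal.coe_le_coe, haux]
      have hcoe : (fun k => ((P k G : ℝ≥0) : ℝ≥0∞)) = fun k => μs (φ k) G := by
        funext k
        exact ProbabilityMeasure.ennreal_coeFn_eq_coeFn_toMeasure (P k) G
      rw [hcoe]
      have hcoe0 : ((P₀ G : ℝ≥0) : ℝ≥0∞) = μ₀ G :=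
        ProbabilityMeasure.ennreal_coeFn_eq_coeFn_toMeasure P₀ G
      rw [hcoe0]
      exact h1
    have hweak : ∀ f : BoundedContinuousFunction (EuclideanSpace ℝ (Fin d)) ℝ,
        Tendsto (fun k => ∫ x, f x ∂(μs (φ k))) atTop (𝓝 (∫ x, f x ∂μ₀)) := by
      have h := ProbabilityMeasure.tendsto_iff_forall_integral_tendsto.mp hPtend
      exact h
    have htightφ : ∀ ε : ℝ, 0 < ε →
        ∃ R : ℝ, ∀ k, (μs (φ k)) (Metric.closedBall 0 R)ᶜ ≤ ENNReal.ofReal ε := by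
      intro ε hε
      obtain ⟨R, hR⟩ := htight ε hε
      exact ⟨R, fun k => hR (φ k)⟩
    -- energy of μ₀ is at most I
    have hE0 : energyE d (KE d p q) μ₀ ≤ I := by
      rw [Main.Fin7.en_eq_iSup hq1 hp2 μ₀]
      apply iSup_le
      intro n
      have hlim : Tendsto
          (fun k => energyE d (fun z => ENNReal.ofReal (Main.EMin.gtr d p q n z)) (μs (φ k)))
          atTop (𝓝 (energyE d (fun z => ENNReal.ofReal (Main.EMin.gtr d p q n z)) μ₀)) := by
        have hfun : (fun k =>
            energyE d (fun z => ENNReal.ofReal (Main.EMin.gtr d p q n z)) (μs (φ k)))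
            = fun k => ENNReal.ofReal
              (∫ x, Main.Cv.conv (Main.Fin7.gB d p q hq1 hp2 n) (μs (φ k)) x ∂(μs (φ k))) :=
          funext fun k => Main.Fin7.en_trunc_eq hq1 hp2 n (μs (φ k))
        rw [hfun, Main.Fin7.en_trunc_eq hq1 hp2 n μ₀]
        exact (ENNReal.continuous_ofReal.tendsto _).comp
          (Main.Cv.conv_integral_tendsto (Main.Fin7.gB d p q hq1 hp2 n)
            (Main.EMin.uc_gtr hq1 hp2 n) (fun k => μs (φ k)) (fun k => hμsprob _) μ₀
            hweak htightφ)
      have hbnd : ∀ k,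
          energyE d (fun z => ENNReal.ofReal (Main.EMin.gtr d p q n z)) (μs (φ k))
            ≤ I + ((φ k : ℝ≥0∞) + 1)⁻¹ := by
        intro k
        calc energyE d (fun z => ENNReal.ofReal (Main.EMin.gtr d p q n z)) (μs (φ k))
            ≤ energyE d (KE d p q) (μs (φ k)) := by
              apply Main.EMin2.en_mono
              intro zz
              rw [Main.EMin.ofReal_gtr hq1 hp2]
              exact min_le_left _ _
          _ = energyE d (KE d p q) (ν0 (φ k)) := hμsE (φ k)
          _ ≤ I + ((φ k : ℝ≥0∞) + 1)⁻¹ := hν0E (φ k)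
      have hIlim : Tendsto (fun k : ℕ => I + ((φ k : ℝ≥0∞) + 1)⁻¹) atTop (𝓝 (I + 0)) := by
        apply Tendsto.add tendsto_const_nhds
        apply tendsto_of_tendsto_of_tendsto_of_le_of_le
          (tendsto_const_nhds (x := (0:ℝ≥0∞))) ENNReal.tendsto_inv_nat_nhds_zero
          (fun k => zero_le) ?_
        intro k
        apply ENNReal.inv_le_inv'
        calc ((k:ℝ≥0∞)) ≤ (φ k : ℝ≥0∞) := by
              exact_mod_cast Nat.cast_le.mpr (hφ.le_apply)
          _ ≤ (φ k : ℝ≥0∞) + 1 := le_add_of_nonneg_right zero_le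
      rw [add_zero] at hIlim
      exact le_of_tendsto_of_tendsto' hlim hIlim hbnd
    -- truncation
    have hE0ne : energyE d (KE d p q) μ₀ ≠ ⊤ := by
      intro h
      rw [h, top_le_iff] at hE0
      exact hItop hE0
    obtain ⟨νf, ⟨hνfprob, hνfmom⟩, hνfE⟩ := Main.EMin6.exists_P2_trunc hq1 μ₀ hE0ne
    refine ⟨νf, ⟨hνfprob, hνfmom⟩, ?_⟩
    intro ρ hρ
    calc energyE d (KE d p q) νf ≤ energyE d (KE d p q) μ₀ := hνfE
      _ ≤ I := hE0
      _ ≤ energyE d (KE d p q) ρ := hIle ρ hρ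
end
end

section
/- Fix R > 0 and let φ be a mollifier satisfying (M1)–(M3). Let ε_k → 0 and let μ_k be Borel probability measures on ℝ^d that are absolutely continuous with densities bounded by R and converge weakly-* to a probability measure μ. Then the doubly mollified measures converge to μ in the weak-* topology of L^∞: for every f ∈ L¹(ℝ^d), ∫_{ℝ^d} (φ_{ε_k} * f * φ_{ε_k})(x) dμ_k(x) → ∫_{ℝ^d} f(x) dμ(x) as k → ∞; equivalently, ∫ f(x) (φ_{ε_k}*μ_k*φ_{ε_k})(x) dx → ∫ f dμ. -/
open MeasureTheory Filter
open scoped ENNReal Topology NNReal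

noncomputable section

section AuxMolli

open scoped Convolution
open Module Metric

variable {d : ℕ}

local notation "𝓔" => EuclideanSpace ℝ (Fin d)
local notation "mulL" => ContinuousLinearMap.mul ℝ ℝ

lemma mollifier_integrable {φ : 𝓔 → ℝ} (hφ : IsMollifier d φ) :
    Integrable φ (volume : Measure 𝓔) := by
  by_contra h
  have h1 := hφ.2.2.2.1
  rw [integral_undef h] at h1
  exact one_ne_zero h1.symm

lemma scaled_integral_mul {φ : 𝓔 → ℝ} {ε : ℝ} (hε : 0 < ε) (g : 𝓔 → ℝ) :
    ∫ x, scaled d φ ε x * g x = ∫ x, φ x * g (ε • x) := by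
  have hd : finrank ℝ 𝓔 = d := finrank_euclideanSpace_fin
  have h1 : ∫ x, (fun y => φ y * g (ε • y)) (ε⁻¹ • x) ∂(volume : Measure 𝓔)
      = |((ε⁻¹ : ℝ) ^ finrank ℝ 𝓔)⁻¹| • ∫ x, φ x * g (ε • x) :=
    MeasureTheory.Measure.integral_comp_smul volume (fun y => φ y * g (ε • y)) ε⁻¹
  have habs : |((ε⁻¹ : ℝ) ^ finrank ℝ 𝓔)⁻¹| = ε ^ d := by
    rw [hd, ← inv_pow, inv_inv, abs_of_pos (pow_pos hε d)]
  calc ∫ x, scaled d φ ε x * g x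
      = (ε ^ d)⁻¹ * ∫ x, φ (ε⁻¹ • x) * g x := by
        simp only [scaled, mul_assoc]
        exact integral_const_mul _ _
    _ = (ε ^ d)⁻¹ * ∫ x, (fun y => φ y * g (ε • y)) (ε⁻¹ • x) := by
        congr 1
        refine integral_congr_ae (Filter.Eventually.of_forall fun x => ?_)
        simp [smul_smul, mul_inv_cancel₀ hε.ne']
    _ = (ε ^ d)⁻¹ * ((ε ^ d) * ∫ x, φ x * g (ε • x)) := by
        rw [h1, habs, smul_eq_mul]
    _ = ∫ x, φ x * g (ε • x) := by
        rw [← mul_assoc, inv_mul_cancel₀ (pow_pos hε d).ne', one_mul]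

lemma scaled_integral {φ : 𝓔 → ℝ} (hφ : IsMollifier d φ) {ε : ℝ} (hε : 0 < ε) :
    ∫ x, scaled d φ ε x = 1 := by
  have h := scaled_integral_mul (φ := φ) hε (fun _ => (1 : ℝ))
  simp only [mul_one] at h
  rw [h, hφ.2.2.2.1]

lemma scaled_nonneg {φ : 𝓔 → ℝ} (hφ0 : ∀ x, 0 ≤ φ x) {ε : ℝ} (hε : 0 < ε) (x : 𝓔) :
    0 ≤ scaled d φ ε x :=
  mul_nonneg (inv_nonneg.2 (pow_pos hε d).le) (hφ0 _)

lemma scaled_continuous {φ : 𝓔 → ℝ} (hc : Continuous φ) (ε : ℝ) :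
    Continuous (scaled d φ ε) :=
  continuous_const.mul (hc.comp (continuous_const_smul _))

lemma scaled_integrable {φ : 𝓔 → ℝ} (hi : Integrable φ (volume : Measure 𝓔)) {ε : ℝ}
    (hε : 0 < ε) : Integrable (scaled d φ ε) (volume : Measure 𝓔) := by
  unfold scaled
  exact (hi.comp_smul (inv_ne_zero hε.ne')).const_mul _

lemma conv_L1_contract {c : 𝓔 → ℝ} (hc_int : Integrable c (volume : Measure 𝓔))
    (hc0 : ∀ x, 0 ≤ c x) (hc1 : ∫ x, c x = 1) {u : 𝓔 → ℝ}
    (hu : Integrable u (volume : Measure 𝓔)) :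
    ∫ x, |(c ⋆[mulL, volume] u) x| ≤ ∫ x, |u x| := by
  have habs : Integrable (fun x => |u x|) (volume : Measure 𝓔) := hu.abs
  have h1 : Integrable (c ⋆[mulL, volume] u) (volume : Measure 𝓔) :=
    hc_int.integrable_convolution mulL hu
  have h2 : Integrable (c ⋆[mulL, volume] fun x => |u x|) (volume : Measure 𝓔) :=
    hc_int.integrable_convolution mulL habs
  have hae : ∀ᵐ x ∂(volume : Measure 𝓔),
      |(c ⋆[mulL, volume] u) x| ≤ (c ⋆[mulL, volume] fun y => |u y|) x := by
    filter_upwards [hc_int.ae_convolution_exists mulL hu] with x hx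
    have e2 : (c ⋆[mulL, volume] fun y => |u y|) x = ∫ t, c t * |u (x - t)| := by
      simp [convolution_def, ContinuousLinearMap.mul_apply']
    have e1 : (c ⋆[mulL, volume] u) x = ∫ t, c t * u (x - t) := by
      simp [convolution_def, ContinuousLinearMap.mul_apply']
    rw [e1, e2]
    calc |∫ t, c t * u (x - t)| ≤ ∫ t, |c t * u (x - t)| := by
          have hni := norm_integral_le_integral_norm (μ := (volume : Measure 𝓔))
            (fun t => c t * u (x - t))
          simp only [Real.norm_eq_abs] at hni
          exact hni
      _ = ∫ t, c t * |u (x - t)| :=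
          integral_congr_ae (Filter.Eventually.of_forall fun t => by
            simp only [abs_mul, abs_of_nonneg (hc0 t)])
  calc ∫ x, |(c ⋆[mulL, volume] u) x| ≤ ∫ x, (c ⋆[mulL, volume] fun y => |u y|) x :=
        integral_mono_ae h1.abs h2 hae
    _ = (∫ x, c x) * ∫ x, |u x| := by
        simpa [ContinuousLinearMap.mul_apply'] using integral_convolution mulL hc_int habs
    _ = ∫ x, |u x| := by rw [hc1, one_mul]

lemma conv_sub_ae {c : 𝓔 → ℝ} (hc_int : Integrable c (volume : Measure 𝓔))
    {u v : 𝓔 → ℝ} (hu : Integrable u (volume : Measure 𝓔))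
    (hv : Integrable v (volume : Measure 𝓔)) :
    (fun x => (c ⋆[mulL, volume] u) x - (c ⋆[mulL, volume] v) x)
      =ᵐ[(volume : Measure 𝓔)] (c ⋆[mulL, volume] fun y => u y - v y) := by
  filter_upwards [hc_int.ae_convolution_exists mulL hu,
    hc_int.ae_convolution_exists mulL hv] with x hx1 hx2
  have hx1' : Integrable (fun t => c t * u (x - t)) (volume : Measure 𝓔) := by
    simpa [ConvolutionExistsAt, ContinuousLinearMap.mul_apply'] using hx1
  have hx2' : Integrable (fun t => c t * v (x - t)) (volume : Measure 𝓔) := by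
    simpa [ConvolutionExistsAt, ContinuousLinearMap.mul_apply'] using hx2
  simp only [convolution_def, ContinuousLinearMap.mul_apply']
  rw [← integral_sub hx1' hx2']
  refine integral_congr_ae (Filter.Eventually.of_forall fun t => ?_)
  ring

lemma w_stronglyMeasurable {h : 𝓔 → ℝ} (hhc : Continuous h) :
    StronglyMeasurable (fun y : 𝓔 => ∫ x, |h (x - y) - h x|) := by
  apply StronglyMeasurable.integral_prod_right
    (f := fun (y : 𝓔) (x : 𝓔) => |h (x - y) - h x|)
  exact (((hhc.comp (continuous_snd.sub continuous_fst)).sub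
    (hhc.comp continuous_snd)).abs).stronglyMeasurable

lemma w_le {h : 𝓔 → ℝ} (hint : Integrable h (volume : Measure 𝓔)) (y : 𝓔) :
    ∫ x, |h (x - y) - h x| ≤ 2 * ∫ x, |h x| := by
  have h1 : Integrable (fun x => h (x - y)) (volume : Measure 𝓔) := hint.comp_sub_right y
  calc ∫ x, |h (x - y) - h x| ≤ ∫ x, (|h (x - y)| + |h x|) :=
        integral_mono ((h1.sub hint).abs) (h1.abs.add hint.abs) (fun x => abs_sub _ _)
    _ = (∫ x, |h (x - y)|) + ∫ x, |h x| := integral_add h1.abs hint.abs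
    _ = 2 * ∫ x, |h x| := by
        rw [integral_sub_right_eq_self (fun x => |h x|) y]; ring

lemma conv_sub_self_le {c : 𝓔 → ℝ} (hc_int : Integrable c (volume : Measure 𝓔))
    (hc0 : ∀ x, 0 ≤ c x) (hc1 : ∫ x, c x = 1) (hcc : Continuous c)
    {h : 𝓔 → ℝ} (hhc : Continuous h) (hhs : HasCompactSupport h) :
    ∫ x, |(c ⋆[mulL, volume] h) x - h x|
      ≤ ∫ y, c y * ∫ x, |h (x - y) - h x| := by
  have hint : Integrable h (volume : Measure 𝓔) := hhc.integrable_of_hasCompactSupport hhs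
  obtain ⟨C, hC⟩ : ∃ C, ∀ x, |h x| ≤ C := by
    obtain ⟨C, hC⟩ := hhc.abs.bounded_above_of_compact_support hhs.abs
    exact ⟨C, fun x => by simpa [Real.norm_eq_abs, abs_abs] using hC x⟩
  set w : 𝓔 → ℝ := fun y => ∫ x, |h (x - y) - h x| with hwdef
  have hw0 : ∀ y, 0 ≤ w y := fun y => integral_nonneg fun x => abs_nonneg _
  have hwsm : StronglyMeasurable w := w_stronglyMeasurable hhc
  have hwle : ∀ y, w y ≤ 2 * ∫ x, |h x| := fun y => w_le hint y
  have hFc : Continuous (fun p : 𝓔 × 𝓔 => c p.2 * |h (p.1 - p.2) - h p.1|) :=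
    (hcc.comp continuous_snd).mul
      (((hhc.comp (continuous_fst.sub continuous_snd)).sub (hhc.comp continuous_fst)).abs)
  have hFint : Integrable (fun p : 𝓔 × 𝓔 => c p.2 * |h (p.1 - p.2) - h p.1|)
      ((volume : Measure 𝓔).prod volume) := by
    refine (integrable_prod_iff' hFc.aestronglyMeasurable).2 ⟨?_, ?_⟩
    · refine Filter.Eventually.of_forall fun y => ?_
      have h5 : Integrable (fun x => |h (x - y) - h x|) (volume : Measure 𝓔) :=
        ((hint.comp_sub_right y).sub hint).abs
      exact h5.const_mul (c y)
    · have hEq : (fun y => ∫ x, ‖c y * |h (x - y) - h x|‖) = fun y => c y * w y := by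
        funext y
        simp only [Real.norm_eq_abs, abs_mul, abs_abs, abs_of_nonneg (hc0 y)]
        exact integral_const_mul _ _
      rw [hEq]
      refine Integrable.mono' (hc_int.mul_const (2 * ∫ x, |h x|))
        ((hcc.stronglyMeasurable.mul hwsm).aestronglyMeasurable) ?_
      refine Filter.Eventually.of_forall fun y => ?_
      rw [Real.norm_eq_abs, abs_of_nonneg (mul_nonneg (hc0 y) (hw0 y))]
      exact mul_le_mul_of_nonneg_left (hwle y) (hc0 y)
  have hG : Integrable (fun x => ∫ y, c y * |h (x - y) - h x|) (volume : Measure 𝓔) :=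
    hFint.integral_prod_left
  have hconvint : Integrable (c ⋆[mulL, volume] h) (volume : Measure 𝓔) :=
    hc_int.integrable_convolution mulL hint
  have hpt : ∀ x, |(c ⋆[mulL, volume] h) x - h x| ≤ ∫ y, c y * |h (x - y) - h x| := by
    intro x
    have i1 : Integrable (fun y => c y * h (x - y)) (volume : Measure 𝓔) := by
      have i1' : Integrable (fun y => h (x - y) * c y) (volume : Measure 𝓔) :=
        hc_int.bdd_mul ((hhc.comp (continuous_const.sub continuous_id)).aestronglyMeasurable)
          (Filter.Eventually.of_forall fun y => by simpa [Real.norm_eq_abs] using hC (x - y))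
      exact i1'.congr (Filter.Eventually.of_forall fun y => mul_comm _ _)
    have i2 : Integrable (fun y => c y * h x) (volume : Measure 𝓔) := hc_int.mul_const _
    have e1 : (c ⋆[mulL, volume] h) x = ∫ y, c y * h (x - y) := by
      simp [convolution_def, ContinuousLinearMap.mul_apply']
    have e2 : (∫ y, c y * h x) = h x := by
      rw [integral_mul_const, hc1, one_mul]
    have e3 : (∫ y, c y * h (x - y)) - h x = ∫ y, (c y * h (x - y) - c y * h x) := by
      rw [integral_sub i1 i2]
      congr 1
      exact e2.symm
    calc |(c ⋆[mulL, volume] h) x - h x|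
        = |∫ y, (c y * h (x - y) - c y * h x)| := by rw [e1, e3]
      _ ≤ ∫ y, |c y * h (x - y) - c y * h x| := by
          simpa [Real.norm_eq_abs] using
            norm_integral_le_integral_norm (fun y => c y * h (x - y) - c y * h x)
      _ = ∫ y, c y * |h (x - y) - h x| :=
          integral_congr_ae (Filter.Eventually.of_forall fun y => by
            simp only [← mul_sub, abs_mul, abs_of_nonneg (hc0 y)])
  calc ∫ x, |(c ⋆[mulL, volume] h) x - h x|
      ≤ ∫ x, ∫ y, c y * |h (x - y) - h x| :=
        integral_mono ((hconvint.sub hint).abs) hG hpt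
    _ = ∫ y, ∫ x, c y * |h (x - y) - h x| := integral_integral_swap hFint
    _ = ∫ y, c y * w y :=
        integral_congr_ae (Filter.Eventually.of_forall fun y => integral_const_mul _ _)

lemma tendsto_translate_L1 {h : 𝓔 → ℝ} (hhc : Continuous h) (hhs : HasCompactSupport h) :
    Tendsto (fun t : 𝓔 => ∫ x, |h (x - t) - h x|) (𝓝 0) (𝓝 0) := by
  obtain ⟨r, hr⟩ : ∃ r : ℝ, tsupport h ⊆ Metric.closedBall 0 r :=
    hhs.isBounded.subset_closedBall 0
  set s := Metric.closedBall (0 : 𝓔) (r + 1) with hs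
  have hsfin : volume s < ⊤ := measure_closedBall_lt_top
  set V := (volume s).toReal with hV
  have hV0 : 0 ≤ V := ENNReal.toReal_nonneg
  have huc : UniformContinuous h := hhs.uniformContinuous_of_continuous hhc
  rw [Metric.tendsto_nhds_nhds]
  intro η hη
  set η' := η / (2 * (V + 1)) with hη'
  have hη'pos : 0 < η' := by positivity
  obtain ⟨δ₀, hδ₀pos, hδ₀⟩ := Metric.uniformContinuous_iff.1 huc η' hη'pos
  refine ⟨min δ₀ 1, by positivity, ?_⟩
  intro t ht
  have htn : ‖t‖ < min δ₀ 1 := by simpa [dist_zero_right] using ht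
  have htle : ‖t‖ ≤ 1 := (lt_of_lt_of_le htn (min_le_right _ _)).le
  have hzero : ∀ x ∉ s, |h (x - t) - h x| = 0 := by
    intro x hx
    have hxn : r + 1 < ‖x‖ := by
      simpa [hs, Metric.mem_closedBall, dist_zero_right, not_le] using hx
    have h1 : h x = 0 := by
      apply image_eq_zero_of_notMem_tsupport
      intro hmem
      have := hr hmem
      rw [Metric.mem_closedBall, dist_zero_right] at this
      linarith
    have h2 : h (x - t) = 0 := by
      apply image_eq_zero_of_notMem_tsupport
      intro hmem
      have hxt := hr hmem
      rw [Metric.mem_closedBall, dist_zero_right] at hxt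
      have hxx := norm_sub_norm_le x t
      linarith
    simp [h1, h2]
  have hbd : ∀ x ∈ s, ‖|h (x - t) - h x|‖ ≤ η' := by
    intro x _
    rw [Real.norm_eq_abs, abs_abs]
    have hd : dist (x - t) x < δ₀ := by
      rw [dist_eq_norm]
      simpa using lt_of_lt_of_le htn (min_le_left _ _)
    have := hδ₀ hd
    rw [Real.dist_eq] at this
    exact this.le
  have hEq : ∫ x, |h (x - t) - h x| = ∫ x in s, |h (x - t) - h x| :=
    (setIntegral_eq_integral_of_forall_compl_eq_zero (fun x hx => hzero x hx)).symm
  have hmeas : AEStronglyMeasurable (fun x => |h (x - t) - h x|)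
      ((volume : Measure 𝓔).restrict s) :=
    (((hhc.comp (continuous_id.sub continuous_const)).sub hhc).abs).aestronglyMeasurable
  have hle : ‖∫ x in s, |h (x - t) - h x|‖ ≤ η' * V :=
    norm_setIntegral_le_of_norm_le_const hsfin hbd
  have hfin : η' * V < η := by
    rw [hη', div_mul_eq_mul_div, div_lt_iff₀ (by positivity)]
    nlinarith [hV0, hη]
  rw [Real.dist_eq, sub_zero, hEq, ← Real.norm_eq_abs]
  exact lt_of_le_of_lt hle hfin

lemma tendsto_A {φ : 𝓔 → ℝ} (hφi : Integrable φ (volume : Measure 𝓔)) (hφc : Continuous φ)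
    (hφ0 : ∀ x, 0 ≤ φ x) {w : 𝓔 → ℝ} (hwsm : StronglyMeasurable w) (hw0 : ∀ y, 0 ≤ w y)
    {Cw : ℝ} (hwle : ∀ y, w y ≤ Cw) (hw : Tendsto w (𝓝 0) (𝓝 0))
    {ε : ℕ → ℝ} (hε0 : Tendsto ε atTop (𝓝 0)) :
    Tendsto (fun k => ∫ y, φ y * w (ε k • y)) atTop (𝓝 0) := by
  have key := tendsto_integral_of_dominated_convergence (μ := (volume : Measure 𝓔))
    (F := fun k (y : 𝓔) => φ y * w (ε k • y)) (f := fun _ => (0 : ℝ))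
    (bound := fun y => φ y * Cw)
    (fun k => ((hφc.stronglyMeasurable.mul
      (hwsm.comp_measurable (measurable_id.const_smul (ε k)))).aestronglyMeasurable))
    (hφi.mul_const _)
    (fun k => Filter.Eventually.of_forall fun y => by
      rw [Real.norm_eq_abs, abs_of_nonneg (mul_nonneg (hφ0 y) (hw0 _))]
      exact mul_le_mul_of_nonneg_left (hwle _) (hφ0 y))
    (Filter.Eventually.of_forall fun y => by
      have h1 : Tendsto (fun k => ε k • y) atTop (𝓝 0) := by
        simpa using hε0.smul_const y
      have h2 : Tendsto (fun k => w (ε k • y)) atTop (𝓝 0) := hw.comp h1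
      simpa using h2.const_mul (φ y))
  simpa using key

lemma hasBddDensity_le {m : Measure 𝓔} {R : ℝ} (hm : HasBddDensity d m R) :
    m ≤ (ENNReal.ofReal R) • (volume : Measure 𝓔) := by
  obtain ⟨ρ, hρm, rfl, hρle⟩ := hm
  rw [MeasureTheory.Measure.le_iff]
  intro s hs
  rw [withDensity_apply _ hs, Measure.smul_apply, smul_eq_mul]
  calc ∫⁻ x in s, ρ x ≤ ∫⁻ x in s, ENNReal.ofReal R :=
        lintegral_mono_ae (ae_restrict_of_ae hρle)
    _ = ENNReal.ofReal R * volume s := by rw [setLIntegral_const]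

lemma integral_abs_le_smul {m : Measure 𝓔} {R : ℝ} (hR : 0 ≤ R)
    (hm : m ≤ (ENNReal.ofReal R) • (volume : Measure 𝓔))
    {v : 𝓔 → ℝ} (hv : Integrable v (volume : Measure 𝓔)) :
    ∫ x, |v x| ∂m ≤ R * ∫ x, |v x| := by
  have hvm : Integrable v m := (hv.smul_measure ENNReal.ofReal_ne_top).mono_measure hm
  have e1 : ∫ x, |v x| ∂m = (∫⁻ x, ‖v x‖₊ ∂m).toReal := by
    simpa [Real.norm_eq_abs, enorm_eq_nnnorm] using integral_norm_eq_lintegral_enorm hvm.aestronglyMeasurable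
  have e2 : ∫ x, |v x| = (∫⁻ x, ‖v x‖₊ ∂(volume : Measure 𝓔)).toReal := by
    simpa [Real.norm_eq_abs, enorm_eq_nnnorm] using integral_norm_eq_lintegral_enorm hv.aestronglyMeasurable
  have hle : (∫⁻ x, ‖v x‖₊ ∂m) ≤ ENNReal.ofReal R * ∫⁻ x, ‖v x‖₊ ∂(volume : Measure 𝓔) := by
    calc (∫⁻ x, ‖v x‖₊ ∂m) ≤ ∫⁻ x, ‖v x‖₊ ∂((ENNReal.ofReal R) • (volume : Measure 𝓔)) :=
          lintegral_mono' hm le_rfl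
      _ = ENNReal.ofReal R * ∫⁻ x, ‖v x‖₊ ∂(volume : Measure 𝓔) := lintegral_smul_measure _ _
  have hfin : ENNReal.ofReal R * ∫⁻ x, ‖v x‖₊ ∂(volume : Measure 𝓔) ≠ ⊤ :=
    ENNReal.mul_ne_top ENNReal.ofReal_ne_top hv.2.ne
  rw [e1, e2]
  calc (∫⁻ x, ‖v x‖₊ ∂m).toReal
      ≤ (ENNReal.ofReal R * ∫⁻ x, ‖v x‖₊ ∂(volume : Measure 𝓔)).toReal :=
        ENNReal.toReal_mono hfin hle
    _ = R * (∫⁻ x, ‖v x‖₊ ∂(volume : Measure 𝓔)).toReal := by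
        rw [ENNReal.toReal_mul, ENNReal.toReal_ofReal hR]

lemma abs_integral_sub_le {m : Measure 𝓔} {a b : 𝓔 → ℝ} (ha : Integrable a m)
    (hb : Integrable b m) :
    |(∫ x, a x ∂m) - ∫ x, b x ∂m| ≤ ∫ x, |a x - b x| ∂m := by
  rw [← integral_sub ha hb]
  simpa [Real.norm_eq_abs] using norm_integral_le_integral_norm (μ := m) (fun x => a x - b x)

lemma limit_le_smul {R : ℝ} (hR : 0 < R)
    {μ : ℕ → Measure 𝓔} (hprob : ∀ k, IsProbabilityMeasure (μ k))
    (hle : ∀ k, μ k ≤ (ENNReal.ofReal R) • (volume : Measure 𝓔))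
    {ν : Measure 𝓔} (hν : IsProbabilityMeasure ν)
    (hconv : WeakStarTendsto d μ ν) :
    ν ≤ (ENNReal.ofReal R) • (volume : Measure 𝓔) := by
  have hR0 : ENNReal.ofReal R ≠ 0 := by simp [ENNReal.ofReal_eq_zero, not_le, hR]
  let P : ℕ → ProbabilityMeasure 𝓔 := fun k => ⟨μ k, hprob k⟩
  let Q : ProbabilityMeasure 𝓔 := ⟨ν, hν⟩
  have hP : Tendsto P atTop (𝓝 Q) := by
    rw [ProbabilityMeasure.tendsto_iff_forall_integral_tendsto]
    intro g
    exact hconv g g.continuous ⟨‖g‖, fun x => by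
      simpa [Real.norm_eq_abs] using g.norm_coe_le_norm x⟩
  have hopen : ∀ U : Set 𝓔, IsOpen U → ν U ≤ ENNReal.ofReal R * volume U := by
    intro U hU
    have h1 := MeasureTheory.ProbabilityMeasure.le_liminf_measure_open_of_tendsto hP hU
    have h2 : (atTop : Filter ℕ).liminf (fun k => (P k : Measure 𝓔) U)
        ≤ ENNReal.ofReal R * volume U := by
      have h3 := Filter.liminf_le_liminf (f := (atTop : Filter ℕ))
        (u := fun k => (P k : Measure 𝓔) U)
        (v := fun _ => ENNReal.ofReal R * volume U)
        (Filter.Eventually.of_forall (fun k => by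
          have h4 := MeasureTheory.Measure.le_iff'.1 (hle k) U
          have h5 : μ k U ≤ ENNReal.ofReal R * volume U := by
            simpa [Measure.smul_apply, smul_eq_mul] using h4
          exact h5))
      simpa [Filter.liminf_const] using h3
    exact le_trans h1 h2
  rw [MeasureTheory.Measure.le_iff]
  intro s hs
  rw [Measure.smul_apply, smul_eq_mul]
  by_cases hvs : volume s = ⊤
  · rw [hvs, ENNReal.mul_top hR0]; exact le_top
  · refine ENNReal.le_of_forall_pos_le_add fun η hη _ => ?_
    have hδpos : (0 : ℝ≥0∞) < (η : ℝ≥0∞) / ENNReal.ofReal R :=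
      ENNReal.div_pos (by exact_mod_cast hη.ne') ENNReal.ofReal_ne_top
    have hlt2 : volume s < volume s + (η : ℝ≥0∞) / ENNReal.ofReal R :=
      ENNReal.lt_add_right hvs hδpos.ne'
    obtain ⟨U, hsU, hUopen, hUlt⟩ := s.exists_isOpen_lt_of_lt _ hlt2
    calc ν s ≤ ν U := measure_mono hsU
      _ ≤ ENNReal.ofReal R * volume U := hopen U hUopen
      _ ≤ ENNReal.ofReal R * (volume s + (η : ℝ≥0∞) / ENNReal.ofReal R) :=
          mul_le_mul_right hUlt.le _
      _ = ENNReal.ofReal R * volume s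
          + ENNReal.ofReal R * ((η : ℝ≥0∞) / ENNReal.ofReal R) := mul_add _ _ _
      _ ≤ ENNReal.ofReal R * volume s + η := by
          rw [ENNReal.mul_div_cancel hR0 ENNReal.ofReal_ne_top]

lemma mollify_L1_tendsto {φ : 𝓔 → ℝ} (hφ : IsMollifier d φ)
    {ε : ℕ → ℝ} (hεpos : ∀ k, 0 < ε k) (hε0 : Tendsto ε atTop (𝓝 0))
    {h : 𝓔 → ℝ} (hhc : Continuous h) (hhs : HasCompactSupport h) :
    Tendsto (fun k => ∫ x, |((scaled d φ (ε k)) ⋆[mulL, volume] h) x - h x|) atTop (𝓝 0) := by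
  have hφc : Continuous φ := hφ.1.continuous
  have hφ0 : ∀ x, 0 ≤ φ x := hφ.2.2.1
  have hφi : Integrable φ (volume : Measure 𝓔) := mollifier_integrable hφ
  have hint : Integrable h (volume : Measure 𝓔) := hhc.integrable_of_hasCompactSupport hhs
  have hwsm : StronglyMeasurable (fun t : 𝓔 => ∫ x, |h (x - t) - h x|) :=
    w_stronglyMeasurable hhc
  have hwt : Tendsto (fun t : 𝓔 => ∫ x, |h (x - t) - h x|) (𝓝 0) (𝓝 0) :=
    tendsto_translate_L1 hhc hhs
  have hA : Tendsto
      (fun k => ∫ y, φ y * (fun t : 𝓔 => ∫ x, |h (x - t) - h x|) (ε k • y)) atTop (𝓝 0) :=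
    tendsto_A hφi hφc hφ0 hwsm (fun y => integral_nonneg fun x => abs_nonneg _)
      (fun y => w_le hint y) hwt hε0
  refine squeeze_zero (fun k => integral_nonneg fun x => abs_nonneg _) (fun k => ?_) hA
  calc ∫ x, |((scaled d φ (ε k)) ⋆[mulL, volume] h) x - h x|
      ≤ ∫ y, scaled d φ (ε k) y * ∫ x, |h (x - y) - h x| :=
        conv_sub_self_le (scaled_integrable hφi (hεpos k)) (scaled_nonneg hφ0 (hεpos k))
          (scaled_integral hφ (hεpos k)) (scaled_continuous hφc _) hhc hhs
    _ = ∫ y, φ y * (fun t : 𝓔 => ∫ x, |h (x - t) - h x|) (ε k • y) :=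
        scaled_integral_mul (hεpos k) (fun t : 𝓔 => ∫ x, |h (x - t) - h x|)

lemma main_bound {c : 𝓔 → ℝ} (hc_int : Integrable c (volume : Measure 𝓔))
    (hc0 : ∀ x, 0 ≤ c x) (hc1 : ∫ x, c x = 1)
    {R : ℝ} (hR : 0 < R) {m : Measure 𝓔}
    (hm : m ≤ ENNReal.ofReal R • (volume : Measure 𝓔))
    {f h : 𝓔 → ℝ} (hf : Integrable f (volume : Measure 𝓔))
    (hhint : Integrable h (volume : Measure 𝓔)) :
    |(∫ x, (c ⋆[mulL, volume] (c ⋆[mulL, volume] f)) x ∂m) - ∫ x, h x ∂m|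
      ≤ R * (∫ x, |f x - h x|) + 2 * R * ∫ x, |(c ⋆[mulL, volume] h) x - h x| := by
  have hcf : Integrable (c ⋆[mulL, volume] f) (volume : Measure 𝓔) :=
    hc_int.integrable_convolution mulL hf
  have hch : Integrable (c ⋆[mulL, volume] h) (volume : Measure 𝓔) :=
    hc_int.integrable_convolution mulL hhint
  have hTf : Integrable (c ⋆[mulL, volume] (c ⋆[mulL, volume] f)) (volume : Measure 𝓔) :=
    hc_int.integrable_convolution mulL hcf
  have hTh : Integrable (c ⋆[mulL, volume] (c ⋆[mulL, volume] h)) (volume : Measure 𝓔) :=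
    hc_int.integrable_convolution mulL hch
  have hmono : ∀ {v : 𝓔 → ℝ}, Integrable v (volume : Measure 𝓔) → Integrable v m :=
    fun hv => (hv.smul_measure ENNReal.ofReal_ne_top).mono_measure hm
  have hfh : Integrable (fun y => f y - h y) (volume : Measure 𝓔) := hf.sub hhint
  have hcfh : Integrable (c ⋆[mulL, volume] fun y => f y - h y) (volume : Measure 𝓔) :=
    hc_int.integrable_convolution mulL hfh
  -- Term 1 : |∫ Tf - ∫ Th| ≤ R * ∫ |f - h|
  have hsub1 : ∫ x, |(c ⋆[mulL, volume] (c ⋆[mulL, volume] f)) x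
      - (c ⋆[mulL, volume] (c ⋆[mulL, volume] h)) x| ≤ ∫ x, |f x - h x| := by
    have he1 := conv_sub_ae hc_int hcf hch
    have he2 : (c ⋆[mulL, volume] fun y => (c ⋆[mulL, volume] f) y - (c ⋆[mulL, volume] h) y)
        = (c ⋆[mulL, volume] (c ⋆[mulL, volume] fun y => f y - h y)) :=
      convolution_congr mulL (Filter.EventuallyEq.refl _ _) (conv_sub_ae hc_int hf hhint)
    have he3 : ∫ x, |(c ⋆[mulL, volume] (c ⋆[mulL, volume] f)) x
        - (c ⋆[mulL, volume] (c ⋆[mulL, volume] h)) x|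
        = ∫ x, |(c ⋆[mulL, volume] (c ⋆[mulL, volume] fun y => f y - h y)) x| := by
      refine integral_congr_ae ?_
      filter_upwards [he1] with x hx
      rw [hx, he2]
    rw [he3]
    calc ∫ x, |(c ⋆[mulL, volume] (c ⋆[mulL, volume] fun y => f y - h y)) x|
        ≤ ∫ x, |(c ⋆[mulL, volume] fun y => f y - h y) x| :=
          conv_L1_contract hc_int hc0 hc1 hcfh
      _ ≤ ∫ x, |f x - h x| := conv_L1_contract hc_int hc0 hc1 hfh
  have ht1 : |(∫ x, (c ⋆[mulL, volume] (c ⋆[mulL, volume] f)) x ∂m)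
      - ∫ x, (c ⋆[mulL, volume] (c ⋆[mulL, volume] h)) x ∂m| ≤ R * ∫ x, |f x - h x| := by
    calc |(∫ x, (c ⋆[mulL, volume] (c ⋆[mulL, volume] f)) x ∂m)
        - ∫ x, (c ⋆[mulL, volume] (c ⋆[mulL, volume] h)) x ∂m|
        ≤ ∫ x, |(c ⋆[mulL, volume] (c ⋆[mulL, volume] f)) x
            - (c ⋆[mulL, volume] (c ⋆[mulL, volume] h)) x| ∂m :=
          abs_integral_sub_le (hmono hTf) (hmono hTh)
      _ ≤ R * ∫ x, |(c ⋆[mulL, volume] (c ⋆[mulL, volume] f)) x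
            - (c ⋆[mulL, volume] (c ⋆[mulL, volume] h)) x| :=
          integral_abs_le_smul hR.le hm (hTf.sub hTh)
      _ ≤ R * ∫ x, |f x - h x| := mul_le_mul_of_nonneg_left hsub1 hR.le
  -- Term 2 : |∫ Th - ∫ h| ≤ 2 R * ∫ |c⋆h - h|
  have hsub2 : ∫ x, |(c ⋆[mulL, volume] (c ⋆[mulL, volume] h)) x - h x|
      ≤ 2 * ∫ x, |(c ⋆[mulL, volume] h) x - h x| := by
    have he1 := conv_sub_ae hc_int hch hhint
    have he4 : ∫ x, |(c ⋆[mulL, volume] (c ⋆[mulL, volume] h)) x - (c ⋆[mulL, volume] h) x|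
        = ∫ x, |(c ⋆[mulL, volume] fun y => (c ⋆[mulL, volume] h) y - h y) x| := by
      refine integral_congr_ae ?_
      filter_upwards [he1] with x hx
      rw [hx]
    have hchh : Integrable (fun y => (c ⋆[mulL, volume] h) y - h y) (volume : Measure 𝓔) :=
      hch.sub hhint
    have h5 : ∫ x, |(c ⋆[mulL, volume] (c ⋆[mulL, volume] h)) x - (c ⋆[mulL, volume] h) x|
        ≤ ∫ x, |(c ⋆[mulL, volume] h) x - h x| := by
      rw [he4]
      exact conv_L1_contract hc_int hc0 hc1 hchh
    have htri : ∫ x, |(c ⋆[mulL, volume] (c ⋆[mulL, volume] h)) x - h x|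
        ≤ (∫ x, |(c ⋆[mulL, volume] (c ⋆[mulL, volume] h)) x - (c ⋆[mulL, volume] h) x|)
          + ∫ x, |(c ⋆[mulL, volume] h) x - h x| := by
      calc ∫ x, |(c ⋆[mulL, volume] (c ⋆[mulL, volume] h)) x - h x|
          ≤ ∫ x, (|(c ⋆[mulL, volume] (c ⋆[mulL, volume] h)) x - (c ⋆[mulL, volume] h) x|
              + |(c ⋆[mulL, volume] h) x - h x|) :=
            integral_mono ((hTh.sub hhint).abs)
              (((hTh.sub hch).abs).add ((hch.sub hhint).abs))
              (fun x => abs_sub_le _ _ _)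
        _ = _ := integral_add ((hTh.sub hch).abs) ((hch.sub hhint).abs)
    linarith
  have ht2 : |(∫ x, (c ⋆[mulL, volume] (c ⋆[mulL, volume] h)) x ∂m) - ∫ x, h x ∂m|
      ≤ 2 * R * ∫ x, |(c ⋆[mulL, volume] h) x - h x| := by
    calc |(∫ x, (c ⋆[mulL, volume] (c ⋆[mulL, volume] h)) x ∂m) - ∫ x, h x ∂m|
        ≤ ∫ x, |(c ⋆[mulL, volume] (c ⋆[mulL, volume] h)) x - h x| ∂m :=
          abs_integral_sub_le (hmono hTh) (hmono hhint)
      _ ≤ R * ∫ x, |(c ⋆[mulL, volume] (c ⋆[mulL, volume] h)) x - h x| :=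
          integral_abs_le_smul hR.le hm (hTh.sub hhint)
      _ ≤ R * (2 * ∫ x, |(c ⋆[mulL, volume] h) x - h x|) :=
          mul_le_mul_of_nonneg_left hsub2 hR.le
      _ = 2 * R * ∫ x, |(c ⋆[mulL, volume] h) x - h x| := by ring
  calc |(∫ x, (c ⋆[mulL, volume] (c ⋆[mulL, volume] f)) x ∂m) - ∫ x, h x ∂m|
      ≤ |(∫ x, (c ⋆[mulL, volume] (c ⋆[mulL, volume] f)) x ∂m)
          - ∫ x, (c ⋆[mulL, volume] (c ⋆[mulL, volume] h)) x ∂m|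
        + |(∫ x, (c ⋆[mulL, volume] (c ⋆[mulL, volume] h)) x ∂m) - ∫ x, h x ∂m| :=
        abs_sub_le _ _ _
    _ ≤ R * (∫ x, |f x - h x|) + 2 * R * ∫ x, |(c ⋆[mulL, volume] h) x - h x| := by
        linarith

end AuxMolli


open scoped Convolution in
/-- The doubly mollified measures `φ_{ε_k} * μ_k * φ_{ε_k}` converge to `μ`
in the weak-* topology of `L^∞`: integrals of the doubly mollified `f` against `μ_k` converge
to `∫ f dμ` for every `f ∈ L¹(ℝ^d)`. -/
theorem doubly_mollified_weak_star_Linfty_convergence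
    (d : ℕ)
    (φ : EuclideanSpace ℝ (Fin d) → ℝ) (hφ : IsMollifier d φ)
    (R : ℝ) (hR : 0 < R)
    (ε : ℕ → ℝ) (hεpos : ∀ k, 0 < ε k) (hε0 : Tendsto ε atTop (𝓝 0))
    (μ : ℕ → Measure (EuclideanSpace ℝ (Fin d))) (hprob : ∀ k, IsProbabilityMeasure (μ k))
    (hbdd : ∀ k, HasBddDensity d (μ k) R)
    (ν : Measure (EuclideanSpace ℝ (Fin d))) (hν : IsProbabilityMeasure ν)
    (hconv : WeakStarTendsto d μ ν) :
    ∀ f : EuclideanSpace ℝ (Fin d) → ℝ,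
      Integrable f (volume : Measure (EuclideanSpace ℝ (Fin d))) →
      Tendsto
        (fun k => ∫ x,
          (∫ y, ∫ z, scaled d φ (ε k) y * f (x - y - z) * scaled d φ (ε k) z) ∂(μ k))
        atTop (𝓝 (∫ x, f x ∂ν)) := by
  intro f hf
  have hφc : Continuous φ := hφ.1.continuous
  have hφ0 : ∀ x, 0 ≤ φ x := hφ.2.2.1
  have hφi : Integrable φ (volume : Measure (EuclideanSpace ℝ (Fin d))) :=
    mollifier_integrable hφ
  -- rewrite the integrand as a double convolution
  have hgoal : (fun k => ∫ x,
        (∫ y, ∫ z, scaled d φ (ε k) y * f (x - y - z) * scaled d φ (ε k) z) ∂(μ k))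
      = fun k => ∫ x, ((scaled d φ (ε k)) ⋆[ContinuousLinearMap.mul ℝ ℝ, volume]
          ((scaled d φ (ε k)) ⋆[ContinuousLinearMap.mul ℝ ℝ, volume] f)) x ∂(μ k) := by
    funext k
    refine integral_congr_ae (Filter.Eventually.of_forall fun x => ?_)
    show (∫ y, ∫ z, scaled d φ (ε k) y * f (x - y - z) * scaled d φ (ε k) z)
      = ((scaled d φ (ε k)) ⋆[ContinuousLinearMap.mul ℝ ℝ, volume]
          ((scaled d φ (ε k)) ⋆[ContinuousLinearMap.mul ℝ ℝ, volume] f)) x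
    have hinner : ∀ y, (∫ z, scaled d φ (ε k) y * f (x - y - z) * scaled d φ (ε k) z)
        = scaled d φ (ε k) y
          * ((scaled d φ (ε k)) ⋆[ContinuousLinearMap.mul ℝ ℝ, volume] f) (x - y) := by
      intro y
      have e4 : ((scaled d φ (ε k)) ⋆[ContinuousLinearMap.mul ℝ ℝ, volume] f) (x - y)
          = ∫ z, scaled d φ (ε k) z * f (x - y - z) := by
        simp [convolution_def, ContinuousLinearMap.mul_apply']
      rw [e4, ← integral_const_mul]
      refine integral_congr_ae (Filter.Eventually.of_forall fun z => ?_)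
      show scaled d φ (ε k) y * f (x - y - z) * scaled d φ (ε k) z
        = scaled d φ (ε k) y * (scaled d φ (ε k) z * f (x - y - z))
      ring
    rw [show (∫ y, ∫ z, scaled d φ (ε k) y * f (x - y - z) * scaled d φ (ε k) z)
        = ∫ y, scaled d φ (ε k) y
          * ((scaled d φ (ε k)) ⋆[ContinuousLinearMap.mul ℝ ℝ, volume] f) (x - y) from
      integral_congr_ae (Filter.Eventually.of_forall hinner)]
    simp [convolution_def, ContinuousLinearMap.mul_apply']
  rw [hgoal]
  -- measure bounds
  have hμle : ∀ k, μ k ≤ ENNReal.ofReal R • (volume : Measure (EuclideanSpace ℝ (Fin d))) :=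
    fun k => hasBddDensity_le (hbdd k)
  have hνle : ν ≤ ENNReal.ofReal R • (volume : Measure (EuclideanSpace ℝ (Fin d))) :=
    limit_le_smul hR hprob hμle hν hconv
  rw [Metric.tendsto_atTop]
  intro η hη
  have hη8 : 0 < η / (8 * (R + 1)) := by positivity
  obtain ⟨h, hhs, hhclose, hhc, hhint⟩ := hf.exists_hasCompactSupport_integral_sub_le hη8
  have hDle : ∫ x, |f x - h x| ≤ η / (8 * (R + 1)) := by
    simpa [Real.norm_eq_abs] using hhclose
  have hD0 : 0 ≤ ∫ x, |f x - h x| := integral_nonneg fun x => abs_nonneg _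
  have hBt := mollify_L1_tendsto hφ hεpos hε0 hhc hhs
  obtain ⟨Ch, hCh⟩ : ∃ C, ∀ x, |h x| ≤ C := by
    obtain ⟨C, hC⟩ := hhc.abs.bounded_above_of_compact_support hhs.abs
    exact ⟨C, fun x => by simpa using hC x⟩
  have hT3 : Tendsto (fun k => ∫ x, h x ∂(μ k)) atTop (𝓝 (∫ x, h x ∂ν)) :=
    hconv h hhc ⟨Ch, hCh⟩
  obtain ⟨N1, hN1⟩ := (Metric.tendsto_atTop.1 hBt) (η / (8 * (R + 1))) hη8
  obtain ⟨N2, hN2⟩ := (Metric.tendsto_atTop.1 hT3) (η / 4) (by positivity)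
  refine ⟨max N1 N2, fun k hk => ?_⟩
  -- key per-k bound
  have hkey := main_bound (scaled_integrable hφi (hεpos k)) (scaled_nonneg hφ0 (hεpos k))
    (scaled_integral hφ (hεpos k)) hR (hμle k) hf hhint
  -- term 4
  have ht4 : |(∫ x, h x ∂ν) - ∫ x, f x ∂ν| ≤ R * ∫ x, |f x - h x| := by
    have h1 := abs_integral_sub_le
      ((hhint.smul_measure ENNReal.ofReal_ne_top).mono_measure hνle)
      ((hf.smul_measure ENNReal.ofReal_ne_top).mono_measure hνle)
    have h2 := integral_abs_le_smul hR.le hνle (hhint.sub hf)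
    have h3 : ∫ x, |h x - f x| = ∫ x, |f x - h x| :=
      integral_congr_ae (Filter.Eventually.of_forall fun x => abs_sub_comm _ _)
    calc |(∫ x, h x ∂ν) - ∫ x, f x ∂ν| ≤ ∫ x, |h x - f x| ∂ν := h1
      _ ≤ R * ∫ x, |h x - f x| := h2
      _ = R * ∫ x, |f x - h x| := by rw [h3]
  -- numeric bounds
  have hN1' := hN1 k (le_trans (le_max_left _ _) hk)
  have hN2' := hN2 k (le_trans (le_max_right _ _) hk)
  rw [Real.dist_eq, sub_zero] at hN1'
  rw [Real.dist_eq] at hN2'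
  have hB0 : 0 ≤ ∫ x, |((scaled d φ (ε k)) ⋆[ContinuousLinearMap.mul ℝ ℝ, volume] h) x - h x| :=
    integral_nonneg fun x => abs_nonneg _
  have hBlt : ∫ x, |((scaled d φ (ε k)) ⋆[ContinuousLinearMap.mul ℝ ℝ, volume] h) x - h x|
      < η / (8 * (R + 1)) := lt_of_abs_lt hN1'
  have hq : R * (η / (8 * (R + 1))) ≤ η / 8 := by
    rw [← mul_div_assoc, div_le_div_iff₀ (by positivity) (by positivity)]
    nlinarith [hη.le, hR.le]
  have hRD : R * ∫ x, |f x - h x| ≤ η / 8 :=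
    le_trans (mul_le_mul_of_nonneg_left hDle hR.le) hq
  have hRB : 2 * R
      * ∫ x, |((scaled d φ (ε k)) ⋆[ContinuousLinearMap.mul ℝ ℝ, volume] h) x - h x|
      ≤ η / 4 := by
    have h6 : 2 * R
        * ∫ x, |((scaled d φ (ε k)) ⋆[ContinuousLinearMap.mul ℝ ℝ, volume] h) x - h x|
        ≤ 2 * R * (η / (8 * (R + 1))) :=
      mul_le_mul_of_nonneg_left hBlt.le (by positivity)
    nlinarith [hq, hR.le]
  rw [Real.dist_eq]
  have htr1 := abs_sub_le (∫ x, ((scaled d φ (ε k)) ⋆[ContinuousLinearMap.mul ℝ ℝ, volume]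
      ((scaled d φ (ε k)) ⋆[ContinuousLinearMap.mul ℝ ℝ, volume] f)) x ∂(μ k))
    (∫ x, h x ∂(μ k)) (∫ x, f x ∂ν)
  have htr2 := abs_sub_le (∫ x, h x ∂(μ k)) (∫ x, h x ∂ν) (∫ x, f x ∂ν)
  linarith [hkey, hN2', ht4, hRD, hRB]
end
end
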